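/- arXiv:1709.04431 — 3 statements merged into one kernel-verified Lean document; each statement's English description precedes it below -/
import Mathlib

section
/- Let X be a finite pure n-dimensional weighted simplicial complex which is (n+1)-partite with sides S_0,…,S_n, such that the 1-skeleton of X and the 1-skeletons of all links of X of dimension > 0 are connected. Then (n+1)/n is an eigenvalue of Δ_0^+, and the eigenspace of the eigenvalue (n+1)/n is spanned by the functions φ_i (0 ≤ i ≤ n) defined by φ_i(u) = n if u ∈ S_i and φ_i(u) = −1 otherwise. -/
open Finset

variable {V : Type} [Fintype V] [DecidableEq V]

/-- A finite abstract simplicial complex on the vertex type `V`. -/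
structure SComplex (V : Type) [Fintype V] [DecidableEq V] where
  faces : Finset (Finset V)
  empty_mem : ∅ ∈ faces
  down_closed : ∀ s ∈ faces, ∀ t, t ⊆ s → t ∈ faces

namespace SComplex

/-- `X` is pure `n`-dimensional: every face is contained in an `n`-dimensional face. -/
def Pure (X : SComplex V) (n : ℕ) : Prop :=
  (∀ s ∈ X.faces, s.card ≤ n + 1) ∧
    ∀ s ∈ X.faces, ∃ t ∈ X.faces, s ⊆ t ∧ t.card = n + 1

/-- `σ` is an ordered simplex with `j` vertices (an element of `Σ(j-1)`). -/
def IsOSimp (X : SComplex V) {j : ℕ} (σ : Fin j → V) : Prop :=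
  Function.Injective σ ∧ Finset.image σ Finset.univ ∈ X.faces

instance {j : ℕ} (X : SComplex V) (σ : Fin j → V) : Decidable (X.IsOSimp σ) := by
  unfold IsOSimp; infer_instance

/-- A balanced, strictly positive weight function on the simplices of `X`. -/
def IsBalanced (X : SComplex V) (n : ℕ) (m : Finset V → ℝ) : Prop :=
  (∀ s ∈ X.faces, 0 < m s) ∧
    ∀ s ∈ X.faces, s.card ≤ n →
      m s = ∑ t ∈ X.faces.filter fun t => s ⊆ t ∧ t.card = s.card + 1, m t

/-- The weight of an ordered tuple (zero off the ordered simplices). -/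
noncomputable def wt (X : SComplex V) (m : Finset V → ℝ) {j : ℕ} (σ : Fin j → V) : ℝ :=
  if X.IsOSimp σ then m (Finset.image σ Finset.univ) else 0

/-- `φ` is a `j`-vertex form, i.e. an element of `C^{j-1}(X,ℝ)`:
antisymmetric and supported on the ordered simplices. -/
def IsForm (X : SComplex V) (j : ℕ) (φ : (Fin j → V) → ℝ) : Prop :=
  (∀ (σ : Fin j → V) (π : Equiv.Perm (Fin j)),
      φ (σ ∘ π) = ((Equiv.Perm.sign π : ℤ) : ℝ) * φ σ) ∧
    ∀ σ : Fin j → V, ¬X.IsOSimp σ → φ σ = 0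

/-- The inner product on `j`-vertex forms (`C^{j-1}(X,ℝ)`). -/
noncomputable def innerF (X : SComplex V) (m : Finset V → ℝ) (j : ℕ)
    (φ ψ : (Fin j → V) → ℝ) : ℝ :=
  ∑ σ : Fin j → V, X.wt m σ / (Nat.factorial j : ℝ) * (φ σ * ψ σ)

/-- The sum of a quantity over all ordered simplices with `j` vertices. -/
noncomputable def sumOSimp (X : SComplex V) (j : ℕ) (F : (Fin j → V) → ℝ) : ℝ :=
  ∑ σ : Fin j → V, if X.IsOSimp σ then F σ else 0

/-- The simplicial differential `d`. -/
def dOp {j : ℕ} (φ : (Fin j → V) → ℝ) : (Fin (j + 1) → V) → ℝ :=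
  fun σ => ∑ i : Fin (j + 1), (-1 : ℝ) ^ (i : ℕ) * φ (σ ∘ i.succAbove)

/-- The codifferential `δ` (the adjoint of `d`). -/
noncomputable def deltaOp (X : SComplex V) (m : Finset V → ℝ) {j : ℕ}
    (φ : (Fin (j + 1) → V) → ℝ) : (Fin j → V) → ℝ :=
  fun τ => ∑ v : V, X.wt m (Fin.cons v τ) / X.wt m τ * φ (Fin.cons v τ)

/-- The upper Laplacian `Δ⁺` on `j`-vertex forms (`C^{j-1}`). -/
noncomputable def lapPlus (X : SComplex V) (m : Finset V → ℝ) (j : ℕ)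
    (φ : (Fin j → V) → ℝ) : (Fin j → V) → ℝ :=
  X.deltaOp m (dOp φ)

/-- The lower Laplacian `Δ⁻` on `(j+1)`-vertex forms (`C^j`). -/
noncomputable def lapMinus (X : SComplex V) (m : Finset V → ℝ) (j : ℕ)
    (φ : (Fin (j + 1) → V) → ℝ) : (Fin (j + 1) → V) → ℝ :=
  dOp (X.deltaOp m φ)

/-- The set of eigenvalues of `Δ⁺` on `j`-vertex forms. -/
def specLapPlus (X : SComplex V) (m : Finset V → ℝ) (j : ℕ) : Set ℝ :=
  {μ | ∃ φ : (Fin j → V) → ℝ, X.IsForm j φ ∧ φ ≠ 0 ∧ X.lapPlus m j φ = μ • φ}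

/-- The set of eigenvalues of `Δ⁻` on `(j+1)`-vertex forms (`C^j`). -/
def specLapMinus (X : SComplex V) (m : Finset V → ℝ) (j : ℕ) : Set ℝ :=
  {μ | ∃ φ : (Fin (j + 1) → V) → ℝ, X.IsForm (j + 1) φ ∧ φ ≠ 0 ∧ X.lapMinus m j φ = μ • φ}

/-- The link of a face `s`. -/
def link (X : SComplex V) (s : Finset V) : SComplex V where
  faces := insert ∅ (X.faces.filter fun t => Disjoint s t ∧ s ∪ t ∈ X.faces)
  empty_mem := Finset.mem_insert_self _ _
  down_closed := by
    intro a ha t hts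
    rcases Finset.mem_insert.mp ha with h | h
    · refine Finset.mem_insert.mpr (Or.inl ?_)
      subst h; exact Finset.subset_empty.mp hts
    · rw [Finset.mem_filter] at h
      refine Finset.mem_insert.mpr (Or.inr (Finset.mem_filter.mpr
        ⟨X.down_closed a h.1 t hts, Disjoint.mono_right hts h.2.1,
          X.down_closed _ h.2.2 _ (Finset.union_subset_union (Finset.Subset.refl s) hts)⟩))

/-- The induced (balanced) weight on the link of `s`. -/
def linkWt (m : Finset V → ℝ) (s : Finset V) : Finset V → ℝ := fun t => m (s ∪ t)

/-- The graph given by the 1-skeleton of `X`. -/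
def skeleton (X : SComplex V) : SimpleGraph V where
  Adj u v := u ≠ v ∧ ({u, v} : Finset V) ∈ X.faces
  symm := ⟨by
    intro u v h
    exact ⟨h.1.symm, by rw [Finset.pair_comm]; exact h.2⟩⟩
  loopless := ⟨fun u h => h.1 rfl⟩

/-- The 1-skeleton of `X` is connected (on the vertices of `X`). -/
def SkelConnected (X : SComplex V) : Prop :=
  ∀ u v : V, ({u} : Finset V) ∈ X.faces → ({v} : Finset V) ∈ X.faces →
    X.skeleton.Reachable u v

/-- The 1-skeleton of `X` and the 1-skeletons of all links of `X` of dimension `> 0`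
are connected. -/
def AllLinksConnected (X : SComplex V) (n : ℕ) : Prop :=
  X.SkelConnected ∧ ∀ s ∈ X.faces, s.card < n → (X.link s).SkelConnected

/-- The localization `φ_τ ∈ C⁰(X_τ)` of a `(k+1)`-vertex form `φ` at an ordered
`k`-vertex simplex `τ`. -/
def localize {k : ℕ} (φ : (Fin (k + 1) → V) → ℝ) (τ : Fin k → V) : (Fin 1 → V) → ℝ :=
  fun σ => φ (Fin.append τ σ)

/-- The restriction of a cochain to the subcomplex `Y` (truncating off `Y`). -/
def restrict (Y : SComplex V) {j : ℕ} (φ : (Fin j → V) → ℝ) : (Fin j → V) → ℝ :=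
  fun σ => if Y.IsOSimp σ then φ σ else 0

/-- `S` is an `(n+1)`-partition of `X`: the vertices of `X` are partitioned into the
sides `S i`, and every edge joins two distinct sides. -/
def IsPartition (X : SComplex V) (n : ℕ) (S : Fin (n + 1) → Finset V) : Prop :=
  (∀ i, ∀ v ∈ S i, ({v} : Finset V) ∈ X.faces) ∧
    (∀ v : V, ({v} : Finset V) ∈ X.faces → ∃! i, v ∈ S i) ∧
    ∀ u v : V, u ≠ v → ({u, v} : Finset V) ∈ X.faces → ∀ i, u ∈ S i → v ∉ S i

/-- The side differential `d_{(k,j)}` with respect to the side `S`. -/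
def dSide (S : Finset V) {j : ℕ} (φ : (Fin j → V) → ℝ) : (Fin (j + 1) → V) → ℝ :=
  fun σ => ∑ i : Fin (j + 1),
    if σ i ∈ S then (-1 : ℝ) ^ (i : ℕ) * φ (σ ∘ i.succAbove) else 0

/-- The adjoint `δ_{(k,j)}` of the side differential. -/
noncomputable def deltaSide (X : SComplex V) (m : Finset V → ℝ) (S : Finset V) {j : ℕ}
    (φ : (Fin (j + 1) → V) → ℝ) : (Fin j → V) → ℝ :=
  fun τ => ∑ v ∈ S, X.wt m (Fin.cons v τ) / X.wt m τ * φ (Fin.cons v τ)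

/-- The side lower Laplacian `Δ⁻_{(k,j)}` on `(j+1)`-vertex forms (`C^j`). -/
noncomputable def lapMinusSide (X : SComplex V) (m : Finset V → ℝ) (S : Finset V) (j : ℕ)
    (φ : (Fin (j + 1) → V) → ℝ) : (Fin (j + 1) → V) → ℝ :=
  dSide S (X.deltaSide m S φ)

end SComplex

open SComplex
set_option linter.unusedSectionVars false

namespace Aux

open SComplex

variable {V : Type} [Fintype V] [DecidableEq V]

lemma scomplex_ext {X Y : SComplex V} (h : X.faces = Y.faces) : X = Y := by
  cases X; cases Y; simp_all

/-- the constant function -/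
def cf (v : V) : Fin 1 → V := fun _ => v

lemma fin1_eq (τ : Fin 1 → V) : τ = cf (τ 0) := by
  funext i; rw [Subsingleton.elim i 0]; rfl

lemma image_cf (v : V) : Finset.image (cf v) Finset.univ = {v} := by
  ext x; simp [cf]

lemma isOSimp_cf (X : SComplex V) (v : V) :
    X.IsOSimp (cf v) ↔ ({v} : Finset V) ∈ X.faces := by
  unfold SComplex.IsOSimp
  rw [image_cf]
  refine ⟨fun h => h.2, fun h => ⟨fun i j _ => Subsingleton.elim i j, h⟩⟩

lemma wt_cf (X : SComplex V) (m : Finset V → ℝ) (v : V) :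
    X.wt m (cf v) = if ({v} : Finset V) ∈ X.faces then m {v} else 0 := by
  unfold SComplex.wt
  rw [image_cf]
  by_cases h : ({v} : Finset V) ∈ X.faces
  · rw [if_pos ((isOSimp_cf X v).mpr h), if_pos h]
  · rw [if_neg (fun hh => h ((isOSimp_cf X v).mp hh)), if_neg h]

/-- the edge function (v, u) -/
def ef (u v : V) : Fin 2 → V := Fin.cons v (cf u)

lemma ef_zero (u v : V) : ef u v 0 = v := rfl

lemma ef_one (u v : V) : ef u v 1 = u := rfl

lemma image_ef (u v : V) : Finset.image (ef u v) Finset.univ = {v, u} := by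
  ext x
  simp only [Finset.mem_image, Finset.mem_univ, true_and, Finset.mem_insert,
    Finset.mem_singleton]
  constructor
  · rintro ⟨i, rfl⟩
    fin_cases i
    · exact Or.inl rfl
    · exact Or.inr rfl
  · rintro (rfl | rfl)
    exacts [⟨0, rfl⟩, ⟨1, rfl⟩]

lemma isOSimp_ef (X : SComplex V) (u v : V) :
    X.IsOSimp (ef u v) ↔ v ≠ u ∧ ({v, u} : Finset V) ∈ X.faces := by
  unfold SComplex.IsOSimp
  rw [image_ef]
  constructor
  · intro ⟨hinj, hf⟩
    exact ⟨fun hvu => by simpa [ef_zero, ef_one, hvu] using hinj (a₁ := 0) (a₂ := 1), hf⟩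
  · intro ⟨hvu, hf⟩
    refine ⟨fun i j hij => ?_, hf⟩
    fin_cases i <;> fin_cases j
    · rfl
    · exact absurd hij hvu
    · exact absurd hij.symm hvu
    · rfl

lemma wt_ef (X : SComplex V) (m : Finset V → ℝ) (u v : V) :
    X.wt m (ef u v) =
      if v ≠ u ∧ ({v, u} : Finset V) ∈ X.faces then m {v, u} else 0 := by
  unfold SComplex.wt
  rw [image_ef]
  by_cases h : v ≠ u ∧ ({v, u} : Finset V) ∈ X.faces
  · rw [if_pos ((isOSimp_ef X u v).mpr h), if_pos h]
  · rw [if_neg (fun hh => h ((isOSimp_ef X u v).mp hh)), if_neg h]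

lemma dOp_ef (φ : (Fin 1 → V) → ℝ) (u v : V) :
    dOp φ (ef u v) = φ (cf u) - φ (cf v) := by
  unfold SComplex.dOp
  rw [Fin.sum_univ_two]
  have h0 : ef u v ∘ (0 : Fin 2).succAbove = cf u := by
    funext i; rw [Subsingleton.elim i 0]; rfl
  have h1 : ef u v ∘ (1 : Fin 2).succAbove = cf v := by
    funext i; rw [Subsingleton.elim i 0]; rfl
  rw [h0, h1]
  norm_num
  ring

lemma sum_fin1 (F : (Fin 1 → V) → ℝ) : ∑ τ : Fin 1 → V, F τ = ∑ v : V, F (cf v) := by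
  apply Fintype.sum_equiv (Equiv.funUnique (Fin 1) V)
  intro τ
  exact congrArg F (fin1_eq τ)

end Aux
namespace Aux

lemma count_lem (X : SComplex V) (s σ : Finset V) (hσ : σ ∈ X.faces) (hss : s ⊆ σ) :
    ((X.faces.filter (fun t => s ⊆ t ∧ t.card = s.card + 1)).filter (fun t => t ⊆ σ)).card
      = σ.card - s.card := by
  have himg : (X.faces.filter (fun t => s ⊆ t ∧ t.card = s.card + 1)).filter (fun t => t ⊆ σ)
      = (σ \ s).image (fun x => insert x s) := by
    ext t
    simp only [Finset.mem_filter, Finset.mem_image, Finset.mem_sdiff]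
    constructor
    · rintro ⟨⟨htf, hst, hcard⟩, htσ⟩
      obtain ⟨x, hxt, hxs⟩ : ∃ x, x ∈ t ∧ x ∉ s := by
        by_contra h
        push_neg at h
        have hts : t ⊆ s := fun x hx => h x hx
        have := Finset.card_le_card hts
        omega
      refine ⟨x, ⟨htσ hxt, hxs⟩, ?_⟩
      have hsub : insert x s ⊆ t := Finset.insert_subset hxt hst
      have hle : t.card ≤ (insert x s).card := by
        rw [Finset.card_insert_of_notMem hxs]; omega
      exact Finset.eq_of_subset_of_card_le hsub hle
    · rintro ⟨x, ⟨hxσ, hxs⟩, rfl⟩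
      have hsub : insert x s ⊆ σ := Finset.insert_subset hxσ hss
      exact ⟨⟨X.down_closed σ hσ _ hsub, Finset.subset_insert x s,
        Finset.card_insert_of_notMem hxs⟩, hsub⟩
  rw [himg, Finset.card_image_of_injOn, Finset.card_sdiff_of_subset hss]
  intro x hx y hy hxy
  simp only [Finset.coe_sdiff, Set.mem_diff, Finset.mem_coe] at hx hy
  have hxy' : insert x s = insert y s := hxy
  have : x ∈ insert y s := hxy' ▸ Finset.mem_insert_self x s
  rcases Finset.mem_insert.mp this with h | h
  · exact h
  · exact absurd h hx.2

lemma wdecomp (X : SComplex V) (n : ℕ) (m : Finset V → ℝ) (hm : X.IsBalanced n m) :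
    ∀ j s, s ∈ X.faces → s.card + j = n + 1 →
    m s = (Nat.factorial j : ℝ) *
      ∑ t ∈ X.faces.filter (fun t => s ⊆ t ∧ t.card = n + 1), m t := by
  intro j
  induction j with
  | zero =>
    intro s hs hc
    have hfil : X.faces.filter (fun t => s ⊆ t ∧ t.card = n + 1) = {s} := by
      ext t
      simp only [Finset.mem_filter, Finset.mem_singleton]
      constructor
      · rintro ⟨ht, hst, hcard⟩
        exact (Finset.eq_of_subset_of_card_le hst (by omega)).symm
      · rintro rfl
        exact ⟨hs, Finset.Subset.refl _, by omega⟩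
    rw [hfil, Finset.sum_singleton, Nat.factorial_zero, Nat.cast_one, one_mul]
  | succ j ih =>
    intro s hs hc
    have hfilswap : ∀ t : Finset V,
        X.faces.filter (fun σ => t ⊆ σ ∧ σ.card = n + 1)
          = (X.faces.filter (fun σ => σ.card = n + 1)).filter (fun σ => t ⊆ σ) := by
      intro t
      rw [Finset.filter_filter]
      ext σ
      simp only [Finset.mem_filter]
      tauto
    rw [hm.2 s hs (by omega)]
    have step1 : ∀ t ∈ X.faces.filter (fun t => s ⊆ t ∧ t.card = s.card + 1),
        m t = (Nat.factorial j : ℝ) *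
          ∑ σ ∈ X.faces.filter (fun σ => σ.card = n + 1), (if t ⊆ σ then m σ else 0) := by
      intro t ht
      rw [Finset.mem_filter] at ht
      rw [ih t ht.1 (by omega)]
      congr 1
      rw [hfilswap t, Finset.sum_filter]
    rw [Finset.sum_congr rfl step1, ← Finset.mul_sum, Finset.sum_comm]
    have step2 : ∀ σ ∈ X.faces.filter (fun σ => σ.card = n + 1),
        (∑ t ∈ X.faces.filter (fun t => s ⊆ t ∧ t.card = s.card + 1),
          if t ⊆ σ then m σ else 0)
        = (if s ⊆ σ then ((j : ℝ) + 1) * m σ else 0) := by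
      intro σ hσ
      rw [Finset.mem_filter] at hσ
      rw [Finset.sum_ite, Finset.sum_const, Finset.sum_const_zero, add_zero, nsmul_eq_mul]
      by_cases hss : s ⊆ σ
      · rw [if_pos hss, count_lem X s σ hσ.1 hss]
        have : σ.card - s.card = j + 1 := by omega
        rw [this]
        push_cast
        ring
      · rw [if_neg hss]
        have : (X.faces.filter (fun t => s ⊆ t ∧ t.card = s.card + 1)).filter
            (fun t => t ⊆ σ) = ∅ := by
          apply Finset.filter_eq_empty_iff.mpr
          intro t ht htσ
          rw [Finset.mem_filter] at ht
          exact hss (ht.2.1.trans htσ)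
        rw [this, Finset.card_empty, Nat.cast_zero, zero_mul]
    rw [Finset.sum_congr rfl step2, ← Finset.sum_filter, ← Finset.mul_sum,
      ← hfilswap s, ← mul_assoc, Nat.factorial_succ]
    push_cast
    ring
end Aux
namespace Aux

open SComplex

lemma lap_mul (X : SComplex V) (n : ℕ) (m : Finset V → ℝ) (hm : X.IsBalanced n m)
    (φ : (Fin 1 → V) → ℝ) (u : V) :
    X.wt m (cf u) * X.lapPlus m 1 φ (cf u)
      = ∑ v : V, X.wt m (ef u v) * (φ (cf u) - φ (cf v)) := by
  have hlap : X.lapPlus m 1 φ (cf u)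
      = ∑ v : V, X.wt m (ef u v) / X.wt m (cf u) * (φ (cf u) - φ (cf v)) := by
    unfold SComplex.lapPlus SComplex.deltaOp
    exact Finset.sum_congr rfl fun v _ => by rw [show Fin.cons v (cf u) = ef u v from rfl, dOp_ef]
  rw [hlap, Finset.mul_sum]
  by_cases hu : ({u} : Finset V) ∈ X.faces
  · have hwt : X.wt m (cf u) ≠ 0 := by
      rw [wt_cf, if_pos hu]
      exact ne_of_gt (hm.1 _ hu)
    exact Finset.sum_congr rfl fun v _ => by field_simp
  · apply Finset.sum_congr rfl
    intro v _
    have h0 : X.wt m (ef u v) = 0 := by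
      rw [wt_ef]
      apply if_neg
      rintro ⟨hne, hface⟩
      exact hu (X.down_closed _ hface _ (by simp))
    rw [h0]
    simp

lemma double_sum_lemma (σ : Finset V) (f g : V → ℝ) (c : ℝ) :
    ∑ u ∈ σ, ∑ v ∈ σ.erase u, c * (f u - f v) * g u
      = c * ((σ.card : ℝ) * (∑ x ∈ σ, f x * g x)
          - (∑ x ∈ σ, f x) * (∑ x ∈ σ, g x)) := by
  have h1 : ∀ u ∈ σ, ∑ v ∈ σ.erase u, c * (f u - f v) * g u
      = ∑ v ∈ σ, c * (f u - f v) * g u :=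
    fun u _ => Finset.sum_erase σ (by ring)
  rw [Finset.sum_congr rfl h1]
  have h2 : ∀ u ∈ σ, ∑ v ∈ σ, c * (f u - f v) * g u
      = (σ.card : ℝ) * (c * (f u * g u)) - (∑ v ∈ σ, f v) * (c * g u) := by
    intro u _
    have : ∀ v ∈ σ, c * (f u - f v) * g u
        = c * (f u * g u) - f v * (c * g u) := fun v _ => by ring
    rw [Finset.sum_congr rfl this, Finset.sum_sub_distrib, Finset.sum_const,
      nsmul_eq_mul, ← Finset.sum_mul]
  rw [Finset.sum_congr rfl h2, Finset.sum_sub_distrib]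
  simp only [← Finset.mul_sum]
  ring

lemma BI (X : SComplex V) (k : ℕ) (m : Finset V → ℝ) (hm : X.IsBalanced (k + 1) m)
    (φ ψ : (Fin 1 → V) → ℝ) :
    ((k : ℝ) + 2) / ((k : ℝ) + 1) * X.innerF m 1 φ ψ
        - X.innerF m 1 (X.lapPlus m 1 φ) ψ
      = ∑ σ ∈ X.faces.filter (fun t => t.card = k + 2),
          (Nat.factorial k : ℝ) * m σ * (∑ x ∈ σ, φ (cf x)) * (∑ x ∈ σ, ψ (cf x)) := by
  set f : V → ℝ := fun v => φ (cf v) with hf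
  set g : V → ℝ := fun v => ψ (cf v) with hg
  set Top := X.faces.filter (fun t => t.card = k + 2) with hTopdef
  have hTopmem : ∀ σ ∈ Top, σ ∈ X.faces ∧ σ.card = k + 2 := by
    intro σ hσ; rwa [hTopdef, Finset.mem_filter] at hσ
  have hfilswap : ∀ t : Finset V,
      X.faces.filter (fun σ => t ⊆ σ ∧ σ.card = k + 2)
        = Top.filter (fun σ => t ⊆ σ) := by
    intro t
    rw [hTopdef, Finset.filter_filter]
    ext σ
    simp only [Finset.mem_filter]
    tauto
  -- inner product term
  have hA : X.innerF m 1 φ ψ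
      = ∑ σ ∈ Top, (Nat.factorial (k + 1) : ℝ) * m σ * ∑ x ∈ σ, f x * g x := by
    unfold SComplex.innerF
    rw [sum_fin1]
    have h1 : ∀ v : V, X.wt m (cf v) / (Nat.factorial 1 : ℝ) * (φ (cf v) * ψ (cf v))
        = ∑ σ ∈ Top, (if v ∈ σ then (Nat.factorial (k + 1) : ℝ) * m σ * (f v * g v) else 0) := by
      intro v
      rw [Nat.factorial_one, Nat.cast_one, div_one, wt_cf]
      by_cases hv : ({v} : Finset V) ∈ X.faces
      · rw [if_pos hv, wdecomp X (k + 1) m hm (k + 1) {v} hv (by rw [Finset.card_singleton]; omega)]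
        have : X.faces.filter (fun t => {v} ⊆ t ∧ t.card = k + 2)
            = Top.filter (fun σ => v ∈ σ) := by
          rw [hfilswap {v}]
          apply Finset.filter_congr
          intro x _
          simp
        rw [this, Finset.sum_filter, Finset.mul_sum, Finset.sum_mul]
        apply Finset.sum_congr rfl
        intro σ _
        by_cases hvσ : v ∈ σ <;> simp [hvσ, hf, hg] <;> ring
      · rw [if_neg hv, zero_mul]
        symm
        apply Finset.sum_eq_zero
        intro σ hσ
        apply if_neg
        intro hvσ
        exact hv (X.down_closed σ (hTopmem σ hσ).1 {v} (Finset.singleton_subset_iff.mpr hvσ))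
    rw [Finset.sum_congr rfl fun v _ => h1 v, Finset.sum_comm]
    apply Finset.sum_congr rfl
    intro σ _
    rw [Finset.sum_ite_mem, Finset.univ_inter, Finset.mul_sum]
  -- Laplacian term
  have hB : X.innerF m 1 (X.lapPlus m 1 φ) ψ
      = ∑ σ ∈ Top, (Nat.factorial k : ℝ) * m σ *
          (((k : ℝ) + 2) * (∑ x ∈ σ, f x * g x) - (∑ x ∈ σ, f x) * (∑ x ∈ σ, g x)) := by
    unfold SComplex.innerF
    rw [sum_fin1]
    have h0 : ∀ u : V, X.wt m (cf u) / (Nat.factorial 1 : ℝ) * (X.lapPlus m 1 φ (cf u) * ψ (cf u))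
        = (∑ v : V, X.wt m (ef u v) * (f u - f v)) * g u := by
      intro u
      rw [Nat.factorial_one, Nat.cast_one, div_one, ← lap_mul X (k + 1) m hm φ u]
      ring
    rw [Finset.sum_congr rfl fun u _ => h0 u]
    have h2 : ∀ u v : V, X.wt m (ef u v) * (f u - f v)
        = ∑ σ ∈ Top, (if v ∈ σ ∧ u ∈ σ ∧ v ≠ u
            then (Nat.factorial k : ℝ) * m σ * (f u - f v) else 0) := by
      intro u v
      rw [wt_ef]
      by_cases h : v ≠ u ∧ ({v, u} : Finset V) ∈ X.faces
      · rw [if_pos h]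
        have hc2 : ({v, u} : Finset V).card = 2 := by
          rw [Finset.card_insert_of_notMem (by simp [h.1]), Finset.card_singleton]
        rw [wdecomp X (k + 1) m hm k {v, u} h.2 (by omega)]
        have : X.faces.filter (fun t => {v, u} ⊆ t ∧ t.card = k + 2)
            = Top.filter (fun σ => v ∈ σ ∧ u ∈ σ) := by
          rw [hfilswap {v, u}]
          apply Finset.filter_congr
          intro x _
          simp [Finset.insert_subset_iff]
        rw [this, Finset.sum_filter, Finset.mul_sum, Finset.sum_mul]
        apply Finset.sum_congr rfl
        intro σ _
        by_cases h1 : v ∈ σ <;> by_cases h2 : u ∈ σ <;> simp [h1, h2, h.1] <;> ring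
      · rw [if_neg h]
        symm
        rw [zero_mul]
        apply Finset.sum_eq_zero
        intro σ hσ
        apply if_neg
        rintro ⟨hvσ, huσ, hvu⟩
        apply h
        refine ⟨hvu, X.down_closed σ (hTopmem σ hσ).1 {v, u} ?_⟩
        simp [Finset.insert_subset_iff, hvσ, huσ]
    have h3 : ∀ u : V, (∑ v : V, X.wt m (ef u v) * (f u - f v)) * g u
        = ∑ σ ∈ Top, ∑ v : V, (if v ∈ σ ∧ u ∈ σ ∧ v ≠ u
            then (Nat.factorial k : ℝ) * m σ * ((f u - f v) * g u) else 0) := by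
      intro u
      rw [Finset.sum_congr rfl fun v _ => h2 u v, Finset.sum_comm, Finset.sum_mul]
      apply Finset.sum_congr rfl
      intro σ _
      rw [Finset.sum_mul]
      apply Finset.sum_congr rfl
      intro v _
      by_cases hc : v ∈ σ ∧ u ∈ σ ∧ v ≠ u <;> simp [hc] <;> ring
    rw [Finset.sum_congr rfl fun u _ => h3 u, Finset.sum_comm]
    apply Finset.sum_congr rfl
    intro σ hσ
    obtain ⟨hσf, hσc⟩ := hTopmem σ hσ
    have h4 : ∀ u : V, ∑ v : V, (if v ∈ σ ∧ u ∈ σ ∧ v ≠ u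
        then (Nat.factorial k : ℝ) * m σ * ((f u - f v) * g u) else 0)
        = if u ∈ σ then ∑ v ∈ σ.erase u, (Nat.factorial k : ℝ) * m σ * ((f u - f v) * g u)
          else 0 := by
      intro u
      by_cases hu : u ∈ σ
      · rw [if_pos hu]
        rw [show σ.erase u = Finset.univ.filter (fun v => v ∈ σ ∧ u ∈ σ ∧ v ≠ u) by
          ext v; simp [Finset.mem_erase, hu, and_comm]]
        rw [Finset.sum_filter]
      · rw [if_neg hu]
        apply Finset.sum_eq_zero
        intro v _
        exact if_neg (fun hc => hu hc.2.1)
    rw [Finset.sum_congr rfl fun u _ => h4 u, Finset.sum_ite_mem, Finset.univ_inter]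
    have h5 : ∀ u ∈ σ, ∑ v ∈ σ.erase u, (Nat.factorial k : ℝ) * m σ * ((f u - f v) * g u)
        = ∑ v ∈ σ.erase u, ((Nat.factorial k : ℝ) * m σ) * (f u - f v) * g u :=
      fun u _ => Finset.sum_congr rfl fun v _ => by ring
    rw [Finset.sum_congr rfl h5, double_sum_lemma σ f g ((Nat.factorial k : ℝ) * m σ), hσc]
    push_cast
    ring
  rw [hA, hB, Finset.mul_sum, ← Finset.sum_sub_distrib]
  apply Finset.sum_congr rfl
  intro σ hσ
  have hfact : (Nat.factorial (k + 1) : ℝ) = ((k : ℝ) + 1) * (Nat.factorial k : ℝ) := by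
    rw [Nat.factorial_succ]; push_cast; ring
  have hk1 : (k : ℝ) + 1 ≠ 0 := by positivity
  rw [hfact]
  field_simp
  ring

end Aux
namespace Aux

open SComplex

lemma mem_link (X : SComplex V) {s : Finset V} (hs : s ∈ X.faces) (t : Finset V) :
    t ∈ (X.link s).faces ↔ Disjoint s t ∧ s ∪ t ∈ X.faces := by
  unfold SComplex.link
  simp only [Finset.mem_insert, Finset.mem_filter]
  constructor
  · rintro (rfl | ⟨ht, hd, hu⟩)
    · exact ⟨Finset.disjoint_empty_right s, by simpa⟩
    · exact ⟨hd, hu⟩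
  · rintro ⟨hd, hu⟩
    exact Or.inr ⟨X.down_closed _ hu _ Finset.subset_union_right, hd, hu⟩

lemma link_pure (X : SComplex V) (n : ℕ) (hpure : X.Pure (n + 1)) {u : V}
    (hu : ({u} : Finset V) ∈ X.faces) : (X.link {u}).Pure n := by
  constructor
  · intro t ht
    rw [mem_link X hu] at ht
    have h1 := hpure.1 _ ht.2
    have h2 : ({u} ∪ t).card = 1 + t.card := by
      rw [Finset.card_union_of_disjoint ht.1, Finset.card_singleton]
    omega
  · intro t ht
    rw [mem_link X hu] at ht
    obtain ⟨σ, hσf, hsub, hcard⟩ := hpure.2 _ ht.2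
    have huσ : u ∈ σ := hsub (Finset.mem_union_left _ (Finset.mem_singleton_self u))
    refine ⟨σ.erase u, ?_, ?_, ?_⟩
    · rw [mem_link X hu]
      constructor
      · simp [Finset.disjoint_left]
      · rw [← Finset.insert_eq, Finset.insert_erase huσ]
        exact hσf
    · intro x hx
      rw [Finset.mem_erase]
      refine ⟨?_, hsub (Finset.mem_union_right _ hx)⟩
      intro hxu
      have : Disjoint ({u} : Finset V) t := ht.1
      rw [Finset.disjoint_singleton_left] at this
      exact this (hxu ▸ hx)
    · rw [Finset.card_erase_of_mem huσ, hcard]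
      omega

lemma link_link (X : SComplex V) {s t : Finset V} (hs : s ∈ X.faces)
    (ht : t ∈ (X.link s).faces) : (X.link s).link t = X.link (s ∪ t) := by
  have ht' := (mem_link X hs t).mp ht
  obtain ⟨hdst, hstf⟩ := ht'
  apply scomplex_ext
  ext r
  rw [mem_link (X.link s) ht r, mem_link X hstf r]
  constructor
  · rintro ⟨hdtr, htr⟩
    rw [mem_link X hs] at htr
    obtain ⟨hdstr, hstrf⟩ := htr
    refine ⟨Finset.disjoint_union_left.mpr ⟨?_, hdtr⟩, ?_⟩
    · exact Finset.disjoint_of_subset_right Finset.subset_union_right hdstr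
    · rwa [Finset.union_assoc]
  · rintro ⟨hd, hf⟩
    rw [Finset.disjoint_union_left] at hd
    refine ⟨hd.2, ?_⟩
    rw [mem_link X hs]
    constructor
    · rw [Finset.disjoint_union_right]
      exact ⟨hdst, hd.1⟩
    · rwa [← Finset.union_assoc]

lemma link_allconn (X : SComplex V) (k : ℕ) (hconn : X.AllLinksConnected (k + 2)) {u : V}
    (hu : ({u} : Finset V) ∈ X.faces) : (X.link {u}).AllLinksConnected (k + 1) := by
  constructor
  · exact hconn.2 {u} hu (by simp)
  · intro t ht htc
    rw [link_link X hu ht]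
    have ht' := (mem_link X hu t).mp ht
    apply hconn.2 _ ht'.2
    rw [Finset.card_union_of_disjoint ht'.1, Finset.card_singleton]
    omega

section Comb

variable (X : SComplex V) {ι : Type} [Fintype ι] [DecidableEq ι]

lemma color_inj (k : ℕ) (hι : Fintype.card ι = k + 2) (C : V → ι)
    (hcolor : ∀ σ ∈ X.faces, σ.card = k + 2 → Finset.image C σ = Finset.univ)
    {σ : Finset V} (hσ : σ ∈ X.faces) (hc : σ.card = k + 2) : Set.InjOn C σ := by
  apply Finset.card_image_iff.mp
  rw [hcolor σ hσ hc, Finset.card_univ, hι, hc]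

lemma color_edge (k : ℕ) (hι : Fintype.card ι = k + 2) (C : V → ι)
    (hpure : X.Pure (k + 1))
    (hcolor : ∀ σ ∈ X.faces, σ.card = k + 2 → Finset.image C σ = Finset.univ)
    {u v : V} (huv : u ≠ v) (hf : ({u, v} : Finset V) ∈ X.faces) : C u ≠ C v := by
  obtain ⟨σ, hσ, hsub, hc⟩ := hpure.2 _ hf
  intro hC
  exact huv (color_inj X k hι C hcolor hσ hc (hsub (by simp)) (hsub (by simp)) hC)

lemma comb_core (k : ℕ) (hι : Fintype.card ι = k + 2) (C : V → ι)
    (hpure : X.Pure (k + 1)) (hskel : X.SkelConnected)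
    (hcolor : ∀ σ ∈ X.faces, σ.card = k + 2 → Finset.image C σ = Finset.univ)
    (f : V → ℝ)
    (hloc : ∀ u, ({u} : Finset V) ∈ X.faces → ∀ x x', ({u, x} : Finset V) ∈ X.faces →
      ({u, x'} : Finset V) ∈ X.faces → x ≠ u → x' ≠ u → C x = C x' → f x = f x') :
    ∀ u u', ({u} : Finset V) ∈ X.faces → ({u'} : Finset V) ∈ X.faces →
      C u = C u' → f u = f u' := by
  have hbridge : ∀ u v, ({u, v} : Finset V) ∈ X.faces → ∀ κ : ι,
      ∃ z, ({u, z} : Finset V) ∈ X.faces ∧ ({v, z} : Finset V) ∈ X.faces ∧ C z = κ := by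
    intro u v hf' κ
    obtain ⟨σ, hσ, hsub, hc⟩ := hpure.2 _ hf'
    have hκ : κ ∈ Finset.image C σ := by rw [hcolor σ hσ hc]; exact Finset.mem_univ κ
    obtain ⟨z, hzσ, hz⟩ := Finset.mem_image.mp hκ
    refine ⟨z, X.down_closed σ hσ _ ?_, X.down_closed σ hσ _ ?_, hz⟩
    · exact Finset.insert_subset (hsub (by simp)) (Finset.singleton_subset_iff.mpr hzσ)
    · exact Finset.insert_subset (hsub (by simp)) (Finset.singleton_subset_iff.mpr hzσ)
  set P : V → V → Prop := fun a b => ∀ x x', ({a, x} : Finset V) ∈ X.faces →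
      ({b, x'} : Finset V) ∈ X.faces → C x = C x' → f x = f x' with hP
  have hPrefl : ∀ a, ({a} : Finset V) ∈ X.faces → P a a := by
    intro a ha x x' hx hx' hC
    by_cases hxa : x = a <;> by_cases hx'a : x' = a
    · rw [hxa, hx'a]
    · subst hxa
      exact absurd hC (color_edge X k hι C hpure hcolor (fun h => hx'a h.symm) hx')
    · subst hx'a
      exact absurd hC.symm (color_edge X k hι C hpure hcolor (fun h => hxa h.symm) hx)
    · exact hloc a ha x x' hx hx' hxa hx'a hC
  have hPadj : ∀ a b, X.skeleton.Adj a b → P a b := by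
    intro a b hab x x' hx hx' hC
    obtain ⟨hne, habf⟩ := hab
    have ha : ({a} : Finset V) ∈ X.faces := X.down_closed _ habf _ (by simp)
    have hb : ({b} : Finset V) ∈ X.faces := X.down_closed _ habf _ (by simp)
    obtain ⟨z, hza, hzb, hzC⟩ := hbridge a b habf (C x)
    calc f x = f z := hPrefl a ha x z hx hza hzC.symm
    _ = f x' := hPrefl b hb z x' hzb hx' (hzC.trans hC)
  have hPtrans : ∀ a b c, ({b} : Finset V) ∈ X.faces → P a b → P b c → P a c := by
    intro a b c hb hab hbc x x' hx hx' hC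
    have hbb : ({b, b} : Finset V) = {b} := by simp
    obtain ⟨z, hzb, _, hzC⟩ := hbridge b b (by rw [hbb]; exact hb) (C x)
    calc f x = f z := hab x z hx hzb hzC.symm
    _ = f x' := hbc z x' hzb hx' (hzC.trans hC)
  have hwalk : ∀ a b : V, X.skeleton.Walk a b → ({a} : Finset V) ∈ X.faces → P a b := by
    intro a b p
    induction p with
    | nil => intro ha; exact hPrefl _ ha
    | cons h q ihq =>
      intro ha
      rename_i a' c b'
      have hc : ({c} : Finset V) ∈ X.faces := X.down_closed _ h.2 _ (by simp)
      exact hPtrans a' c b' hc (hPadj a' c h) (ihq hc)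
  intro u u' hu hu' hC
  obtain ⟨p⟩ := hskel u u' hu hu'
  have huu : ({u, u} : Finset V) = {u} := by simp
  have huu' : ({u', u'} : Finset V) = {u'} := by simp
  exact hwalk u u' p hu u u' (by rw [huu]; exact hu) (by rw [huu']; exact hu') hC

end Comb

lemma comb (V : Type) [Fintype V] [DecidableEq V] (k : ℕ) :
    ∀ (X : SComplex V) (ι : Type) [Fintype ι] [DecidableEq ι] (C : V → ι),
      Fintype.card ι = k + 2 → X.Pure (k + 1) → X.AllLinksConnected (k + 1) →
      (∀ σ ∈ X.faces, σ.card = k + 2 → Finset.image C σ = Finset.univ) →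
      ∀ f : V → ℝ, (∀ σ ∈ X.faces, σ.card = k + 2 → ∑ x ∈ σ, f x = 0) →
      ∀ u u', ({u} : Finset V) ∈ X.faces → ({u'} : Finset V) ∈ X.faces →
        C u = C u' → f u = f u' := by
  induction k with
  | zero =>
    intro X ι _ _ C hι hpure hconn hcolor f hf
    apply comb_core X 0 hι C hpure hconn.1 hcolor f
    intro u hu x x' hx hx' hxu hx'u hC
    have hux : u ≠ x := fun h => hxu h.symm
    have hux' : u ≠ x' := fun h => hx'u h.symm
    have h1 : f u + f x = 0 := by
      have := hf {u, x} hx (Finset.card_pair hux)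
      rwa [Finset.sum_pair hux] at this
    have h2 : f u + f x' = 0 := by
      have := hf {u, x'} hx' (Finset.card_pair hux')
      rwa [Finset.sum_pair hux'] at this
    linarith
  | succ k ih =>
    intro X ι _ _ C hι hpure hconn hcolor f hf
    apply comb_core X (k + 1) hι C hpure hconn.1 hcolor f
    intro u hu x x' hx hx' hxu hx'u hC
    set Y := X.link {u} with hYdef
    have hcard' : Fintype.card {j : ι // j ≠ C u} = k + 2 := by
      rw [Fintype.card_subtype, Finset.filter_ne', Finset.card_erase_of_mem (Finset.mem_univ _),
        Finset.card_univ, hι]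
      omega
    haveI hne : Nonempty {j : ι // j ≠ C u} := by
      apply Fintype.card_pos_iff.mp
      omega
    set C' : V → {j : ι // j ≠ C u} := fun v =>
      if h : C v = C u then Classical.arbitrary _ else ⟨C v, h⟩ with hC'def
    have hCedge : ∀ z, z ≠ u → ({u, z} : Finset V) ∈ X.faces → C z ≠ C u := by
      intro z hz hzf
      exact (color_edge X (k + 1) hι C hpure hcolor (fun h => hz h.symm) hzf).symm
    have hYpure : Y.Pure (k + 1) := link_pure X (k + 1) hpure hu
    have hYconn : Y.AllLinksConnected (k + 1) := link_allconn X k hconn hu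
    have hmemY : ∀ z, z ≠ u → (({z} : Finset V) ∈ Y.faces ↔ ({u, z} : Finset V) ∈ X.faces) := by
      intro z hz
      rw [hYdef, mem_link X hu]
      rw [Finset.disjoint_singleton_left, ← Finset.insert_eq]
      constructor
      · rintro ⟨_, h⟩; exact h
      · intro h
        exact ⟨fun hh => hz (Finset.mem_singleton.mp hh).symm, h⟩
    have hYcolor : ∀ τ ∈ Y.faces, τ.card = k + 2 →
        Finset.image C' τ = Finset.univ := by
      intro τ hτ hc
      have hτ' := (mem_link X hu τ).mp hτ
      obtain ⟨hd, huτ⟩ := hτ'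
      have huτc : ({u} ∪ τ).card = k + 3 := by
        rw [Finset.card_union_of_disjoint hd, Finset.card_singleton, hc]
        omega
      have himg := hcolor _ huτ huτc
      apply Finset.eq_univ_of_forall
      rintro ⟨i, hi⟩
      have : i ∈ Finset.image C ({u} ∪ τ) := by rw [himg]; exact Finset.mem_univ i
      obtain ⟨v, hv, hvC⟩ := Finset.mem_image.mp this
      have hvτ : v ∈ τ := by
        rcases Finset.mem_union.mp hv with h | h
        · exfalso
          rw [Finset.mem_singleton] at h
          subst h
          exact hi hvC.symm
        · exact h
      apply Finset.mem_image.mpr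
      refine ⟨v, hvτ, ?_⟩
      have hvne : C v ≠ C u := hvC ▸ hi
      rw [hC'def]
      simp only [dif_neg hvne]
      exact Subtype.ext hvC
    have hYf : ∀ τ ∈ Y.faces, τ.card = k + 2 →
        ∑ x ∈ τ, (f x + f u / (k + 2)) = 0 := by
      intro τ hτ hc
      have hτ' := (mem_link X hu τ).mp hτ
      obtain ⟨hd, huτ⟩ := hτ'
      have huτc : ({u} ∪ τ).card = k + 3 := by
        rw [Finset.card_union_of_disjoint hd, Finset.card_singleton, hc]
        omega
      have hsum := hf _ huτ huτc
      rw [Finset.sum_union hd, Finset.sum_singleton] at hsum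
      rw [Finset.sum_add_distrib, Finset.sum_const, hc, nsmul_eq_mul]
      push_cast
      have : ((k : ℝ) + 2) ≠ 0 := by positivity
      field_simp
      linarith
    have hxY : ({x} : Finset V) ∈ Y.faces := (hmemY x hxu).mpr hx
    have hx'Y : ({x'} : Finset V) ∈ Y.faces := (hmemY x' hx'u).mpr hx'
    have hC'eq : C' x = C' x' := by
      have h1 : C x ≠ C u := hCedge x hxu hx
      have h2 : C x' ≠ C u := hCedge x' hx'u hx'
      rw [hC'def]
      simp only [dif_neg h1, dif_neg h2]
      exact Subtype.ext hC
    have key := ih Y {j : ι // j ≠ C u} C' hcard' hYpure hYconn hYcolor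
      (fun z => f z + f u / (k + 2)) hYf x x' hxY hx'Y hC'eq
    simpa using key

end Aux
namespace Aux

open SComplex

lemma isform_one_iff (X : SComplex V) (φ : (Fin 1 → V) → ℝ) :
    X.IsForm 1 φ ↔ ∀ σ : Fin 1 → V, ¬X.IsOSimp σ → φ σ = 0 := by
  constructor
  · exact fun h => h.2
  · intro h
    refine ⟨fun σ π => ?_, h⟩
    have hπ : π = Equiv.refl (Fin 1) := Equiv.ext fun x => Subsingleton.elim _ _
    subst hπ
    simp

lemma innerF_point (X : SComplex V) (m : Finset V → ℝ) (a : (Fin 1 → V) → ℝ) (u : V) :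
    X.innerF m 1 a (fun τ => if τ = cf u then 1 else 0)
      = X.wt m (cf u) * a (cf u) := by
  unfold SComplex.innerF
  rw [Finset.sum_eq_single (cf u)]
  · simp
  · intro b _ hb
    simp [hb]
  · intro hb
    exact absurd (Finset.mem_univ _) hb

lemma lap_nonvertex (X : SComplex V) (m : Finset V → ℝ) (hm0 : ∀ s ∈ X.faces, 0 < m s)
    (φ : (Fin 1 → V) → ℝ) (u : V) (hu : ({u} : Finset V) ∉ X.faces) :
    X.lapPlus m 1 φ (cf u) = 0 := by
  unfold SComplex.lapPlus SComplex.deltaOp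
  apply Finset.sum_eq_zero
  intro v _
  have h0 : X.wt m (Fin.cons v (cf u)) = 0 := by
    rw [show Fin.cons v (cf u) = ef u v from rfl, wt_ef]
    apply if_neg
    rintro ⟨hne, hface⟩
    exact hu (X.down_closed _ hface _ (by simp))
  rw [h0, zero_div, zero_mul]

lemma eigen_iff (X : SComplex V) (k : ℕ) (m : Finset V → ℝ) (hm : X.IsBalanced (k + 1) m)
    (φ : (Fin 1 → V) → ℝ) (hform : X.IsForm 1 φ) :
    X.lapPlus m 1 φ = (((k : ℝ) + 2) / ((k : ℝ) + 1)) • φ ↔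
      ∀ σ ∈ X.faces, σ.card = k + 2 → ∑ x ∈ σ, φ (cf x) = 0 := by
  set lam : ℝ := ((k : ℝ) + 2) / ((k : ℝ) + 1) with hlam
  constructor
  · intro h σ hσ hc
    have hBI := BI X k m hm φ φ
    rw [h] at hBI
    have hsmul : X.innerF m 1 (lam • φ) φ = lam * X.innerF m 1 φ φ := by
      unfold SComplex.innerF
      rw [Finset.mul_sum]
      exact Finset.sum_congr rfl fun τ _ => by simp [Pi.smul_apply, smul_eq_mul]; ring
    rw [hsmul, sub_self] at hBI
    have hnn : ∀ t ∈ X.faces.filter (fun t => t.card = k + 2),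
        0 ≤ (Nat.factorial k : ℝ) * m t * (∑ x ∈ t, φ (cf x)) * (∑ x ∈ t, φ (cf x)) := by
      intro t ht
      rw [Finset.mem_filter] at ht
      have h1 : 0 < (Nat.factorial k : ℝ) * m t :=
        mul_pos (Nat.cast_pos.mpr (Nat.factorial_pos k)) (hm.1 t ht.1)
      nlinarith [sq_nonneg (∑ x ∈ t, φ (cf x))]
    have hz := (Finset.sum_eq_zero_iff_of_nonneg hnn).mp hBI.symm σ
      (Finset.mem_filter.mpr ⟨hσ, hc⟩)
    have h1 : 0 < (Nat.factorial k : ℝ) * m σ :=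
      mul_pos (Nat.cast_pos.mpr (Nat.factorial_pos k)) (hm.1 σ hσ)
    rcases mul_eq_zero.mp hz with h' | h'
    · rcases mul_eq_zero.mp h' with h'' | h''
      · exact absurd h'' (ne_of_gt h1)
      · exact h''
    · exact h'
  · intro h
    funext τ
    rw [fin1_eq τ]
    set u := τ 0
    rw [Pi.smul_apply, smul_eq_mul]
    by_cases hu : ({u} : Finset V) ∈ X.faces
    · have hBI := BI X k m hm φ (fun τ' => if τ' = cf u then 1 else 0)
      have hz : ∑ σ ∈ X.faces.filter (fun t => t.card = k + 2),
          (Nat.factorial k : ℝ) * m σ * (∑ x ∈ σ, φ (cf x)) *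
            (∑ x ∈ σ, if cf x = cf u then (1 : ℝ) else 0) = 0 := by
        apply Finset.sum_eq_zero
        intro σ hσ
        rw [Finset.mem_filter] at hσ
        rw [h σ hσ.1 hσ.2, mul_zero, zero_mul]
      rw [hz, innerF_point, innerF_point] at hBI
      have hw : X.wt m (cf u) ≠ 0 := by
        rw [wt_cf, if_pos hu]
        exact ne_of_gt (hm.1 _ hu)
      have h2 : X.wt m (cf u) * (lam * φ (cf u) - X.lapPlus m 1 φ (cf u)) = 0 := by
        rw [hlam]; linear_combination hBI
      rcases mul_eq_zero.mp h2 with h3 | h3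
      · exact absurd h3 hw
      · linarith
    · rw [lap_nonvertex X m hm.1 φ u hu, hform.2 (cf u) (by rw [isOSimp_cf]; exact hu),
        mul_zero]

end Aux
open Aux in
/-- Proposition 5.2: in an `(n+1)`-partite complex, `(n+1)/n` is an
eigenvalue of `Δ⁺₀` and its eigenspace is spanned by the functions `φ_i` taking the value `n`
on the side `S i` and `-1` on the other vertices. -/
theorem partite_top_eigenvalue_eigenspace
    (X : SComplex V) (n : ℕ) (m : Finset V → ℝ) (S : Fin (n + 1) → Finset V)
    (hn : 0 < n) (hpure : X.Pure n) (hm : X.IsBalanced n m)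
    (hpart : X.IsPartition n S) (hconn : X.AllLinksConnected n) :
    ((n : ℝ) + 1) / (n : ℝ) ∈ X.specLapPlus m 1 ∧
      {φ : (Fin 1 → V) → ℝ | X.IsForm 1 φ ∧
          X.lapPlus m 1 φ = (((n : ℝ) + 1) / (n : ℝ)) • φ} =
        ↑(Submodule.span ℝ (Set.range fun i : Fin (n + 1) =>
          fun u : Fin 1 → V =>
            if u 0 ∈ S i then (n : ℝ)
            else if ({u 0} : Finset V) ∈ X.faces then -1 else 0)) := by
  classical
  obtain ⟨k, rfl⟩ : ∃ k, n = k + 1 := ⟨n - 1, by omega⟩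
  set gen : Fin (k + 1 + 1) → ((Fin 1 → V) → ℝ) := fun i : Fin (k + 1 + 1) =>
      fun u : Fin 1 → V =>
        if u 0 ∈ S i then ((k + 1 : ℕ) : ℝ)
        else if ({u 0} : Finset V) ∈ X.faces then -1 else 0 with hgendef
  have hlam : (((k + 1 : ℕ) : ℝ) + 1) / ((k + 1 : ℕ) : ℝ)
      = ((k : ℝ) + 2) / ((k : ℝ) + 1) := by push_cast; ring
  have hvert := hpart.2.1
  set C : V → Fin (k + 2) := fun v =>
    if h : ({v} : Finset V) ∈ X.faces then (hvert v h).choose else 0 with hCdef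
  have hCmem : ∀ v, ({v} : Finset V) ∈ X.faces → v ∈ S (C v) := by
    intro v hv
    rw [hCdef]
    simp only [dif_pos hv]
    exact (hvert v hv).choose_spec.1
  have hCuniq : ∀ v, ({v} : Finset V) ∈ X.faces → ∀ i, v ∈ S i → C v = i := by
    intro v hv i hi
    rw [hCdef]
    simp only [dif_pos hv]
    exact ((hvert v hv).choose_spec.2 i hi).symm
  have hvertface : ∀ σ ∈ X.faces, ∀ x ∈ σ, ({x} : Finset V) ∈ X.faces :=
    fun σ hσ x hx => X.down_closed σ hσ {x} (Finset.singleton_subset_iff.mpr hx)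
  have hcolor : ∀ σ ∈ X.faces, σ.card = k + 2 → Finset.image C σ = Finset.univ := by
    intro σ hσ hc
    have hinj : Set.InjOn C σ := by
      intro a ha b hb hab
      by_contra hne
      have hpair : ({a, b} : Finset V) ∈ X.faces :=
        X.down_closed σ hσ _ (Finset.insert_subset ha (Finset.singleton_subset_iff.mpr hb))
      have haS : a ∈ S (C a) := hCmem a (hvertface σ hσ a ha)
      have hbS : b ∈ S (C b) := hCmem b (hvertface σ hσ b hb)
      exact hpart.2.2 a b hne hpair (C a) haS (hab ▸ hbS)
    apply Finset.eq_univ_of_card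
    rw [Finset.card_image_of_injOn hinj, hc, Fintype.card_fin]
  have hside : ∀ σ ∈ X.faces, σ.card = k + 2 → ∀ i, ∃ x ∈ σ, x ∈ S i := by
    intro σ hσ hc i
    have hh : i ∈ Finset.image C σ := by rw [hcolor σ hσ hc]; exact Finset.mem_univ i
    obtain ⟨x, hx, hxC⟩ := Finset.mem_image.mp hh
    exact ⟨x, hx, hxC ▸ hCmem x (hvertface σ hσ x hx)⟩
  have hone : ∀ σ ∈ X.faces, σ.card = k + 2 → ∀ i,
      (σ.filter (fun v => v ∈ S i)).card = 1 := by
    intro σ hσ hc i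
    obtain ⟨x, hxσ, hxS⟩ := hside σ hσ hc i
    rw [Finset.card_eq_one]
    refine ⟨x, ?_⟩
    ext y
    simp only [Finset.mem_filter, Finset.mem_singleton]
    constructor
    · rintro ⟨hyσ, hyS⟩
      apply color_inj X k (by simp) C hcolor hσ hc hyσ hxσ
      rw [hCuniq y (hvertface σ hσ y hyσ) i hyS, hCuniq x (hvertface σ hσ x hxσ) i hxS]
    · rintro rfl
      exact ⟨hxσ, hxS⟩
  have hgen_val : ∀ (i : Fin (k + 1 + 1)) (x : V), ({x} : Finset V) ∈ X.faces →
      gen i (cf x) = if x ∈ S i then ((k : ℝ) + 1) else -1 := by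
    intro i x hx
    by_cases h : x ∈ S i <;> simp [hgendef, cf, h, hx] <;> push_cast <;> ring
  have hgen_sum : ∀ (i : Fin (k + 1 + 1)), ∀ σ ∈ X.faces, σ.card = k + 2 →
      ∑ x ∈ σ, gen i (cf x) = 0 := by
    intro i σ hσ hc
    have h1 : ∀ x ∈ σ, gen i (cf x) = if x ∈ S i then ((k : ℝ) + 1) else -1 :=
      fun x hx => hgen_val i x (hvertface σ hσ x hx)
    rw [Finset.sum_congr rfl h1, Finset.sum_ite, Finset.sum_const, Finset.sum_const,
      hone σ hσ hc i]
    have h2 : (σ.filter (fun v => ¬ v ∈ S i)).card = k + 1 := by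
      have h3 := Finset.card_filter_add_card_filter_not
        (s := σ) (p := fun v => v ∈ S i)
      rw [hone σ hσ hc i] at h3
      omega
    rw [h2]
    simp only [nsmul_eq_mul, Nat.cast_one, Nat.cast_add]
    push_cast
    ring
  have hgen_form : ∀ i, X.IsForm 1 (gen i) := by
    intro i
    rw [isform_one_iff]
    intro σ hσ
    rw [fin1_eq σ] at hσ ⊢
    rw [isOSimp_cf] at hσ
    have h1 : σ 0 ∉ S i := fun hh => hσ (hpart.1 i (σ 0) hh)
    simp [hgendef, cf, h1, hσ]
  let E : Submodule ℝ ((Fin 1 → V) → ℝ) :=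
  { carrier := {φ | X.IsForm 1 φ ∧
      ∀ σ ∈ X.faces, σ.card = k + 2 → ∑ x ∈ σ, φ (cf x) = 0}
    add_mem' := by
      rintro a b ⟨ha1, ha2⟩ ⟨hb1, hb2⟩
      constructor
      · rw [isform_one_iff] at ha1 hb1 ⊢
        intro σ hσ
        simp [Pi.add_apply, ha1 σ hσ, hb1 σ hσ]
      · intro σ hσ hc
        simp only [Pi.add_apply]
        rw [Finset.sum_add_distrib, ha2 σ hσ hc, hb2 σ hσ hc, add_zero]
    zero_mem' := by
      constructor
      · rw [isform_one_iff]
        intro σ hσ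
        rfl
      · intro σ hσ hc
        simp
    smul_mem' := by
      rintro c a ⟨ha1, ha2⟩
      constructor
      · rw [isform_one_iff] at ha1 ⊢
        intro σ hσ
        simp [Pi.smul_apply, ha1 σ hσ]
      · intro σ hσ hc
        simp only [Pi.smul_apply, smul_eq_mul]
        rw [← Finset.mul_sum, ha2 σ hσ hc, mul_zero] }
  have hEgen : ∀ i, gen i ∈ E := fun i => ⟨hgen_form i, hgen_sum i⟩
  have hspan_le : Submodule.span ℝ (Set.range gen) ≤ E := by
    rw [Submodule.span_le]
    rintro _ ⟨i, rfl⟩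
    exact hEgen i
  constructor
  · obtain ⟨σ0, hσ0f, _, hσ0c⟩ := hpure.2 ∅ X.empty_mem
    obtain ⟨x0, hx0σ, hx0S⟩ := hside σ0 hσ0f hσ0c 0
    refine ⟨gen 0, hgen_form 0, ?_, ?_⟩
    · intro h
      have h1 := congrFun h (cf x0)
      rw [hgen_val 0 x0 (hvertface σ0 hσ0f x0 hx0σ), if_pos hx0S] at h1
      have h2 : (0 : ℝ) < (k : ℝ) + 1 := by positivity
      rw [Pi.zero_apply] at h1
      linarith
    · rw [hlam]
      exact (eigen_iff X k m hm (gen 0) (hgen_form 0)).mpr (hgen_sum 0)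
  · ext φ
    simp only [Set.mem_setOf_eq, SetLike.mem_coe]
    constructor
    · rintro ⟨hform, heig⟩
      rw [hlam] at heig
      have htopz := (eigen_iff X k m hm φ hform).mp heig
      have hconst := comb V k X (Fin (k + 2)) C (by simp) hpure hconn hcolor
        (fun v => φ (cf v)) htopz
      obtain ⟨σ0, hσ0f, _, hσ0c⟩ := hpure.2 ∅ X.empty_mem
      have hx : ∀ i : Fin (k + 2), ∃ x, x ∈ σ0 ∧ x ∈ S i := by
        intro i
        obtain ⟨x, h1, h2⟩ := hside σ0 hσ0f hσ0c i
        exact ⟨x, h1, h2⟩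
      choose xi hxiσ hxiS using hx
      have hxivert : ∀ i, ({xi i} : Finset V) ∈ X.faces :=
        fun i => hvertface σ0 hσ0f _ (hxiσ i)
      have hxiC : ∀ i, C (xi i) = i := fun i => hCuniq _ (hxivert i) i (hxiS i)
      set a : Fin (k + 2) → ℝ := fun i => φ (cf (xi i)) with hadef
      have hasum : ∑ i, a i = 0 := by
        rw [← htopz σ0 hσ0f hσ0c]
        apply Finset.sum_bij (fun i _ => xi i)
        · intro i _
          exact hxiσ i
        · intro i _ j _ hij
          rw [← hxiC i, ← hxiC j, hij]
        · intro x hx'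
          refine ⟨C x, Finset.mem_univ _, ?_⟩
          apply color_inj X k (by simp) C hcolor hσ0f hσ0c (hxiσ (C x)) hx'
          rw [hxiC]
        · intro i _
          rfl
      have hφu : ∀ u, ({u} : Finset V) ∈ X.faces → φ (cf u) = a (C u) :=
        fun u hu => hconst u (xi (C u)) hu (hxivert _) ((hxiC (C u)).symm)
      have hrepr : φ = ∑ i, (a i / ((k : ℝ) + 2)) • gen i := by
        funext τ
        rw [fin1_eq τ]
        rw [Finset.sum_apply]
        simp only [Pi.smul_apply, smul_eq_mul]
        by_cases hu : ({τ 0} : Finset V) ∈ X.faces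
        · have hCu : τ 0 ∈ S (C (τ 0)) := hCmem (τ 0) hu
          have hterm : ∀ i : Fin (k + 1 + 1), a i / ((k : ℝ) + 2) * gen i (cf (τ 0))
              = (- (a i / ((k : ℝ) + 2)))
                + (if i = C (τ 0) then a i / ((k : ℝ) + 2) * ((k : ℝ) + 2) else 0) := by
            intro i
            rw [hgen_val i (τ 0) hu]
            by_cases h : i = C (τ 0)
            · subst h
              rw [if_pos hCu, if_pos rfl]
              ring
            · have hus : τ 0 ∉ S i := fun hh => h (hCuniq (τ 0) hu i hh).symm
              rw [if_neg hus, if_neg h]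
              ring
          rw [Finset.sum_congr rfl (fun i _ => hterm i), Finset.sum_add_distrib,
            Finset.sum_ite_eq' Finset.univ (C (τ 0))
              (fun i => a i / ((k : ℝ) + 2) * ((k : ℝ) + 2)),
            if_pos (Finset.mem_univ _)]
          have h1 : ∑ i : Fin (k + 1 + 1), -(a i / ((k : ℝ) + 2)) = 0 := by
            rw [Finset.sum_neg_distrib, ← Finset.sum_div, hasum, zero_div, neg_zero]
          rw [h1, zero_add]
          have hk2 : ((k : ℝ) + 2) ≠ 0 := by positivity
          rw [div_mul_cancel₀ _ hk2]
          exact hφu (τ 0) hu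
        · have hφ0 : φ (cf (τ 0)) = 0 :=
            hform.2 (cf (τ 0)) (by rw [isOSimp_cf]; exact hu)
          rw [hφ0]
          symm
          apply Finset.sum_eq_zero
          intro i _
          have hus : τ 0 ∉ S i := fun hh => hu (hpart.1 i (τ 0) hh)
          simp [hgendef, cf, hus, hu]
      rw [hrepr]
      exact Submodule.sum_mem _ (fun i _ => Submodule.smul_mem _ _
        (Submodule.subset_span (Set.mem_range_self i)))
    · intro hφ
      have hmem : X.IsForm 1 φ ∧
          ∀ σ ∈ X.faces, σ.card = k + 2 → ∑ x ∈ σ, φ (cf x) = 0 := hspan_le hφ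
      obtain ⟨hform, htopz⟩ := hmem
      refine ⟨hform, ?_⟩
      rw [hlam]
      exact (eigen_iff X k m hm φ hform).mpr htopz
end

section
/- Let X be a finite pure n-dimensional weighted simplicial complex with n > 1 such that the 1-skeleton of X and the 1-skeletons of all links of X of dimension > 0 are connected. Fix 0 ≤ k ≤ n−1, and suppose there are κ ≥ λ > k/(k+1) such that ⋃_{τ ∈ Σ(k−1)} Spec(Δ^+_{τ,0}) \ {0} ⊆ [λ, κ]. Then the operator norm of Δ_k^+ + ((λ+κ)/2) Δ_k^− − (k+1)((λ+κ)/2 − k/(k+1)) I on C^k(X,ℝ) is at most (k+1)(κ−λ)/2. -/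
open Finset

variable {V : Type} [Fintype V] [DecidableEq V]

namespace SComplex

/-! ### Auxiliary material for the proof of the Garland operator norm bound -/

section Aux

set_option linter.unusedSectionVars false

variable {j k n : ℕ}

/-- Antisymmetry of a function on tuples. -/
def Antisym (j : ℕ) (φ : (Fin j → V) → ℝ) : Prop :=
  ∀ (σ : Fin j → V) (π : Equiv.Perm (Fin j)),
    φ (σ ∘ π) = ((Equiv.Perm.sign π : ℤ) : ℝ) * φ σ

lemma antisym_of_isForm (X : SComplex V) {φ : (Fin j → V) → ℝ} (h : X.IsForm j φ) :
    Antisym j φ := h.1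

lemma antisym_fin_one (φ : (Fin 1 → V) → ℝ) : Antisym 1 φ := by
  intro σ π
  have : π = 1 := Subsingleton.elim _ _
  subst this
  simp

lemma antisym_zero_fn : Antisym j (0 : (Fin j → V) → ℝ) := by intro σ π; simp

lemma Antisym.add {φ ψ : (Fin j → V) → ℝ} (hφ : Antisym j φ) (hψ : Antisym j ψ) :
    Antisym j (φ + ψ) := by
  intro σ π; simp only [Pi.add_apply, hφ σ π, hψ σ π]; ring

lemma Antisym.smul {φ : (Fin j → V) → ℝ} (hφ : Antisym j φ) (c : ℝ) :
    Antisym j (c • φ) := by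
  intro σ π; simp only [Pi.smul_apply, smul_eq_mul, hφ σ π]; ring

lemma Antisym.sub {φ ψ : (Fin j → V) → ℝ} (hφ : Antisym j φ) (hψ : Antisym j ψ) :
    Antisym j (φ - ψ) := by
  intro σ π; simp only [Pi.sub_apply, hφ σ π, hψ σ π]; ring

/-- value form of `succAbove`. -/
lemma succAbove_val (i : Fin (j + 1)) (x : Fin j) :
    ((i.succAbove x : Fin (j + 1)) : ℕ) = if (x : ℕ) < (i : ℕ) then (x : ℕ) else (x : ℕ) + 1 := by
  rw [Fin.succAbove]
  split_ifs with h1 h2 h3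
  · rfl
  · exact absurd (show (x : ℕ) < (i : ℕ) from h1) h2
  · exact absurd (show x.castSucc < i from h3) h1
  · rfl

lemma cycleRange_succAbove (i : Fin (j + 1)) (x : Fin j) :
    i.cycleRange (i.succAbove x) = x.succ := by
  rcases lt_or_ge x.castSucc i with h | h
  · rw [Fin.succAbove_of_castSucc_lt _ _ h, Fin.cycleRange_of_lt h]
    ext
    rw [Fin.val_add_one_of_lt (lt_of_lt_of_le h (Fin.le_last i))]
    simp
  · rw [Fin.succAbove_of_le_castSucc _ _ h, Fin.cycleRange_of_gt (lt_of_le_of_lt h (Fin.castSucc_lt_succ (i := x)))]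

lemma comp_cycleRange_succAbove (σ : Fin (j + 1) → V) (i : Fin (j + 1)) :
    (σ ∘ i.cycleRange) ∘ i.succAbove = σ ∘ Fin.succ := by
  funext x
  simp [Function.comp, cycleRange_succAbove]

lemma comp_cycleRange_apply (σ : Fin (j + 1) → V) (i : Fin (j + 1)) :
    (σ ∘ i.cycleRange) i = σ 0 := by
  simp [Function.comp, Fin.cycleRange_self]

/-- Summation over all tuples is invariant under pre-composition with a permutation. -/
lemma sum_comp_perm (π : Equiv.Perm (Fin j)) (F : (Fin j → V) → ℝ) :
    ∑ σ : Fin j → V, F (σ ∘ π) = ∑ σ : Fin j → V, F σ := by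
  apply Fintype.sum_bijective (fun σ : Fin j → V => σ ∘ π)
  · constructor
    · intro a b hab
      funext x
      have := congrFun hab (π.symm x)
      simpa using this
    · intro b
      exact ⟨b ∘ π.symm, by funext x; simp⟩
  · intro σ; rfl

lemma image_comp_perm (σ : Fin j → V) (π : Equiv.Perm (Fin j)) :
    Finset.image (σ ∘ π) Finset.univ = Finset.image σ Finset.univ := by
  ext x
  simp only [Finset.mem_image, Finset.mem_univ, true_and, Function.comp]
  constructor
  · rintro ⟨i, rfl⟩; exact ⟨π i, rfl⟩
  · rintro ⟨i, rfl⟩; exact ⟨π.symm i, by simp⟩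

lemma injective_comp_perm {σ : Fin j → V} (π : Equiv.Perm (Fin j)) :
    Function.Injective (σ ∘ π) ↔ Function.Injective σ := by
  constructor
  · intro h
    have : σ = (σ ∘ π) ∘ π.symm := by funext x; simp
    rw [this]
    exact h.comp π.symm.injective
  · intro h; exact h.comp π.injective

lemma isOSimp_comp_perm (X : SComplex V) (σ : Fin j → V) (π : Equiv.Perm (Fin j)) :
    X.IsOSimp (σ ∘ π) ↔ X.IsOSimp σ := by
  unfold SComplex.IsOSimp
  rw [image_comp_perm, injective_comp_perm]

lemma wt_comp_perm (X : SComplex V) (m : Finset V → ℝ) (σ : Fin j → V) (π : Equiv.Perm (Fin j)) :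
    X.wt m (σ ∘ π) = X.wt m σ := by
  unfold SComplex.wt
  rw [image_comp_perm]
  by_cases h : X.IsOSimp σ
  · rw [if_pos h, if_pos ((isOSimp_comp_perm X σ π).mpr h)]
  · rw [if_neg h, if_neg (fun hc => h ((isOSimp_comp_perm X σ π).mp hc))]

lemma swap_val {p : ℕ} (a b y : Fin p) :
    ((Equiv.swap a b y : Fin p) : ℕ) =
      if (y : ℕ) = (a : ℕ) then (b : ℕ) else if (y : ℕ) = (b : ℕ) then (a : ℕ) else (y : ℕ) := by
  rw [Equiv.swap_apply_def]
  have h1 : (y = a) ↔ ((y : ℕ) = (a : ℕ)) := Fin.ext_iff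
  have h2 : (y = b) ↔ ((y : ℕ) = (b : ℕ)) := Fin.ext_iff
  by_cases ha : (y : ℕ) = (a : ℕ)
  · rw [if_pos (h1.mpr ha), if_pos ha]
  · rw [if_neg (fun hc => ha (h1.mp hc)), if_neg ha]
    by_cases hb : (y : ℕ) = (b : ℕ)
    · rw [if_pos (h2.mpr hb), if_pos hb]
    · rw [if_neg (fun hc => hb (h2.mp hc)), if_neg hb]

lemma swap_comp_succAbove_lt (i : Fin (j + 2)) (t : Fin (j + 1)) (t' : Fin j)
    (hit : (i : ℕ) < (t : ℕ)) (ht' : (t' : ℕ) + 1 = (t : ℕ)) :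
    (Equiv.swap t.castSucc t.succ : Equiv.Perm (Fin (j + 2))) ∘ i.succAbove =
      i.succAbove ∘ (Equiv.swap t'.castSucc t'.succ : Equiv.Perm (Fin (j + 1))) := by
  funext x
  apply Fin.ext
  have hx := x.isLt; have hi := i.isLt; have ht := t.isLt
  simp only [Function.comp_apply, swap_val, succAbove_val, Fin.coe_castSucc, Fin.val_succ]
  split_ifs <;> omega

lemma swap_comp_succAbove_gt (i : Fin (j + 2)) (t : Fin (j + 1)) (t' : Fin j)
    (hit : (t : ℕ) + 1 < (i : ℕ)) (ht' : (t' : ℕ) = (t : ℕ)) :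
    (Equiv.swap t.castSucc t.succ : Equiv.Perm (Fin (j + 2))) ∘ i.succAbove =
      i.succAbove ∘ (Equiv.swap t'.castSucc t'.succ : Equiv.Perm (Fin (j + 1))) := by
  funext x
  apply Fin.ext
  have hx := x.isLt; have hi := i.isLt; have ht := t.isLt
  simp only [Function.comp_apply, swap_val, succAbove_val, Fin.coe_castSucc, Fin.val_succ]
  split_ifs <;> omega

lemma swap_comp_succAbove_self (t : Fin (j + 1)) :
    (Equiv.swap t.castSucc t.succ : Equiv.Perm (Fin (j + 2))) ∘ (t.castSucc).succAbove =
      (t.succ).succAbove := by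
  funext x
  apply Fin.ext
  have hx := x.isLt; have ht := t.isLt
  simp only [Function.comp_apply, swap_val, succAbove_val, Fin.coe_castSucc, Fin.val_succ]
  split_ifs <;> omega

lemma swap_comp_succAbove_self' (t : Fin (j + 1)) :
    (Equiv.swap t.castSucc t.succ : Equiv.Perm (Fin (j + 2))) ∘ (t.succ).succAbove =
      (t.castSucc).succAbove := by
  funext x
  apply Fin.ext
  have hx := x.isLt; have ht := t.isLt
  simp only [Function.comp_apply, swap_val, succAbove_val, Fin.coe_castSucc, Fin.val_succ]
  split_ifs <;> omega

lemma swap_succ_apply (t : Fin j) (y : Fin (j + 1)) :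
    (Equiv.swap (t.succ).castSucc (t.succ).succ : Equiv.Perm (Fin (j + 2))) y.succ =
      ((Equiv.swap t.castSucc t.succ : Equiv.Perm (Fin (j + 1))) y).succ := by
  apply Fin.ext
  have hy := y.isLt; have ht := t.isLt
  simp only [swap_val, Fin.coe_castSucc, Fin.val_succ]
  split_ifs <;> omega

lemma cons_comp_adjacent_swap (v : V) (τ : Fin (j + 1) → V) (t : Fin j) :
    Fin.cons v (τ ∘ (Equiv.swap t.castSucc t.succ : Equiv.Perm (Fin (j + 1)))) =
      (Fin.cons v τ : Fin (j + 2) → V) ∘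
        (Equiv.swap (t.succ).castSucc (t.succ).succ : Equiv.Perm (Fin (j + 2))) := by
  funext x
  induction x using Fin.cases with
  | zero =>
    have h0 : (Equiv.swap (t.succ).castSucc (t.succ).succ : Equiv.Perm (Fin (j + 2))) 0 = 0 :=
      Equiv.swap_apply_of_ne_of_ne (by simp [Fin.ext_iff]) (by simp [Fin.ext_iff])
    simp only [Function.comp_apply, h0, Fin.cons_zero]
  | succ y =>
    simp only [Function.comp_apply, Fin.cons_succ, swap_succ_apply]

/-- Antisymmetry follows from antisymmetry under adjacent transpositions. -/
lemma antisym_of_adjacent {φ : (Fin (j + 1) → V) → ℝ}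
    (h : ∀ (σ : Fin (j + 1) → V) (t : Fin j),
      φ (σ ∘ (Equiv.swap t.castSucc t.succ : Equiv.Perm (Fin (j + 1)))) = -φ σ) :
    Antisym (j + 1) φ := by
  intro σ π
  have hmem : π ∈ Submonoid.closure
      (Set.range fun i : Fin j => Equiv.swap i.castSucc i.succ) := by
    rw [Equiv.Perm.mclosure_swap_castSucc_succ]; trivial
  revert σ
  induction hmem using Submonoid.closure_induction with
  | mem x hx =>
    obtain ⟨t, rfl⟩ := hx
    intro σ
    rw [h σ t, Equiv.Perm.sign_swap (Fin.castSucc_lt_succ (i := t)).ne]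
    simp
  | one => intro σ; simp
  | mul a b _ _ iha ihb =>
    intro σ
    have hab : σ ∘ ⇑(a * b) = (σ ∘ ⇑a) ∘ ⇑b := by funext x; rfl
    rw [hab, ihb (σ ∘ ⇑a), iha σ, map_mul]
    push_cast
    ring

lemma Antisym.comp_dOp {φ : (Fin (j + 1) → V) → ℝ} (hφ : Antisym (j + 1) φ) :
    Antisym (j + 2) (dOp φ) := by
  apply antisym_of_adjacent
  intro σ t
  set s : Equiv.Perm (Fin (j + 2)) := Equiv.swap t.castSucc t.succ with hs
  have hsign : ∀ ψ : Fin (j + 1) → V, ∀ t' : Fin j,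
      φ (ψ ∘ (Equiv.swap t'.castSucc t'.succ : Equiv.Perm (Fin (j + 1)))) = -φ ψ := by
    intro ψ t'
    rw [hφ ψ (Equiv.swap t'.castSucc t'.succ), Equiv.Perm.sign_swap (Fin.castSucc_lt_succ (i := t')).ne]
    simp
  have key : ∀ i : Fin (j + 2),
      (-1 : ℝ) ^ (i : ℕ) * φ ((σ ∘ ⇑s) ∘ i.succAbove) =
        -((-1 : ℝ) ^ ((s i : Fin (j + 2)) : ℕ) * φ (σ ∘ (s i).succAbove)) := by
    intro i
    have hcomp : (σ ∘ ⇑s) ∘ i.succAbove = σ ∘ (⇑s ∘ i.succAbove) := rfl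
    rcases eq_or_ne i t.castSucc with rfl | hi1
    · rw [hcomp, hs]
      rw [swap_comp_succAbove_self t]
      have : Equiv.swap t.castSucc t.succ t.castSucc = t.succ := Equiv.swap_apply_left _ _
      rw [this]
      simp only [Fin.coe_castSucc, Fin.val_succ, pow_succ]
      ring
    rcases eq_or_ne i t.succ with rfl | hi2
    · rw [hcomp, hs]
      rw [swap_comp_succAbove_self' t]
      have : Equiv.swap t.castSucc t.succ t.succ = t.castSucc := Equiv.swap_apply_right _ _
      rw [this]
      simp only [Fin.coe_castSucc, Fin.val_succ, pow_succ]
      ring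
    · have hsi : s i = i := Equiv.swap_apply_of_ne_of_ne hi1 hi2
      have hiv1 : (i : ℕ) ≠ (t : ℕ) := fun hc => hi1 (Fin.ext (by simpa using hc))
      have hiv2 : (i : ℕ) ≠ (t : ℕ) + 1 := fun hc => hi2 (Fin.ext (by simpa using hc))
      rcases lt_or_gt_of_ne hiv1 with hlt | hgt
      · have ht1 : 1 ≤ (t : ℕ) := by omega
        have hlt' : (t : ℕ) - 1 < j := by have := t.isLt; omega
        rw [hcomp, hs, swap_comp_succAbove_lt i t ⟨(t : ℕ) - 1, hlt'⟩ hlt (by simp; omega)]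
        rw [show σ ∘ (i.succAbove ∘ ⇑(Equiv.swap (⟨(t : ℕ) - 1, hlt'⟩ : Fin j).castSucc
          (⟨(t : ℕ) - 1, hlt'⟩ : Fin j).succ)) = (σ ∘ i.succAbove) ∘
          ⇑(Equiv.swap (⟨(t : ℕ) - 1, hlt'⟩ : Fin j).castSucc (⟨(t : ℕ) - 1, hlt'⟩ : Fin j).succ)
          from rfl]
        rw [hsign (σ ∘ i.succAbove) _, hsi]
        ring
      · have hgt' : (t : ℕ) + 1 < (i : ℕ) := by omega
        have htj : (t : ℕ) < j := by have := i.isLt; omega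
        rw [hcomp, hs, swap_comp_succAbove_gt i t ⟨(t : ℕ), htj⟩ hgt' (by simp)]
        rw [show σ ∘ (i.succAbove ∘ ⇑(Equiv.swap (⟨(t : ℕ), htj⟩ : Fin j).castSucc
          (⟨(t : ℕ), htj⟩ : Fin j).succ)) = (σ ∘ i.succAbove) ∘
          ⇑(Equiv.swap (⟨(t : ℕ), htj⟩ : Fin j).castSucc (⟨(t : ℕ), htj⟩ : Fin j).succ)
          from rfl]
        rw [hsign (σ ∘ i.succAbove) _, hsi]
        ring
  show ∑ i : Fin (j + 2), (-1 : ℝ) ^ (i : ℕ) * φ ((σ ∘ ⇑s) ∘ i.succAbove) = -dOp φ σ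
  rw [Finset.sum_congr rfl (fun i _ => key i), Finset.sum_neg_distrib]
  congr 1
  exact Equiv.sum_comp s (fun i => (-1 : ℝ) ^ (i : ℕ) * φ (σ ∘ i.succAbove))

lemma image_comp_subset (σ : Fin (j + 1) → V) (f : Fin j → Fin (j + 1)) :
    Finset.image (σ ∘ f) Finset.univ ⊆ Finset.image σ Finset.univ := by
  intro x hx
  simp only [Finset.mem_image, Finset.mem_univ, true_and, Function.comp_apply] at hx ⊢
  obtain ⟨i, rfl⟩ := hx
  exact ⟨f i, rfl⟩

lemma isOSimp_comp_succAbove (X : SComplex V) {σ : Fin (j + 1) → V} (h : X.IsOSimp σ)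
    (i : Fin (j + 1)) : X.IsOSimp (σ ∘ i.succAbove) :=
  ⟨h.1.comp (Fin.succAbove_right_injective), X.down_closed _ h.2 _ (image_comp_subset σ _)⟩

lemma isOSimp_of_cons (X : SComplex V) {v : V} {τ : Fin j → V}
    (h : X.IsOSimp (Fin.cons v τ)) : X.IsOSimp τ := by
  have hc : τ = (Fin.cons v τ : Fin (j + 1) → V) ∘ Fin.succ := by
    funext x; simp
  rw [hc]
  refine ⟨h.1.comp (Fin.succ_injective j), X.down_closed _ h.2 _ ?_⟩
  intro x hx
  simp only [Finset.mem_image, Finset.mem_univ, true_and, Function.comp_apply] at hx ⊢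
  obtain ⟨i, rfl⟩ := hx
  exact ⟨i.succ, rfl⟩

lemma wt_cons_eq_zero (X : SComplex V) (m : Finset V → ℝ) {τ : Fin j → V}
    (h : ¬X.IsOSimp τ) (v : V) : X.wt m (Fin.cons v τ) = 0 := by
  rw [SComplex.wt, if_neg (fun hc => h (X.isOSimp_of_cons hc))]

lemma deltaOp_support (X : SComplex V) (m : Finset V → ℝ) {φ : (Fin (j + 1) → V) → ℝ}
    {τ : Fin j → V} (h : ¬X.IsOSimp τ) : X.deltaOp m φ τ = 0 := by
  rw [SComplex.deltaOp]
  apply Finset.sum_eq_zero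
  intro v _
  rw [wt_cons_eq_zero X m h, zero_div, zero_mul]

lemma Antisym.comp_deltaOp (X : SComplex V) (m : Finset V → ℝ) {φ : (Fin (j + 1) → V) → ℝ}
    (hφ : Antisym (j + 1) φ) : Antisym j (X.deltaOp m φ) := by
  cases j with
  | zero =>
    intro σ π
    have : π = 1 := Subsingleton.elim _ _
    subst this
    simp
  | succ j' =>
    apply antisym_of_adjacent
    intro τ t
    rw [SComplex.deltaOp, SComplex.deltaOp, ← Finset.sum_neg_distrib]
    apply Finset.sum_congr rfl
    intro v _
    rw [cons_comp_adjacent_swap v τ t]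
    rw [wt_comp_perm X m (Fin.cons v τ) _]
    rw [hφ (Fin.cons v τ) (Equiv.swap (t.succ).castSucc (t.succ).succ),
      Equiv.Perm.sign_swap (Fin.castSucc_lt_succ (i := t.succ)).ne]
    rw [wt_comp_perm X m τ _]
    push_cast
    ring

/-! #### innerF algebra -/

variable {X : SComplex V} {m : Finset V → ℝ}

lemma wt_nonneg (X : SComplex V) (m : Finset V → ℝ) (hmp : ∀ s ∈ X.faces, 0 < m s)
    (σ : Fin j → V) : 0 ≤ X.wt m σ := by
  rw [SComplex.wt]
  split_ifs with h
  · exact (hmp _ h.2).le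
  · exact le_refl 0

lemma wt_pos (hmp : ∀ s ∈ X.faces, 0 < m s) {σ : Fin j → V} (h : X.IsOSimp σ) :
    0 < X.wt m σ := by
  rw [SComplex.wt, if_pos h]
  exact hmp _ h.2

lemma wt_eq_zero {σ : Fin j → V} (h : ¬X.IsOSimp σ) : X.wt m σ = 0 := by
  rw [SComplex.wt, if_neg h]

lemma innerF_comm (φ ψ : (Fin j → V) → ℝ) : X.innerF m j φ ψ = X.innerF m j ψ φ := by
  unfold SComplex.innerF
  apply Finset.sum_congr rfl
  intro σ _
  ring

lemma innerF_add_left (φ ψ χ : (Fin j → V) → ℝ) :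
    X.innerF m j (φ + ψ) χ = X.innerF m j φ χ + X.innerF m j ψ χ := by
  unfold SComplex.innerF
  rw [← Finset.sum_add_distrib]
  apply Finset.sum_congr rfl
  intro σ _
  simp only [Pi.add_apply]
  ring

lemma innerF_smul_left (c : ℝ) (φ χ : (Fin j → V) → ℝ) :
    X.innerF m j (c • φ) χ = c * X.innerF m j φ χ := by
  unfold SComplex.innerF
  rw [Finset.mul_sum]
  apply Finset.sum_congr rfl
  intro σ _
  simp only [Pi.smul_apply, smul_eq_mul]
  ring

lemma innerF_sub_left (φ ψ χ : (Fin j → V) → ℝ) :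
    X.innerF m j (φ - ψ) χ = X.innerF m j φ χ - X.innerF m j ψ χ := by
  unfold SComplex.innerF
  rw [← Finset.sum_sub_distrib]
  apply Finset.sum_congr rfl
  intro σ _
  simp only [Pi.sub_apply]
  ring

lemma innerF_self_nonneg (hmp : ∀ s ∈ X.faces, 0 < m s) (φ : (Fin j → V) → ℝ) :
    0 ≤ X.innerF m j φ φ := by
  unfold SComplex.innerF
  apply Finset.sum_nonneg
  intro σ _
  apply mul_nonneg
  · apply div_nonneg (wt_nonneg X m hmp σ)
    positivity
  · exact mul_self_nonneg _

lemma innerF_congr_left {φ φ' : (Fin j → V) → ℝ} (χ : (Fin j → V) → ℝ)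
    (h : ∀ σ, X.IsOSimp σ → φ σ = φ' σ) :
    X.innerF m j φ χ = X.innerF m j φ' χ := by
  unfold SComplex.innerF
  apply Finset.sum_congr rfl
  intro σ _
  by_cases hσ : X.IsOSimp σ
  · rw [h σ hσ]
  · rw [wt_eq_zero hσ, zero_div, zero_mul, zero_mul]

lemma sign_cycleRange_real (i : Fin (j + 1)) :
    ((Equiv.Perm.sign (Fin.cycleRange i) : ℤ) : ℝ) = (-1 : ℝ) ^ (i : ℕ) := by
  rw [Fin.sign_cycleRange]
  push_cast
  ring

lemma wt_mul_div_cancel (hmp : ∀ s ∈ X.faces, 0 < m s) (τ : Fin j → V) (v : V) :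
    X.wt m τ * (X.wt m (Fin.cons v τ) / X.wt m τ) = X.wt m (Fin.cons v τ) := by
  by_cases h : X.IsOSimp τ
  · rw [mul_comm, div_mul_cancel₀ _ (wt_pos hmp h).ne']
  · rw [wt_eq_zero h, wt_cons_eq_zero X m h, zero_mul]

lemma cons_comp_succ (v : V) (τ : Fin j → V) :
    (Fin.cons v τ : Fin (j + 1) → V) ∘ Fin.succ = τ := by
  funext x; simp

/-- Summing a function of `(j+1)`-tuples as a double sum over `Fin.cons`-decompositions. -/
lemma sum_cons_decomp (G : (Fin (j + 1) → V) → ℝ) :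
    ∑ σ : Fin (j + 1) → V, G σ = ∑ v : V, ∑ τ : Fin j → V, G (Fin.cons v τ) := by
  have h2 : (∑ p : V × (Fin j → V), G (Fin.cons p.1 p.2)) =
      ∑ v : V, ∑ τ : Fin j → V, G (Fin.cons v τ) :=
    Fintype.sum_prod_type (f := fun p : V × (Fin j → V) => G (Fin.cons p.1 p.2))
  rw [← h2]
  symm
  apply Fintype.sum_bijective (fun p : V × (Fin j → V) => (Fin.cons p.1 p.2 : Fin (j + 1) → V))
  · constructor
    · intro a b hab
      have h0 := congrFun hab 0
      simp only [Fin.cons_zero] at h0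
      have h1 : a.2 = b.2 := by
        funext x
        have := congrFun hab x.succ
        simpa using this
      exact Prod.ext h0 h1
    · intro σ
      refine ⟨(σ 0, σ ∘ Fin.succ), ?_⟩
      show Fin.cons (σ 0) (σ ∘ Fin.succ) = σ
      funext x
      induction x using Fin.cases <;> simp
  · intro p; rfl

/-- The main adjointness relation: `⟨δφ, ψ⟩ = ⟨φ, dψ⟩`. -/
lemma adjoint_delta_d (hmp : ∀ s ∈ X.faces, 0 < m s) {j : ℕ} (φ : (Fin (j + 1) → V) → ℝ)
    (hφ : Antisym (j + 1) φ) (ψ : (Fin j → V) → ℝ) :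
    X.innerF m j (X.deltaOp m φ) ψ = X.innerF m (j + 1) φ (dOp ψ) := by
  have lhs_eq : X.innerF m j (X.deltaOp m φ) ψ =
      (∑ σ : Fin (j + 1) → V, X.wt m σ * φ σ * ψ (σ ∘ Fin.succ)) / (Nat.factorial j : ℝ) := by
    have e1 : X.innerF m j (X.deltaOp m φ) ψ = ∑ τ : Fin j → V, ∑ v : V,
        X.wt m (Fin.cons v τ) * φ (Fin.cons v τ) * ψ τ / (Nat.factorial j : ℝ) := by
      unfold SComplex.innerF SComplex.deltaOp
      apply Finset.sum_congr rfl
      intro τ _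
      rw [Finset.sum_mul, Finset.mul_sum]
      apply Finset.sum_congr rfl
      intro v _
      rw [show X.wt m τ / (Nat.factorial j : ℝ) * (X.wt m (Fin.cons v τ) / X.wt m τ *
        φ (Fin.cons v τ) * ψ τ) = X.wt m τ * (X.wt m (Fin.cons v τ) / X.wt m τ) *
        φ (Fin.cons v τ) * ψ τ / (Nat.factorial j : ℝ) from by ring]
      rw [wt_mul_div_cancel hmp]
    have e2 : (∑ σ : Fin (j + 1) → V, X.wt m σ * φ σ * ψ (σ ∘ Fin.succ)) /
        (Nat.factorial j : ℝ) = ∑ τ : Fin j → V, ∑ v : V,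
        X.wt m (Fin.cons v τ) * φ (Fin.cons v τ) * ψ τ / (Nat.factorial j : ℝ) := by
      rw [sum_cons_decomp (fun σ => X.wt m σ * φ σ * ψ (σ ∘ Fin.succ))]
      rw [Finset.sum_comm, Finset.sum_div]
      apply Finset.sum_congr rfl
      intro τ _
      rw [Finset.sum_div]
      apply Finset.sum_congr rfl
      intro v _
      rw [cons_comp_succ]
    rw [e1, e2]
  have rhs_eq : X.innerF m (j + 1) φ (dOp ψ) =
      (∑ σ : Fin (j + 1) → V, X.wt m σ * φ σ * ψ (σ ∘ Fin.succ)) / (Nat.factorial j : ℝ) := by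
    unfold SComplex.innerF dOp
    have step1 : ∀ σ : Fin (j + 1) → V, X.wt m σ / (Nat.factorial (j + 1) : ℝ) *
        (φ σ * ∑ i : Fin (j + 1), (-1 : ℝ) ^ (i : ℕ) * ψ (σ ∘ i.succAbove)) =
        ∑ i : Fin (j + 1), X.wt m σ * φ σ * ((-1 : ℝ) ^ (i : ℕ) * ψ (σ ∘ i.succAbove)) /
          (Nat.factorial (j + 1) : ℝ) := by
      intro σ
      rw [Finset.mul_sum, Finset.mul_sum]
      apply Finset.sum_congr rfl
      intro i _
      ring
    rw [Finset.sum_congr rfl (fun σ _ => step1 σ), Finset.sum_comm]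
    have step2 : ∀ i : Fin (j + 1),
        ∑ σ : Fin (j + 1) → V, X.wt m σ * φ σ * ((-1 : ℝ) ^ (i : ℕ) * ψ (σ ∘ i.succAbove)) =
        ∑ σ : Fin (j + 1) → V, X.wt m σ * φ σ * ψ (σ ∘ Fin.succ) := by
      intro i
      rw [← sum_comp_perm (Fin.cycleRange i)
        (fun σ => X.wt m σ * φ σ * ((-1 : ℝ) ^ (i : ℕ) * ψ (σ ∘ i.succAbove)))]
      apply Finset.sum_congr rfl
      intro σ _
      rw [show (σ ∘ ⇑(Fin.cycleRange i)) ∘ i.succAbove = σ ∘ Fin.succ from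
        comp_cycleRange_succAbove σ i]
      rw [wt_comp_perm, hφ σ (Fin.cycleRange i), sign_cycleRange_real]
      rw [show X.wt m σ * ((-1 : ℝ) ^ (i : ℕ) * φ σ) * ((-1 : ℝ) ^ (i : ℕ) * ψ (σ ∘ Fin.succ)) =
        ((-1 : ℝ) * (-1)) ^ (i : ℕ) * (X.wt m σ * φ σ * ψ (σ ∘ Fin.succ)) from by
          rw [mul_pow]; ring]
      norm_num
    have step3 : ∀ i : Fin (j + 1), ∑ σ : Fin (j + 1) → V,
        X.wt m σ * φ σ * ((-1 : ℝ) ^ (i : ℕ) * ψ (σ ∘ i.succAbove)) /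
          (Nat.factorial (j + 1) : ℝ) =
        (∑ σ : Fin (j + 1) → V, X.wt m σ * φ σ * ψ (σ ∘ Fin.succ)) /
          (Nat.factorial (j + 1) : ℝ) := by
      intro i
      rw [← Finset.sum_div, step2 i]
    rw [Finset.sum_congr rfl (fun i _ => step3 i), Finset.sum_const, Finset.card_univ,
      Fintype.card_fin, nsmul_eq_mul]
    rw [Nat.factorial_succ]
    have h1 : ((j : ℝ) + 1) ≠ 0 := by positivity
    have h2 : ((Nat.factorial j : ℕ) : ℝ) ≠ 0 := Nat.cast_ne_zero.mpr (Nat.factorial_ne_zero j)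
    push_cast
    field_simp
  rw [lhs_eq, rhs_eq]

/-! #### Balanced weights -/

lemma image_cons (v : V) (τ : Fin j → V) :
    Finset.image (Fin.cons v τ : Fin (j + 1) → V) Finset.univ =
      insert v (Finset.image τ Finset.univ) := by
  ext x
  simp only [Finset.mem_image, Finset.mem_univ, true_and, Finset.mem_insert]
  constructor
  · rintro ⟨i, rfl⟩
    induction i using Fin.cases with
    | zero => left; simp
    | succ y => right; exact ⟨y, by simp⟩
  · rintro (rfl | ⟨i, rfl⟩)
    · exact ⟨0, by simp⟩
    · exact ⟨i.succ, by simp⟩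

lemma isOSimp_cons_iff {v : V} {τ : Fin j → V} (hτ : X.IsOSimp τ) :
    X.IsOSimp (Fin.cons v τ) ↔ v ∉ Finset.image τ Finset.univ ∧
      insert v (Finset.image τ Finset.univ) ∈ X.faces := by
  constructor
  · intro h
    refine ⟨?_, by rw [← image_cons]; exact h.2⟩
    intro hv
    simp only [Finset.mem_image, Finset.mem_univ, true_and] at hv
    obtain ⟨i, hi⟩ := hv
    have h0 : (Fin.cons v τ : Fin (j + 1) → V) 0 = (Fin.cons v τ : Fin (j + 1) → V) i.succ := by
      simp [hi]
    have := h.1 h0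
    exact absurd this (by simp [Fin.ext_iff])
  · rintro ⟨hv, hf⟩
    constructor
    · apply Fin.cons_injective_iff.mpr
      refine ⟨?_, hτ.1⟩
      rintro ⟨i, rfl⟩
      exact hv (Finset.mem_image.mpr ⟨i, Finset.mem_univ i, rfl⟩)
    · rw [image_cons]; exact hf

lemma sum_wt_cons (hm : X.IsBalanced n m) (hj : j ≤ n) (σ : Fin j → V) :
    ∑ v : V, X.wt m (Fin.cons v σ) = X.wt m σ := by
  by_cases h : X.IsOSimp σ
  · have hcard : (Finset.image σ Finset.univ).card = j := by
      rw [Finset.card_image_of_injective _ h.1, Finset.card_univ, Fintype.card_fin]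
    rw [SComplex.wt, if_pos h, hm.2 _ h.2 (by rw [hcard]; exact hj)]
    have lhs_eq : ∑ v : V, X.wt m (Fin.cons v σ) =
        ∑ v ∈ Finset.univ.filter (fun v => X.IsOSimp (Fin.cons v σ)),
          m (insert v (Finset.image σ Finset.univ)) := by
      rw [Finset.sum_filter]
      apply Finset.sum_congr rfl
      intro v _
      rw [SComplex.wt]
      by_cases hv : X.IsOSimp (Fin.cons v σ)
      · rw [if_pos hv, if_pos hv, image_cons]
      · rw [if_neg hv, if_neg hv]
    rw [lhs_eq]
    set s := Finset.image σ Finset.univ with hs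
    apply Finset.sum_bij (i := fun v _ => insert v s)
    · intro v hv
      simp only [Finset.mem_filter, Finset.mem_univ, true_and] at hv
      rw [isOSimp_cons_iff h] at hv
      simp only [Finset.mem_filter]
      exact ⟨hv.2, Finset.subset_insert _ _, by rw [Finset.card_insert_of_notMem hv.1]⟩
    · intro v1 hv1 v2 hv2 heq
      simp only [Finset.mem_filter, Finset.mem_univ, true_and] at hv1 hv2
      rw [isOSimp_cons_iff h] at hv1 hv2
      have : v1 ∈ insert v2 s := heq ▸ Finset.mem_insert_self v1 s
      rcases Finset.mem_insert.mp this with h' | h'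
      · exact h'
      · exact absurd h' hv1.1
    · intro t ht
      simp only [Finset.mem_filter] at ht
      obtain ⟨htf, hsub, hcard'⟩ := ht
      have hone : (t \ s).card = 1 := by
        rw [Finset.card_sdiff_of_subset hsub, hcard']; omega
      obtain ⟨v, hv⟩ := Finset.card_eq_one.mp hone
      have hvmem : v ∈ t \ s := hv ▸ Finset.mem_singleton_self v
      have hvt : v ∈ t := (Finset.mem_sdiff.mp hvmem).1
      have hvs : v ∉ s := (Finset.mem_sdiff.mp hvmem).2
      have hins : insert v s = t := by
        apply Finset.eq_of_subset_of_card_le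
        · exact Finset.insert_subset hvt hsub
        · rw [Finset.card_insert_of_notMem hvs, hcard']
      refine ⟨v, ?_, hins⟩
      simp only [Finset.mem_filter, Finset.mem_univ, true_and]
      rw [isOSimp_cons_iff h]
      exact ⟨hvs, hins ▸ htf⟩
    · intro v hv
      rfl
  · have h1 : ∀ v : V, X.wt m (Fin.cons v σ) = 0 := wt_cons_eq_zero X m h
    rw [wt_eq_zero h]
    simp [h1]

lemma factorial_mul_innerF (φ ψ : (Fin j → V) → ℝ) :
    (Nat.factorial j : ℝ) * X.innerF m j φ ψ = ∑ σ : Fin j → V, X.wt m σ * (φ σ * ψ σ) := by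
  unfold SComplex.innerF
  rw [Finset.mul_sum]
  apply Finset.sum_congr rfl
  intro σ _
  have hf : ((Nat.factorial j : ℕ) : ℝ) ≠ 0 := Nat.cast_ne_zero.mpr (Nat.factorial_ne_zero j)
  field_simp
  try ring

lemma cons_comp_succ_succAbove (u : V) (σ : Fin (j + 1) → V) (i : Fin (j + 1)) :
    (Fin.cons u σ : Fin (j + 2) → V) ∘ (i.succ).succAbove = Fin.cons u (σ ∘ i.succAbove) := by
  funext x
  induction x using Fin.cases with
  | zero => simp [Fin.succ_succAbove_zero]
  | succ y => simp [Fin.succ_succAbove_succ]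

lemma isOSimp_cons_comp_perm (u : V) (σ : Fin j → V) (π : Equiv.Perm (Fin j)) :
    X.IsOSimp (Fin.cons u (σ ∘ π)) ↔ X.IsOSimp (Fin.cons u σ) := by
  unfold SComplex.IsOSimp
  rw [image_cons, image_cons, image_comp_perm]
  constructor
  · rintro ⟨hinj, hf⟩
    refine ⟨?_, hf⟩
    rw [Fin.cons_injective_iff] at hinj ⊢
    refine ⟨?_, (injective_comp_perm π).mp hinj.2⟩
    intro hc
    apply hinj.1
    obtain ⟨i, rfl⟩ := hc
    exact ⟨π.symm i, by simp⟩
  · rintro ⟨hinj, hf⟩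
    refine ⟨?_, hf⟩
    rw [Fin.cons_injective_iff] at hinj ⊢
    refine ⟨?_, (injective_comp_perm π).mpr hinj.2⟩
    intro hc
    apply hinj.1
    obtain ⟨i, rfl⟩ := hc
    exact ⟨π i, rfl⟩

lemma wt_cons_comp_perm (u : V) (σ : Fin j → V) (π : Equiv.Perm (Fin j)) :
    X.wt m (Fin.cons u (σ ∘ π)) = X.wt m (Fin.cons u σ) := by
  unfold SComplex.wt
  rw [image_cons, image_cons, image_comp_perm]
  by_cases h : X.IsOSimp (Fin.cons u σ)
  · rw [if_pos h, if_pos ((isOSimp_cons_comp_perm u σ π).mpr h)]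
  · rw [if_neg h, if_neg (fun hc => h ((isOSimp_cons_comp_perm u σ π).mp hc))]

/-- The combinatorial identity `(j+2)! ⟨dφ,dφ⟩ = (j+2)(P - (j+1)Q)`. -/
lemma ident_d_sq (hmp : ∀ s ∈ X.faces, 0 < m s) {j : ℕ} (φ : (Fin (j + 1) → V) → ℝ)
    (hφ : Antisym (j + 1) φ) :
    (Nat.factorial (j + 2) : ℝ) * X.innerF m (j + 2) (dOp φ) (dOp φ) =
      (j + 2 : ℝ) * ((∑ u : V, ∑ σ : Fin (j + 1) → V, X.wt m (Fin.cons u σ) * (φ σ * φ σ)) -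
        (j + 1 : ℝ) * (∑ u : V, ∑ σ : Fin (j + 1) → V,
          X.wt m (Fin.cons u σ) * (φ σ * φ (Fin.cons u (σ ∘ Fin.succ))))) := by
  have hd : Antisym (j + 2) (dOp φ) := hφ.comp_dOp
  rw [factorial_mul_innerF]
  -- Step 1: symmetrize one factor of dφ
  have step1 : ∑ ρ : Fin (j + 2) → V, X.wt m ρ * (dOp φ ρ * dOp φ ρ) =
      (j + 2 : ℝ) * ∑ ρ : Fin (j + 2) → V, X.wt m ρ * (dOp φ ρ * φ (ρ ∘ Fin.succ)) := by
    have expand : ∀ ρ : Fin (j + 2) → V, X.wt m ρ * (dOp φ ρ * dOp φ ρ) =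
        ∑ i : Fin (j + 2), X.wt m ρ * (dOp φ ρ * ((-1 : ℝ) ^ (i : ℕ) * φ (ρ ∘ i.succAbove))) := by
      intro ρ
      conv_lhs => rw [show dOp φ ρ * dOp φ ρ = dOp φ ρ *
        (∑ i : Fin (j + 2), (-1 : ℝ) ^ (i : ℕ) * φ (ρ ∘ i.succAbove)) from rfl]
      rw [Finset.mul_sum, Finset.mul_sum]
    rw [Finset.sum_congr rfl (fun ρ _ => expand ρ), Finset.sum_comm]
    have per_i : ∀ i : Fin (j + 2),
        ∑ ρ : Fin (j + 2) → V, X.wt m ρ * (dOp φ ρ * ((-1 : ℝ) ^ (i : ℕ) * φ (ρ ∘ i.succAbove))) =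
        ∑ ρ : Fin (j + 2) → V, X.wt m ρ * (dOp φ ρ * φ (ρ ∘ Fin.succ)) := by
      intro i
      rw [← sum_comp_perm (Fin.cycleRange i)
        (fun ρ => X.wt m ρ * (dOp φ ρ * ((-1 : ℝ) ^ (i : ℕ) * φ (ρ ∘ i.succAbove))))]
      apply Finset.sum_congr rfl
      intro ρ _
      rw [show (ρ ∘ ⇑(Fin.cycleRange i)) ∘ i.succAbove = ρ ∘ Fin.succ from
        comp_cycleRange_succAbove ρ i]
      rw [wt_comp_perm, hd ρ (Fin.cycleRange i), sign_cycleRange_real]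
      rw [show X.wt m ρ * ((-1 : ℝ) ^ (i : ℕ) * dOp φ ρ *
        ((-1 : ℝ) ^ (i : ℕ) * φ (ρ ∘ Fin.succ))) =
        ((-1 : ℝ) * (-1)) ^ (i : ℕ) * (X.wt m ρ * (dOp φ ρ * φ (ρ ∘ Fin.succ))) from by
          rw [mul_pow]; ring]
      norm_num
    rw [Finset.sum_congr rfl (fun i _ => per_i i), Finset.sum_const, Finset.card_univ,
      Fintype.card_fin, nsmul_eq_mul]
    push_cast
    ring
  rw [step1]
  congr 1
  -- Step 2: expand the remaining dφ
  have expand2 : ∀ ρ : Fin (j + 2) → V, X.wt m ρ * (dOp φ ρ * φ (ρ ∘ Fin.succ)) =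
      ∑ i : Fin (j + 2), X.wt m ρ * (((-1 : ℝ) ^ (i : ℕ) * φ (ρ ∘ i.succAbove)) *
        φ (ρ ∘ Fin.succ)) := by
    intro ρ
    conv_lhs => rw [show dOp φ ρ = ∑ i : Fin (j + 2), (-1 : ℝ) ^ (i : ℕ) * φ (ρ ∘ i.succAbove)
      from rfl]
    rw [Finset.sum_mul, Finset.mul_sum]
  rw [Finset.sum_congr rfl (fun ρ _ => expand2 ρ), Finset.sum_comm, Fin.sum_univ_succ]
  have term0 : ∑ ρ : Fin (j + 2) → V, X.wt m ρ * (((-1 : ℝ) ^ ((0 : Fin (j + 2)) : ℕ) *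
      φ (ρ ∘ (0 : Fin (j + 2)).succAbove)) * φ (ρ ∘ Fin.succ)) =
      ∑ u : V, ∑ σ : Fin (j + 1) → V, X.wt m (Fin.cons u σ) * (φ σ * φ σ) := by
    rw [sum_cons_decomp (fun ρ => X.wt m ρ * (((-1 : ℝ) ^ ((0 : Fin (j + 2)) : ℕ) *
      φ (ρ ∘ (0 : Fin (j + 2)).succAbove)) * φ (ρ ∘ Fin.succ)))]
    apply Finset.sum_congr rfl
    intro u _
    apply Finset.sum_congr rfl
    intro σ _
    rw [show (0 : Fin (j + 2)).succAbove = Fin.succ from Fin.succAbove_zero, cons_comp_succ]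
    norm_num
  rw [term0]
  have termsucc : ∀ i' : Fin (j + 1),
      ∑ ρ : Fin (j + 2) → V, X.wt m ρ * (((-1 : ℝ) ^ ((i'.succ : Fin (j + 2)) : ℕ) *
        φ (ρ ∘ (i'.succ).succAbove)) * φ (ρ ∘ Fin.succ)) =
      -(∑ u : V, ∑ σ : Fin (j + 1) → V,
        X.wt m (Fin.cons u σ) * (φ σ * φ (Fin.cons u (σ ∘ Fin.succ)))) := by
    intro i'
    rw [sum_cons_decomp (fun ρ => X.wt m ρ * (((-1 : ℝ) ^ ((i'.succ : Fin (j + 2)) : ℕ) *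
      φ (ρ ∘ (i'.succ).succAbove)) * φ (ρ ∘ Fin.succ)))]
    have inner_eq : ∀ u : V,
        ∑ σ : Fin (j + 1) → V, X.wt m (Fin.cons u σ) *
          (((-1 : ℝ) ^ ((i'.succ : Fin (j + 2)) : ℕ) *
            φ ((Fin.cons u σ : Fin (j + 2) → V) ∘ (i'.succ).succAbove)) *
            φ ((Fin.cons u σ : Fin (j + 2) → V) ∘ Fin.succ)) =
        -(∑ σ : Fin (j + 1) → V,
          X.wt m (Fin.cons u σ) * (φ σ * φ (Fin.cons u (σ ∘ Fin.succ)))) := by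
      intro u
      have e1 : ∀ σ : Fin (j + 1) → V, X.wt m (Fin.cons u σ) *
          (((-1 : ℝ) ^ ((i'.succ : Fin (j + 2)) : ℕ) *
            φ ((Fin.cons u σ : Fin (j + 2) → V) ∘ (i'.succ).succAbove)) *
            φ ((Fin.cons u σ : Fin (j + 2) → V) ∘ Fin.succ)) =
          X.wt m (Fin.cons u σ) * (((-1 : ℝ) ^ ((i'.succ : Fin (j + 2)) : ℕ) *
            φ (Fin.cons u (σ ∘ i'.succAbove))) * φ σ) := by
        intro σ
        rw [cons_comp_succ, cons_comp_succ_succAbove]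
      rw [Finset.sum_congr rfl (fun σ _ => e1 σ)]
      rw [← sum_comp_perm (Fin.cycleRange i')
        (fun σ => X.wt m (Fin.cons u σ) * (((-1 : ℝ) ^ ((i'.succ : Fin (j + 2)) : ℕ) *
          φ (Fin.cons u (σ ∘ i'.succAbove))) * φ σ)), ← Finset.sum_neg_distrib]
      apply Finset.sum_congr rfl
      intro σ _
      rw [show (σ ∘ ⇑(Fin.cycleRange i')) ∘ i'.succAbove = σ ∘ Fin.succ from
        comp_cycleRange_succAbove σ i']
      rw [wt_cons_comp_perm, hφ σ (Fin.cycleRange i'), sign_cycleRange_real]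
      rw [Fin.val_succ, pow_succ]
      rw [show X.wt m (Fin.cons u σ) * ((-1 : ℝ) ^ (i' : ℕ) * -1 *
        φ (Fin.cons u (σ ∘ Fin.succ)) * ((-1 : ℝ) ^ (i' : ℕ) * φ σ)) =
        -(((-1 : ℝ) * (-1)) ^ (i' : ℕ) *
        (X.wt m (Fin.cons u σ) * (φ σ * φ (Fin.cons u (σ ∘ Fin.succ))))) from by
          rw [mul_pow]; ring]
      norm_num
    rw [Finset.sum_congr rfl (fun u _ => inner_eq u), Finset.sum_neg_distrib]
  rw [Finset.sum_congr rfl (fun i' _ => termsucc i'), Finset.sum_const, Finset.card_univ,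
    Fintype.card_fin, nsmul_eq_mul]
  push_cast
  ring

/-- `P = (j+1)! ⟨φ,φ⟩` via balancedness. -/
lemma ident_P (hm : X.IsBalanced n m) (hjn : j + 1 ≤ n) (φ : (Fin (j + 1) → V) → ℝ) :
    ∑ u : V, ∑ σ : Fin (j + 1) → V, X.wt m (Fin.cons u σ) * (φ σ * φ σ) =
      (Nat.factorial (j + 1) : ℝ) * X.innerF m (j + 1) φ φ := by
  rw [factorial_mul_innerF, Finset.sum_comm]
  apply Finset.sum_congr rfl
  intro σ _
  rw [← Finset.sum_mul, sum_wt_cons hm hjn]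

/-! #### Link interface lemmas -/

lemma linkWt_pos (hmp : ∀ s ∈ X.faces, 0 < m s) {s : Finset V} (hs : s ∈ X.faces) :
    ∀ t ∈ (X.link s).faces, 0 < (linkWt m s) t := by
  intro t ht
  rcases Finset.mem_insert.mp ht with rfl | h
  · simpa [SComplex.linkWt] using hmp s hs
  · rw [Finset.mem_filter] at h
    exact hmp _ h.2.2

lemma image_fin_one (w : Fin 1 → V) : Finset.image w Finset.univ = {w 0} := by
  ext x
  simp only [Finset.mem_image, Finset.mem_univ, true_and, Finset.mem_singleton]
  constructor
  · rintro ⟨i, rfl⟩; rw [Subsingleton.elim i 0]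
  · rintro rfl; exact ⟨0, rfl⟩

lemma image_fin_two (w : Fin 2 → V) : Finset.image w Finset.univ = {w 0, w 1} := by
  ext x
  simp only [Finset.mem_image, Finset.mem_univ, true_and, Finset.mem_insert,
    Finset.mem_singleton]
  constructor
  · rintro ⟨i, rfl⟩
    induction i using Fin.cases with
    | zero => left; rfl
    | succ y => right; rw [Subsingleton.elim y 0]; rfl
  · rintro (rfl | rfl)
    · exact ⟨0, rfl⟩
    · exact ⟨1, rfl⟩

lemma fin_one_injective (w : Fin 1 → V) : Function.Injective w :=
  fun a b _ => Subsingleton.elim a b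

lemma fin_two_injective_iff (w : Fin 2 → V) : Function.Injective w ↔ w 0 ≠ w 1 := by
  constructor
  · intro h hc
    have := h hc
    simp [Fin.ext_iff] at this
  · intro h a b hab
    fin_cases a <;> fin_cases b <;> simp_all

lemma link_isOSimp_one {τ : Fin k → V} (hτ : X.IsOSimp τ) (w : Fin 1 → V) :
    (X.link (Finset.image τ Finset.univ)).IsOSimp w ↔ X.IsOSimp (Fin.cons (w 0) τ) := by
  set s := Finset.image τ Finset.univ with hsdef
  constructor
  · rintro ⟨-, hface⟩
    rw [image_fin_one] at hface
    rcases Finset.mem_insert.mp hface with h | h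
    · exact absurd h (Finset.singleton_ne_empty _)
    · rw [Finset.mem_filter] at h
      obtain ⟨hXf, hdisj, hunion⟩ := h
      rw [isOSimp_cons_iff hτ]
      refine ⟨Finset.disjoint_singleton_right.mp hdisj, ?_⟩
      rw [show insert (w 0) s = s ∪ {w 0} from by rw [Finset.union_comm, ← Finset.insert_eq]]
      exact hunion
  · intro h
    rw [isOSimp_cons_iff hτ] at h
    refine ⟨fin_one_injective w, ?_⟩
    rw [image_fin_one]
    refine Finset.mem_insert.mpr (Or.inr (Finset.mem_filter.mpr ⟨?_, ?_, ?_⟩))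
    · refine X.down_closed _ h.2 _ ?_
      intro x hx
      rw [Finset.mem_singleton] at hx
      subst hx
      exact Finset.mem_insert_self _ _
    · exact Finset.disjoint_singleton_right.mpr h.1
    · rw [Finset.union_comm, ← Finset.insert_eq]
      exact h.2

lemma link_wt_one {τ : Fin k → V} (hτ : X.IsOSimp τ) (w : Fin 1 → V) :
    (X.link (Finset.image τ Finset.univ)).wt (linkWt m (Finset.image τ Finset.univ)) w =
      X.wt m (Fin.cons (w 0) τ) := by
  unfold SComplex.wt
  by_cases h : X.IsOSimp (Fin.cons (w 0) τ)
  · rw [if_pos ((link_isOSimp_one hτ w).mpr h), if_pos h, image_fin_one, image_cons]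
    show linkWt m _ {w 0} = m _
    unfold SComplex.linkWt
    rw [Finset.union_comm, ← Finset.insert_eq]
  · rw [if_neg (fun hc => h ((link_isOSimp_one hτ w).mp hc)), if_neg h]

lemma insert_insert_eq_union (a b : V) (s : Finset V) :
    insert a (insert b s) = s ∪ {a, b} := by
  ext x
  simp only [Finset.mem_insert, Finset.mem_union, Finset.mem_singleton]
  tauto

lemma link_isOSimp_two {τ : Fin k → V} (hτ : X.IsOSimp τ) (w : Fin 2 → V) :
    (X.link (Finset.image τ Finset.univ)).IsOSimp w ↔
      X.IsOSimp (Fin.cons (w 0) (Fin.cons (w 1) τ)) := by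
  set s := Finset.image τ Finset.univ with hsdef
  constructor
  · rintro ⟨hinj, hface⟩
    rw [image_fin_two] at hface
    have hne : w 0 ≠ w 1 := (fin_two_injective_iff w).mp hinj
    rcases Finset.mem_insert.mp hface with h | h
    · exact absurd (h ▸ Finset.mem_insert_self (w 0) {w 1}) (Finset.notMem_empty _)
    · rw [Finset.mem_filter] at h
      obtain ⟨hXf, hdisj, hunion⟩ := h
      have hw0s : w 0 ∉ s := Finset.disjoint_right.mp hdisj (Finset.mem_insert_self _ _)
      have hw1s : w 1 ∉ s := Finset.disjoint_right.mp hdisj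
        (Finset.mem_insert.mpr (Or.inr (Finset.mem_singleton_self _)))
      have hinner : X.IsOSimp (Fin.cons (w 1) τ) := by
        rw [isOSimp_cons_iff hτ]
        refine ⟨hw1s, X.down_closed _ hunion _ ?_⟩
        rw [← insert_insert_eq_union]
        intro x hx
        rcases Finset.mem_insert.mp hx with rfl | hx'
        · exact Finset.mem_insert.mpr (Or.inr (Finset.mem_insert_self _ _))
        · exact Finset.mem_insert.mpr (Or.inr (Finset.mem_insert.mpr (Or.inr hx')))
      rw [isOSimp_cons_iff hinner, image_cons]
      refine ⟨?_, ?_⟩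
      · intro hc
        rcases Finset.mem_insert.mp hc with h' | h'
        · exact hne h'
        · exact hw0s h'
      · rw [insert_insert_eq_union]
        exact hunion
  · intro h
    have hinner : X.IsOSimp (Fin.cons (w 1) τ) := X.isOSimp_of_cons h
    rw [isOSimp_cons_iff hinner, image_cons] at h
    rw [isOSimp_cons_iff hτ] at hinner
    have hne : w 0 ≠ w 1 := fun hc => h.1 (hc ▸ Finset.mem_insert_self _ _)
    have hw0s : w 0 ∉ s := fun hc => h.1 (Finset.mem_insert.mpr (Or.inr hc))
    refine ⟨(fin_two_injective_iff w).mpr hne, ?_⟩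
    rw [image_fin_two]
    refine Finset.mem_insert.mpr (Or.inr (Finset.mem_filter.mpr ⟨?_, ?_, ?_⟩))
    · refine X.down_closed _ h.2 _ ?_
      intro x hx
      rcases Finset.mem_insert.mp hx with rfl | hx'
      · exact Finset.mem_insert_self _ _
      · rw [Finset.mem_singleton] at hx'
        subst hx'
        exact Finset.mem_insert.mpr (Or.inr (Finset.mem_insert_self _ _))
    · rw [Finset.disjoint_right]
      intro a ha
      rcases Finset.mem_insert.mp ha with rfl | ha'
      · exact hw0s
      · rw [Finset.mem_singleton] at ha'
        subst ha'
        exact hinner.1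
    · rw [← insert_insert_eq_union]
      exact h.2

lemma link_wt_two {τ : Fin k → V} (hτ : X.IsOSimp τ) (w : Fin 2 → V) :
    (X.link (Finset.image τ Finset.univ)).wt (linkWt m (Finset.image τ Finset.univ)) w =
      X.wt m (Fin.cons (w 0) (Fin.cons (w 1) τ)) := by
  unfold SComplex.wt
  by_cases h : X.IsOSimp (Fin.cons (w 0) (Fin.cons (w 1) τ))
  · rw [if_pos ((link_isOSimp_two hτ w).mpr h), if_pos h, image_fin_two, image_cons, image_cons]
    show linkWt m _ {w 0, w 1} = m _
    unfold SComplex.linkWt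
    rw [insert_insert_eq_union]
  · rw [if_neg (fun hc => h ((link_isOSimp_two hτ w).mp hc)), if_neg h]

/-! #### Linearity of the operators -/

lemma dOp_add (φ ψ : (Fin j → V) → ℝ) : dOp (φ + ψ) = dOp φ + dOp ψ := by
  funext σ
  simp only [dOp, Pi.add_apply, mul_add, Finset.sum_add_distrib]

lemma dOp_smul (c : ℝ) (φ : (Fin j → V) → ℝ) : dOp (c • φ) = c • dOp φ := by
  funext σ
  simp only [dOp, Pi.smul_apply, smul_eq_mul, Finset.mul_sum]
  apply Finset.sum_congr rfl
  intro i _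
  ring

lemma deltaOp_add (φ ψ : (Fin (j + 1) → V) → ℝ) :
    X.deltaOp m (φ + ψ) = X.deltaOp m φ + X.deltaOp m ψ := by
  funext τ
  simp only [SComplex.deltaOp, Pi.add_apply, mul_add, Finset.sum_add_distrib]

lemma deltaOp_smul (c : ℝ) (φ : (Fin (j + 1) → V) → ℝ) :
    X.deltaOp m (c • φ) = c • X.deltaOp m φ := by
  funext τ
  simp only [SComplex.deltaOp, Pi.smul_apply, smul_eq_mul, Finset.mul_sum]
  apply Finset.sum_congr rfl
  intro v _
  ring

lemma lapPlus_add (φ ψ : (Fin j → V) → ℝ) :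
    X.lapPlus m j (φ + ψ) = X.lapPlus m j φ + X.lapPlus m j ψ := by
  unfold SComplex.lapPlus
  rw [dOp_add, deltaOp_add]

lemma lapPlus_smul (c : ℝ) (φ : (Fin j → V) → ℝ) :
    X.lapPlus m j (c • φ) = c • X.lapPlus m j φ := by
  unfold SComplex.lapPlus
  rw [dOp_smul, deltaOp_smul]

lemma lapPlus_support {φ : (Fin j → V) → ℝ} {τ : Fin j → V} (h : ¬X.IsOSimp τ) :
    X.lapPlus m j φ τ = 0 :=
  deltaOp_support X m h

/-! #### The local spectral lemma -/

lemma innerF_one (Y : SComplex V) (mY : Finset V → ℝ) (g g' : (Fin 1 → V) → ℝ) :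
    Y.innerF mY 1 g g' = ∑ w : Fin 1 → V, Y.wt mY w * (g w * g' w) := by
  unfold SComplex.innerF
  simp

lemma dOp_two (g : (Fin 1 → V) → ℝ) (w : Fin 2 → V) :
    dOp g w = g (w ∘ (0 : Fin 2).succAbove) - g (w ∘ (1 : Fin 2).succAbove) := by
  simp [dOp, Fin.sum_univ_two]
  ring

lemma tuple1_eq (w : Fin 1 → V) : w = fun _ => w 0 := by
  funext x; rw [Subsingleton.elim x (0 : Fin 1)]

open scoped RealInnerProductSpace in
lemma local_spectral (Y : SComplex V) (mY : Finset V → ℝ)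
    (hpos : ∀ t ∈ Y.faces, 0 < mY t) (hconn : Y.SkelConnected)
    (lam kap : ℝ) (hlam0 : 0 ≤ lam) (hlk : lam ≤ kap)
    (hs : Y.specLapPlus mY 1 \ {0} ⊆ Set.Icc lam kap)
    (f : (Fin 1 → V) → ℝ) (hf : ∀ w, ¬Y.IsOSimp w → f w = 0) :
    Y.innerF mY 2 (dOp f) (dOp f) ≤ kap * Y.innerF mY 1 f f ∧
      (Y.innerF mY 1 f (fun w => if Y.IsOSimp w then (1 : ℝ) else 0) = 0 →
        lam * Y.innerF mY 1 f f ≤ Y.innerF mY 2 (dOp f) (dOp f)) := by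
  classical
  set ind : (Fin 1 → V) → ℝ := fun w => if Y.IsOSimp w then (1 : ℝ) else 0 with hind
  set sq : (Fin 1 → V) → ℝ := fun w => Real.sqrt (Y.wt mY w) with hsqdef
  have hsq_pos : ∀ w, Y.IsOSimp w → 0 < sq w := fun w hw => Real.sqrt_pos.mpr (wt_pos hpos hw)
  have hsq_zero : ∀ w, ¬Y.IsOSimp w → sq w = 0 := fun w hw => by
    rw [hsqdef]; simp [wt_eq_zero hw]
  have hsq_sq : ∀ w, sq w * sq w = Y.wt mY w := fun w =>
    Real.mul_self_sqrt (wt_nonneg Y mY hpos w)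
  set rc : (EuclideanSpace ℝ (Fin 1 → V)) → ((Fin 1 → V) → ℝ) :=
    fun u w => if Y.IsOSimp w then u w / sq w else 0 with hrc
  have hrc_supp : ∀ u w, ¬Y.IsOSimp w → rc u w = 0 := by
    intro u w hw; rw [hrc]; simp [hw]
  have hrc_add : ∀ u u', rc (u + u') = rc u + rc u' := by
    intro u u'
    funext w
    by_cases hw : Y.IsOSimp w
    · simp only [hrc, if_pos hw, Pi.add_apply]
      rw [show (u + u') w = u w + u' w from rfl, add_div]
    · simp [hrc, hw]
  have hrc_smul : ∀ (c : ℝ) u, rc (c • u) = c • rc u := by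
    intro c u
    funext w
    by_cases hw : Y.IsOSimp w
    · simp only [hrc, if_pos hw, Pi.smul_apply, smul_eq_mul]
      rw [show (c • u) w = c * u w from rfl, mul_div_assoc]
    · simp [hrc, hw]
  set T : EuclideanSpace ℝ (Fin 1 → V) →ₗ[ℝ] EuclideanSpace ℝ (Fin 1 → V) :=
    { toFun := fun u => (WithLp.toLp 2 (fun w => sq w * Y.lapPlus mY 1 (rc u) w) : EuclideanSpace ℝ (Fin 1 → V)),
      map_add' := by
        intro u u'
        ext w
        show sq w * Y.lapPlus mY 1 (rc (u + u')) w = sq w * Y.lapPlus mY 1 (rc u) w +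
          sq w * Y.lapPlus mY 1 (rc u') w
        rw [hrc_add, lapPlus_add]
        simp only [Pi.add_apply]
        ring
      map_smul' := by
        intro c u
        ext w
        show sq w * Y.lapPlus mY 1 (rc (c • u)) w = c * (sq w * Y.lapPlus mY 1 (rc u) w)
        rw [hrc_smul, lapPlus_smul]
        simp only [Pi.smul_apply, smul_eq_mul]
        ring } with hT
  have hT_apply : ∀ u w, T u w = sq w * Y.lapPlus mY 1 (rc u) w := fun u w => rfl
  -- the key conjugation identity
  have hkey : ∀ u u' : EuclideanSpace ℝ (Fin 1 → V),
      ⟪T u, u'⟫ = Y.innerF mY 2 (dOp (rc u)) (dOp (rc u')) := by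
    intro u u'
    have h1 : ⟪T u, u'⟫ = ∑ w : Fin 1 → V, T u w * u' w := by
      rw [PiLp.inner_apply]
      apply Finset.sum_congr rfl
      intro w _
      simp [RCLike.inner_apply]
      ring
    rw [h1]
    have h2 : ∀ w, T u w * u' w = Y.wt mY w * (Y.lapPlus mY 1 (rc u) w * rc u' w) := by
      intro w
      rw [hT_apply]
      by_cases hw : Y.IsOSimp w
      · rw [hrc]
        simp only [if_pos hw]
        rw [← hsq_sq w]
        have : sq w ≠ 0 := (hsq_pos w hw).ne'
        field_simp
      · rw [hrc_supp u' w hw, hsq_zero w hw]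
        ring
    rw [Finset.sum_congr rfl (fun w _ => h2 w)]
    have h3 : Y.innerF mY 1 (Y.lapPlus mY 1 (rc u)) (rc u') =
        ∑ w : Fin 1 → V, Y.wt mY w * (Y.lapPlus mY 1 (rc u) w * rc u' w) :=
      innerF_one Y mY _ _
    rw [← h3]
    show Y.innerF mY 1 (Y.deltaOp mY (dOp (rc u))) (rc u') = _
    exact adjoint_delta_d hpos (dOp (rc u)) ((antisym_fin_one (rc u)).comp_dOp) (rc u')
  have hsymm : T.IsSymmetric := by
    intro u u'
    rw [hkey u u', real_inner_comm, hkey u' u, innerF_comm]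
  have hnrank : Module.finrank ℝ (EuclideanSpace ℝ (Fin 1 → V)) =
      Fintype.card (Fin 1 → V) := finrank_euclideanSpace
  set b := hsymm.eigenvectorBasis hnrank with hb
  set ev := hsymm.eigenvalues hnrank with hev
  have heig : ∀ i, T (b i) = ev i • b i := fun i =>
    (hsymm.hasEigenvector_eigenvectorBasis hnrank i).apply_eq_smul
  have hbne : ∀ i, b i ≠ 0 := fun i => (hsymm.hasEigenvector_eigenvectorBasis hnrank i).right
  -- each eigenvalue is 0 or in [lam, kap]
  have hspec : ∀ i, ev i = 0 ∨ (lam ≤ ev i ∧ ev i ≤ kap) := by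
    intro i
    by_cases h0 : ev i = 0
    · exact Or.inl h0
    · right
      set e := rc (b i) with he
      have hbw : ∀ w, ¬Y.IsOSimp w → b i w = 0 := by
        intro w hw
        have h1 : T (b i) w = 0 := by
          rw [hT_apply, lapPlus_support hw, mul_zero]
        rw [heig i] at h1
        have h2 : (ev i • b i) w = ev i * b i w := rfl
        rw [h2] at h1
        exact (mul_eq_zero.mp h1).resolve_left h0
      have hbw2 : ∀ w, b i w = sq w * e w := by
        intro w
        by_cases hw : Y.IsOSimp w
        · rw [he, hrc]
          simp only [if_pos hw]
          rw [mul_div_cancel₀ _ (hsq_pos w hw).ne']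
        · rw [hbw w hw, he, hrc_supp _ w hw, mul_zero]
      have heige : Y.lapPlus mY 1 e = ev i • e := by
        funext w
        by_cases hw : Y.IsOSimp w
        · have h1 : T (b i) w = ev i * b i w := by rw [heig i]; rfl
          rw [hT_apply, ← he, hbw2 w] at h1
          have h2 : sq w ≠ 0 := (hsq_pos w hw).ne'
          have h3 : sq w * Y.lapPlus mY 1 e w = sq w * (ev i * e w) := by rw [h1]; ring
          have h4 := mul_left_cancel₀ h2 h3
          rw [Pi.smul_apply, smul_eq_mul, h4]
        · rw [lapPlus_support hw, Pi.smul_apply, smul_eq_mul, he, hrc_supp _ w hw, mul_zero]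
      have hene : e ≠ 0 := by
        intro hc
        apply hbne i
        ext w
        rw [hbw2 w, show e w = 0 from by rw [hc]; rfl, mul_zero]
        rfl
      have hmem : ev i ∈ Y.specLapPlus mY 1 := by
        exact ⟨e, ⟨antisym_fin_one e, fun w hw => hrc_supp _ w hw⟩, hene, heige⟩
      have := hs ⟨hmem, h0⟩
      exact ⟨this.1, this.2⟩
  -- kernel eigenvectors are constant
  have hker : ∀ i, ev i = 0 → ∃ c : ℝ, rc (b i) = fun w => c * ind w := by
    intro i h0
    set e := rc (b i) with he
    have hz : Y.innerF mY 2 (dOp e) (dOp e) = 0 := by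
      rw [← hkey (b i) (b i), heig i, h0]
      rw [show ((0 : ℝ) • b i) = 0 from zero_smul ℝ (b i), inner_zero_left]
    have hterm : ∀ w : Fin 2 → V, Y.IsOSimp w → dOp e w = 0 := by
      intro w hw
      have hnn : ∀ w' : Fin 2 → V, w' ∈ Finset.univ →
          0 ≤ Y.wt mY w' / (Nat.factorial 2 : ℝ) * (dOp e w' * dOp e w') := by
        intro w' _
        apply mul_nonneg (div_nonneg (wt_nonneg Y mY hpos w') (by norm_num))
          (mul_self_nonneg _)
      have := (Finset.sum_eq_zero_iff_of_nonneg hnn).mp hz w (Finset.mem_univ w)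
      have hwt : 0 < Y.wt mY w := wt_pos hpos hw
      have h2 : dOp e w * dOp e w = 0 := by
        by_contra hc
        apply hc
        have hne : Y.wt mY w / (Nat.factorial 2 : ℝ) ≠ 0 := by positivity
        exact (mul_eq_zero.mp this).resolve_left hne
      exact mul_self_eq_zero.mp h2
    -- vertex values
    set g : V → ℝ := fun v => e (fun _ => v) with hg
    have hedge : ∀ u v : V, Y.skeleton.Adj u v → g u = g v := by
      intro u v huv
      obtain ⟨hne, hface⟩ := huv
      set w : Fin 2 → V := fun i => if i = 0 then u else v with hw
      have hw0 : w 0 = u := rfl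
      have hw1 : w 1 = v := rfl
      have hosimp : Y.IsOSimp w := by
        refine ⟨(fin_two_injective_iff w).mpr (by rw [hw0, hw1]; exact hne), ?_⟩
        rw [image_fin_two, hw0, hw1]
        exact hface
      have := hterm w hosimp
      rw [dOp_two] at this
      have hc0 : w ∘ (0 : Fin 2).succAbove = fun _ => v := by
        funext x
        rw [Subsingleton.elim x (0 : Fin 1)]
        rfl
      have hc1 : w ∘ (1 : Fin 2).succAbove = fun _ => u := by
        funext x
        rw [Subsingleton.elim x (0 : Fin 1)]
        rfl
      rw [hc0, hc1] at this
      rw [hg]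
      simp only
      linarith [this]
    have hreach : ∀ u v : V, Y.skeleton.Reachable u v → g u = g v := by
      intro u v huv
      obtain ⟨p⟩ := huv
      induction p with
      | nil => rfl
      | cons h q ih => exact (hedge _ _ h).trans ih
    by_cases hex : ∃ v0 : V, ({v0} : Finset V) ∈ Y.faces
    · obtain ⟨v0, hv0⟩ := hex
      refine ⟨g v0, ?_⟩
      funext w
      by_cases hw : Y.IsOSimp w
      · have hv : ({w 0} : Finset V) ∈ Y.faces := by
          have := hw.2
          rw [image_fin_one] at this
          exact this
        have h1 : e w = g (w 0) := by rw [hg]; simp only; rw [← tuple1_eq w]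
        rw [h1, hreach (w 0) v0 (hconn _ _ hv hv0), hind]
        simp [hw]
      · rw [he, hrc_supp _ w hw, hind]
        simp [hw]
    · refine ⟨0, ?_⟩
      funext w
      by_cases hw : Y.IsOSimp w
      · exact absurd ⟨w 0, by rw [← image_fin_one w]; exact hw.2⟩ hex
      · rw [he, hrc_supp _ w hw]
        simp
  -- Parseval
  have hpars : ∀ u : EuclideanSpace ℝ (Fin 1 → V),
      ⟪T u, u⟫ = ∑ i, ev i * ⟪u, b i⟫ ^ 2 := by
    intro u
    rw [← b.sum_inner_mul_inner (T u) u]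
    apply Finset.sum_congr rfl
    intro i _
    have h1 : ⟪T u, b i⟫ = ev i * ⟪u, b i⟫ := by
      rw [hsymm u (b i), heig i, real_inner_smul_right]
    rw [h1, real_inner_comm (b i) u]
    ring
  have hnorm : ∀ u : EuclideanSpace ℝ (Fin 1 → V), ⟪u, u⟫ = ∑ i, ⟪u, b i⟫ ^ 2 := by
    intro u
    rw [← b.sum_inner_mul_inner u u]
    apply Finset.sum_congr rfl
    intro i _
    rw [real_inner_comm (b i) u]
    ring
  -- build u_f
  set uf : EuclideanSpace ℝ (Fin 1 → V) := WithLp.toLp 2 (fun w => sq w * f w : (Fin 1 → V) → ℝ) with huf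
  have hrcf : rc uf = f := by
    funext w
    by_cases hw : Y.IsOSimp w
    · rw [hrc]
      simp only [if_pos hw]
      rw [show uf w = sq w * f w from rfl, mul_div_cancel_left₀ _ (hsq_pos w hw).ne']
    · rw [hrc_supp _ w hw, hf w hw]
  have hTuf : ⟪T uf, uf⟫ = Y.innerF mY 2 (dOp f) (dOp f) := by
    rw [hkey uf uf, hrcf]
  have hufuf : ⟪uf, uf⟫ = Y.innerF mY 1 f f := by
    rw [PiLp.inner_apply, innerF_one]
    apply Finset.sum_congr rfl
    intro w _
    rw [show (inner ℝ (uf w) (uf w) : ℝ) = uf w * uf w from by simp [RCLike.inner_apply]; ring]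
    rw [show uf w = sq w * f w from rfl, ← hsq_sq w]
    ring
  constructor
  · -- upper bound
    rw [← hTuf, ← hufuf, hpars uf, hnorm uf, Finset.mul_sum]
    apply Finset.sum_le_sum
    intro i _
    apply mul_le_mul_of_nonneg_right _ (sq_nonneg _)
    rcases hspec i with h | h
    · rw [h]; exact le_trans hlam0 hlk
    · exact h.2
  · -- lower bound
    intro horth
    have hcoef : ∀ i, ev i = 0 → ⟪uf, b i⟫ = 0 := by
      intro i h0
      obtain ⟨c, hc⟩ := hker i h0
      have h1 : ⟪uf, b i⟫ = ∑ w : Fin 1 → V, uf w * b i w := by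
        rw [PiLp.inner_apply]
        apply Finset.sum_congr rfl
        intro w _
        simp [RCLike.inner_apply]
        ring
      rw [h1]
      have h2 : ∀ w : Fin 1 → V, uf w * b i w = c * (Y.wt mY w * (f w * ind w)) := by
        intro w
        by_cases hw : Y.IsOSimp w
        · have hbw : b i w = sq w * rc (b i) w := by
            rw [hrc]
            simp only [if_pos hw]
            rw [mul_div_cancel₀ _ (hsq_pos w hw).ne']
          rw [show uf w = sq w * f w from rfl, hbw, hc]
          rw [← hsq_sq w]
          ring
        · rw [show uf w = sq w * f w from rfl, hf w hw]
          rw [wt_eq_zero hw]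
          ring
      rw [Finset.sum_congr rfl (fun w _ => h2 w), ← Finset.mul_sum]
      have h3 : ∑ w : Fin 1 → V, Y.wt mY w * (f w * ind w) = Y.innerF mY 1 f ind := by
        rw [innerF_one]
      rw [h3, horth, mul_zero]
    rw [← hTuf, ← hufuf, hpars uf, hnorm uf, Finset.mul_sum]
    apply Finset.sum_le_sum
    intro i _
    rcases hspec i with h | h
    · rw [h, hcoef i h]
      norm_num
    · exact mul_le_mul_of_nonneg_right h.1 (sq_nonneg _)

/-! #### Globalization helpers -/

lemma sum_fin_one (F : (Fin 1 → V) → ℝ) :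
    ∑ w : Fin 1 → V, F w = ∑ v : V, F (fun _ => v) := by
  symm
  apply Fintype.sum_bijective (fun v : V => (fun _ => v : Fin 1 → V))
  · constructor
    · intro a b hab
      exact congrFun hab 0
    · intro w
      exact ⟨w 0, (tuple1_eq w).symm⟩
  · intro v; rfl

lemma innerF_two (Y : SComplex V) (mY : Finset V → ℝ) (g g' : (Fin 2 → V) → ℝ) :
    Y.innerF mY 2 g g' = ∑ w : Fin 2 → V, Y.wt mY w / 2 * (g w * g' w) := by
  unfold SComplex.innerF
  norm_num [Nat.factorial]

lemma cons2_comp0 (u : V) (w' : Fin 1 → V) :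
    (Fin.cons u w' : Fin 2 → V) ∘ (0 : Fin 2).succAbove = w' := by
  rw [Fin.succAbove_zero, cons_comp_succ]

lemma cons2_comp1 (u : V) (w' : Fin 1 → V) :
    (Fin.cons u w' : Fin 2 → V) ∘ (1 : Fin 2).succAbove = fun _ => u := by
  funext x
  rw [Subsingleton.elim x (0 : Fin 1)]
  rfl

lemma cons2_at1 (u : V) (w' : Fin 1 → V) : (Fin.cons u w' : Fin 2 → V) 1 = w' 0 := rfl

lemma cons_cons_swap (u v : V) (τ : Fin k → V) :
    Fin.cons v (Fin.cons u τ) = (Fin.cons u (Fin.cons v τ) : Fin (k + 2) → V) ∘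
      (Equiv.swap (0 : Fin (k + 2)) 1) := by
  funext x
  induction x using Fin.cases with
  | zero => simp
  | succ y =>
    induction y using Fin.cases with
    | zero => simp
    | succ z =>
      have hz : (Equiv.swap (0 : Fin (k + 2)) 1) z.succ.succ = z.succ.succ := by
        apply Equiv.swap_apply_of_ne_of_ne <;> simp [Fin.ext_iff]
      simp [hz]

lemma loc_supported {φ : (Fin (k + 1) → V) → ℝ} (hφs : ∀ σ, ¬X.IsOSimp σ → φ σ = 0)
    (τ : Fin k → V) :
    ∀ w : Fin 1 → V, ¬(X.link (Finset.image τ Finset.univ)).IsOSimp w →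
      φ (Fin.cons (w 0) τ) = 0 := by
  intro w hw
  by_cases hτ : X.IsOSimp τ
  · exact hφs _ (fun hc => hw ((link_isOSimp_one hτ w).mpr hc))
  · exact hφs _ (fun hc => hτ (X.isOSimp_of_cons hc))

lemma loc_inner_one {τ : Fin k → V} (hτ : X.IsOSimp τ) (g g' : (Fin 1 → V) → ℝ) :
    (X.link (Finset.image τ Finset.univ)).innerF (linkWt m (Finset.image τ Finset.univ)) 1 g g'
      = ∑ v : V, X.wt m (Fin.cons v τ) * (g (fun _ => v) * g' (fun _ => v)) := by
  rw [innerF_one, sum_fin_one]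
  apply Finset.sum_congr rfl
  intro v _
  rw [show (X.link (Finset.image τ Finset.univ)).wt
    (linkWt m (Finset.image τ Finset.univ)) (fun _ => v) = X.wt m (Fin.cons v τ) from
    link_wt_one hτ (fun _ => v)]

lemma loc_inner_two {τ : Fin k → V} (hτ : X.IsOSimp τ) (g g' : (Fin 2 → V) → ℝ) :
    (X.link (Finset.image τ Finset.univ)).innerF (linkWt m (Finset.image τ Finset.univ)) 2 g g'
      = ∑ u : V, ∑ v : V, X.wt m (Fin.cons u (Fin.cons v τ)) / 2 *
        (g (Fin.cons u (fun _ => v)) * g' (Fin.cons u (fun _ => v))) := by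
  rw [innerF_two, sum_cons_decomp (fun w => (X.link (Finset.image τ Finset.univ)).wt
    (linkWt m (Finset.image τ Finset.univ)) w / 2 * (g w * g' w))]
  apply Finset.sum_congr rfl
  intro u _
  rw [sum_fin_one (fun w' => (X.link (Finset.image τ Finset.univ)).wt
    (linkWt m (Finset.image τ Finset.univ)) (Fin.cons u w') / 2 *
    (g (Fin.cons u w') * g' (Fin.cons u w')))]
  apply Finset.sum_congr rfl
  intro v _
  rw [show (X.link (Finset.image τ Finset.univ)).wt
    (linkWt m (Finset.image τ Finset.univ)) (Fin.cons u (fun _ => v)) =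
    X.wt m (Fin.cons ((Fin.cons u (fun _ => v) : Fin 2 → V) 0)
      (Fin.cons ((Fin.cons u (fun _ => v) : Fin 2 → V) 1) τ)) from
    link_wt_two hτ (Fin.cons u (fun _ => v))]
  rfl

lemma dOp_sub (φ ψ : (Fin j → V) → ℝ) : dOp (φ - ψ) = dOp φ - dOp ψ := by
  funext σ
  simp only [dOp, Pi.sub_apply, mul_sub, Finset.sum_sub_distrib]

lemma triple_sum_div (F : (Fin k → V) → V → V → ℝ) (c : ℝ) :
    ∑ τ : Fin k → V, ∑ u : V, ∑ v : V, F τ u v / c =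
      (∑ τ : Fin k → V, ∑ u : V, ∑ v : V, F τ u v) / c := by
  rw [Finset.sum_div]
  apply Finset.sum_congr rfl
  intro τ _
  rw [Finset.sum_div]
  apply Finset.sum_congr rfl
  intro u _
  rw [Finset.sum_div]

lemma triple_comm1 (F : (Fin k → V) → V → V → ℝ) :
    ∑ τ : Fin k → V, ∑ u : V, ∑ v : V, F τ u v =
      ∑ u : V, ∑ v : V, ∑ τ : Fin k → V, F τ u v := by
  rw [Finset.sum_comm]
  apply Finset.sum_congr rfl
  intro u _
  rw [Finset.sum_comm]

lemma triple_comm2 (F : (Fin k → V) → V → V → ℝ) :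
    ∑ τ : Fin k → V, ∑ u : V, ∑ v : V, F τ u v =
      ∑ v : V, ∑ u : V, ∑ τ : Fin k → V, F τ u v := by
  rw [triple_comm1, Finset.sum_comm]

/-- `G1`: the sum over `τ` of `⟨f_τ, f_τ⟩` equals `(k+1)! ⟨φ,φ⟩`. -/
lemma global_G1 {φ : (Fin (k + 1) → V) → ℝ} (hφs : ∀ σ, ¬X.IsOSimp σ → φ σ = 0) :
    ∑ τ : Fin k → V, (X.link (Finset.image τ Finset.univ)).innerF
        (linkWt m (Finset.image τ Finset.univ)) 1
        (fun w => φ (Fin.cons (w 0) τ)) (fun w => φ (Fin.cons (w 0) τ)) =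
      (Nat.factorial (k + 1) : ℝ) * X.innerF m (k + 1) φ φ := by
  have per_tau : ∀ τ : Fin k → V, (X.link (Finset.image τ Finset.univ)).innerF
      (linkWt m (Finset.image τ Finset.univ)) 1
      (fun w => φ (Fin.cons (w 0) τ)) (fun w => φ (Fin.cons (w 0) τ)) =
      ∑ v : V, X.wt m (Fin.cons v τ) * (φ (Fin.cons v τ) * φ (Fin.cons v τ)) := by
    intro τ
    by_cases hτ : X.IsOSimp τ
    · exact loc_inner_one hτ _ _
    · rw [innerF_one]
      rw [Finset.sum_eq_zero, Finset.sum_eq_zero]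
      · intro v _
        rw [wt_cons_eq_zero X m hτ v, zero_mul]
      · intro w _
        rw [hφs _ (fun hc => hτ (X.isOSimp_of_cons hc))]
        ring
  rw [Finset.sum_congr rfl (fun τ _ => per_tau τ), Finset.sum_comm, factorial_mul_innerF,
    sum_cons_decomp (fun σ => X.wt m σ * (φ σ * φ σ))]

/-- `G3`: the sum over `τ` of `⟨d f_τ, d f_τ⟩` equals `k!(k⟨φ,φ⟩ + ⟨dφ,dφ⟩)`. -/
lemma global_G3 (hm : X.IsBalanced n m) (hmp : ∀ s ∈ X.faces, 0 < m s)
    {k : ℕ} (hkn1 : k + 1 ≤ n) {φ : (Fin (k + 1) → V) → ℝ}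
    (hφa : Antisym (k + 1) φ) (hφs : ∀ σ, ¬X.IsOSimp σ → φ σ = 0) :
    ∑ τ : Fin k → V, (X.link (Finset.image τ Finset.univ)).innerF
        (linkWt m (Finset.image τ Finset.univ)) 2
        (dOp (fun w => φ (Fin.cons (w 0) τ))) (dOp (fun w => φ (Fin.cons (w 0) τ))) =
      (Nat.factorial k : ℝ) * ((k : ℝ) * X.innerF m (k + 1) φ φ +
        X.innerF m (k + 2) (dOp φ) (dOp φ)) := by
  have per_tau : ∀ τ : Fin k → V, (X.link (Finset.image τ Finset.univ)).innerF
      (linkWt m (Finset.image τ Finset.univ)) 2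
      (dOp (fun w => φ (Fin.cons (w 0) τ))) (dOp (fun w => φ (Fin.cons (w 0) τ))) =
      ∑ u : V, ∑ v : V, X.wt m (Fin.cons u (Fin.cons v τ)) / 2 *
        ((φ (Fin.cons v τ) - φ (Fin.cons u τ)) * (φ (Fin.cons v τ) - φ (Fin.cons u τ))) := by
    intro τ
    have hval : ∀ u v : V, dOp (fun w => φ (Fin.cons (w 0) τ))
        (Fin.cons u (fun _ => v) : Fin 2 → V) =
        φ (Fin.cons v τ) - φ (Fin.cons u τ) := by
      intro u v
      rw [dOp_two, cons2_comp0, cons2_comp1]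
    by_cases hτ : X.IsOSimp τ
    · rw [loc_inner_two hτ]
      apply Finset.sum_congr rfl
      intro u _
      apply Finset.sum_congr rfl
      intro v _
      rw [hval u v]
    · rw [innerF_two]
      rw [Finset.sum_eq_zero, Finset.sum_eq_zero]
      · intro u _
        apply Finset.sum_eq_zero
        intro v _
        rw [wt_cons_eq_zero X m (fun hc => hτ (X.isOSimp_of_cons hc)) u, zero_div, zero_mul]
      · intro w _
        have hz : dOp (fun w' => φ (Fin.cons (w' 0) τ)) w = 0 := by
          unfold dOp
          apply Finset.sum_eq_zero
          intro i _
          show (-1 : ℝ) ^ (i : ℕ) * φ (Fin.cons ((w ∘ i.succAbove) 0) τ) = 0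
          rw [hφs _ (fun hc => hτ (X.isOSimp_of_cons hc)), mul_zero]
        rw [hz]
        ring
  rw [Finset.sum_congr rfl (fun τ _ => per_tau τ)]
  -- expand the square
  have expand : ∀ (τ : Fin k → V) (u v : V),
      X.wt m (Fin.cons u (Fin.cons v τ)) / 2 *
        ((φ (Fin.cons v τ) - φ (Fin.cons u τ)) * (φ (Fin.cons v τ) - φ (Fin.cons u τ))) =
      X.wt m (Fin.cons u (Fin.cons v τ)) * (φ (Fin.cons v τ) * φ (Fin.cons v τ)) / 2 +
        X.wt m (Fin.cons u (Fin.cons v τ)) * (φ (Fin.cons u τ) * φ (Fin.cons u τ)) / 2 -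
        X.wt m (Fin.cons u (Fin.cons v τ)) * (φ (Fin.cons u τ) * φ (Fin.cons v τ)) := by
    intro τ u v
    ring
  have split : ∑ τ : Fin k → V, ∑ u : V, ∑ v : V,
      (X.wt m (Fin.cons u (Fin.cons v τ)) / 2 *
        ((φ (Fin.cons v τ) - φ (Fin.cons u τ)) * (φ (Fin.cons v τ) - φ (Fin.cons u τ)))) =
      (∑ τ : Fin k → V, ∑ u : V, ∑ v : V,
        X.wt m (Fin.cons u (Fin.cons v τ)) * (φ (Fin.cons v τ) * φ (Fin.cons v τ)) / 2) +
      (∑ τ : Fin k → V, ∑ u : V, ∑ v : V,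
        X.wt m (Fin.cons u (Fin.cons v τ)) * (φ (Fin.cons u τ) * φ (Fin.cons u τ)) / 2) -
      (∑ τ : Fin k → V, ∑ u : V, ∑ v : V,
        X.wt m (Fin.cons u (Fin.cons v τ)) * (φ (Fin.cons u τ) * φ (Fin.cons v τ))) := by
    rw [Finset.sum_congr rfl (fun τ _ => Finset.sum_congr rfl (fun u _ =>
      Finset.sum_congr rfl (fun v _ => expand τ u v)))]
    simp only [Finset.sum_add_distrib, Finset.sum_sub_distrib]
  rw [split]
  -- S1
  have hS1 : ∑ τ : Fin k → V, ∑ u : V, ∑ v : V,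
      X.wt m (Fin.cons u (Fin.cons v τ)) * (φ (Fin.cons v τ) * φ (Fin.cons v τ)) =
      (Nat.factorial (k + 1) : ℝ) * X.innerF m (k + 1) φ φ := by
    rw [triple_comm1]
    rw [show ∑ u : V, ∑ v : V, ∑ τ : Fin k → V,
      X.wt m (Fin.cons u (Fin.cons v τ)) * (φ (Fin.cons v τ) * φ (Fin.cons v τ)) =
      ∑ u : V, ∑ σ : Fin (k + 1) → V, X.wt m (Fin.cons u σ) * (φ σ * φ σ) from
      Finset.sum_congr rfl (fun u _ =>
        (sum_cons_decomp (fun σ => X.wt m (Fin.cons u σ) * (φ σ * φ σ))).symm)]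
    exact ident_P hm hkn1 φ
  -- S2 = S1 by the swap symmetry
  have hswap : ∀ (τ : Fin k → V) (u v : V), X.wt m (Fin.cons v (Fin.cons u τ)) =
      X.wt m (Fin.cons u (Fin.cons v τ)) := by
    intro τ u v
    rw [cons_cons_swap u v τ, wt_comp_perm]
  have hS2 : ∑ τ : Fin k → V, ∑ u : V, ∑ v : V,
      X.wt m (Fin.cons u (Fin.cons v τ)) * (φ (Fin.cons u τ) * φ (Fin.cons u τ)) =
      (Nat.factorial (k + 1) : ℝ) * X.innerF m (k + 1) φ φ := by
    rw [triple_comm2]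
    rw [show ∑ v : V, ∑ u : V, ∑ τ : Fin k → V,
      X.wt m (Fin.cons u (Fin.cons v τ)) * (φ (Fin.cons u τ) * φ (Fin.cons u τ)) =
      ∑ v : V, ∑ σ : Fin (k + 1) → V, X.wt m (Fin.cons v σ) * (φ σ * φ σ) from ?_]
    · exact ident_P hm hkn1 φ
    · apply Finset.sum_congr rfl
      intro v _
      rw [show (∑ u : V, ∑ τ : Fin k → V, X.wt m (Fin.cons u (Fin.cons v τ)) *
        (φ (Fin.cons u τ) * φ (Fin.cons u τ))) = ∑ u : V, ∑ τ : Fin k → V,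
        X.wt m (Fin.cons v (Fin.cons u τ)) * (φ (Fin.cons u τ) * φ (Fin.cons u τ)) from
        Finset.sum_congr rfl (fun u _ => Finset.sum_congr rfl (fun τ _ => by rw [hswap]))]
      exact (sum_cons_decomp (fun σ => X.wt m (Fin.cons v σ) * (φ σ * φ σ))).symm
  -- S3 = Q
  have hS3 : ∑ τ : Fin k → V, ∑ u : V, ∑ v : V,
      X.wt m (Fin.cons u (Fin.cons v τ)) * (φ (Fin.cons u τ) * φ (Fin.cons v τ)) =
      ∑ u : V, ∑ σ : Fin (k + 1) → V,
        X.wt m (Fin.cons u σ) * (φ σ * φ (Fin.cons u (σ ∘ Fin.succ))) := by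
    rw [triple_comm1]
    apply Finset.sum_congr rfl
    intro u _
    rw [show (∑ v : V, ∑ τ : Fin k → V, X.wt m (Fin.cons u (Fin.cons v τ)) *
      (φ (Fin.cons u τ) * φ (Fin.cons v τ))) = ∑ v : V, ∑ τ : Fin k → V,
      X.wt m (Fin.cons u (Fin.cons v τ)) * (φ (Fin.cons v τ) *
        φ (Fin.cons u ((Fin.cons v τ : Fin (k + 1) → V) ∘ Fin.succ))) from
      Finset.sum_congr rfl (fun v _ => Finset.sum_congr rfl (fun τ _ => by
        rw [cons_comp_succ]; ring))]
    exact (sum_cons_decomp (fun σ => X.wt m (Fin.cons u σ) *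
      (φ σ * φ (Fin.cons u (σ ∘ Fin.succ))))).symm
  -- the Q identity from ident_d_sq
  have hQ : ∑ u : V, ∑ σ : Fin (k + 1) → V,
      X.wt m (Fin.cons u σ) * (φ σ * φ (Fin.cons u (σ ∘ Fin.succ))) =
      (Nat.factorial k : ℝ) * (X.innerF m (k + 1) φ φ - X.innerF m (k + 2) (dOp φ) (dOp φ)) := by
    have hident := ident_d_sq hmp φ hφa
    rw [ident_P hm hkn1 φ] at hident
    have hfact2 : (Nat.factorial (k + 2) : ℝ) = (k + 2 : ℝ) * ((k + 1 : ℝ) * (Nat.factorial k : ℝ)) := by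
      rw [Nat.factorial_succ, Nat.factorial_succ]
      push_cast
      ring
    have hfact1 : (Nat.factorial (k + 1) : ℝ) = (k + 1 : ℝ) * (Nat.factorial k : ℝ) := by
      rw [Nat.factorial_succ]
      push_cast
      ring
    rw [hfact2, hfact1] at hident
    have hk2 : (k + 2 : ℝ) ≠ 0 := by positivity
    have hk1 : (k + 1 : ℝ) ≠ 0 := by positivity
    have h2 := mul_left_cancel₀ hk2 (by linarith [hident] :
      (k + 2 : ℝ) * ((k + 1 : ℝ) * ((Nat.factorial k : ℝ) * X.innerF m (k + 2) (dOp φ) (dOp φ))) =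
      (k + 2 : ℝ) * ((k + 1 : ℝ) * (Nat.factorial k : ℝ) * X.innerF m (k + 1) φ φ -
        (k + 1 : ℝ) * ∑ u : V, ∑ σ : Fin (k + 1) → V,
          X.wt m (Fin.cons u σ) * (φ σ * φ (Fin.cons u (σ ∘ Fin.succ)))))
    have h3 := mul_left_cancel₀ hk1 (by linarith [h2] :
      (k + 1 : ℝ) * ((Nat.factorial k : ℝ) * X.innerF m (k + 2) (dOp φ) (dOp φ)) =
      (k + 1 : ℝ) * ((Nat.factorial k : ℝ) * X.innerF m (k + 1) φ φ -
        ∑ u : V, ∑ σ : Fin (k + 1) → V,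
          X.wt m (Fin.cons u σ) * (φ σ * φ (Fin.cons u (σ ∘ Fin.succ)))))
    linarith [h3]
  rw [triple_sum_div, triple_sum_div, hS1, hS2, hS3, hQ]
  have hfact1 : (Nat.factorial (k + 1) : ℝ) = (k + 1 : ℝ) * (Nat.factorial k : ℝ) := by
    rw [Nat.factorial_succ]
    push_cast
    ring
  rw [hfact1]
  ring

lemma innerF_smul_right (c : ℝ) (φ χ : (Fin j → V) → ℝ) :
    X.innerF m j φ (c • χ) = c * X.innerF m j φ χ := by
  rw [innerF_comm, innerF_smul_left, innerF_comm]

lemma innerF_sub_right (φ ψ χ : (Fin j → V) → ℝ) :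
    X.innerF m j χ (φ - ψ) = X.innerF m j χ φ - X.innerF m j χ ψ := by
  rw [innerF_comm, innerF_sub_left, innerF_comm φ χ, innerF_comm ψ χ]

lemma cfact (hmp : ∀ s ∈ X.faces, 0 < m s) {τ : Fin k → V}
    (φ : (Fin (k + 1) → V) → ℝ) :
    ∑ v : V, X.wt m (Fin.cons v τ) * φ (Fin.cons v τ) = X.wt m τ * X.deltaOp m φ τ := by
  unfold SComplex.deltaOp
  rw [Finset.mul_sum]
  apply Finset.sum_congr rfl
  intro v _
  rw [show X.wt m τ * (X.wt m (Fin.cons v τ) / X.wt m τ * φ (Fin.cons v τ)) =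
    (X.wt m τ * (X.wt m (Fin.cons v τ) / X.wt m τ)) * φ (Fin.cons v τ) from by ring,
    wt_mul_div_cancel hmp]

/-- The per-simplex localized spectral bounds. -/
lemma per_tau_bound (hm : X.IsBalanced n m) (hmp : ∀ s ∈ X.faces, 0 < m s)
    (hconn : X.AllLinksConnected n) {k : ℕ} (hkn : k < n)
    {lam kap : ℝ} (hlam0 : 0 ≤ lam) (hlk : lam ≤ kap)
    (hspec : ∀ τ : Fin k → V, X.IsOSimp τ →
      (X.link (Finset.image τ Finset.univ)).specLapPlus
          (linkWt m (Finset.image τ Finset.univ)) 1 \ {0} ⊆ Set.Icc lam kap)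
    {φ : (Fin (k + 1) → V) → ℝ} (hφs : ∀ σ, ¬X.IsOSimp σ → φ σ = 0)
    (τ : Fin k → V) :
    (0 ≤ (X.link (Finset.image τ Finset.univ)).innerF
        (linkWt m (Finset.image τ Finset.univ)) 1
        (fun w => φ (Fin.cons (w 0) τ)) (fun w => φ (Fin.cons (w 0) τ)) -
        X.wt m τ * (X.deltaOp m φ τ * X.deltaOp m φ τ)) ∧
    (lam * ((X.link (Finset.image τ Finset.univ)).innerF
        (linkWt m (Finset.image τ Finset.univ)) 1
        (fun w => φ (Fin.cons (w 0) τ)) (fun w => φ (Fin.cons (w 0) τ)) -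
        X.wt m τ * (X.deltaOp m φ τ * X.deltaOp m φ τ)) ≤
      (X.link (Finset.image τ Finset.univ)).innerF
        (linkWt m (Finset.image τ Finset.univ)) 2
        (dOp (fun w => φ (Fin.cons (w 0) τ))) (dOp (fun w => φ (Fin.cons (w 0) τ)))) ∧
    ((X.link (Finset.image τ Finset.univ)).innerF
        (linkWt m (Finset.image τ Finset.univ)) 2
        (dOp (fun w => φ (Fin.cons (w 0) τ))) (dOp (fun w => φ (Fin.cons (w 0) τ))) ≤
      kap * ((X.link (Finset.image τ Finset.univ)).innerF
        (linkWt m (Finset.image τ Finset.univ)) 1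
        (fun w => φ (Fin.cons (w 0) τ)) (fun w => φ (Fin.cons (w 0) τ)) -
        X.wt m τ * (X.deltaOp m φ τ * X.deltaOp m φ τ))) := by
  classical
  set s := Finset.image τ Finset.univ with hsdef
  set Y := X.link s with hY
  set mY := linkWt m s with hmY
  set f : (Fin 1 → V) → ℝ := fun w => φ (Fin.cons (w 0) τ) with hfdef
  set c := X.deltaOp m φ τ with hc
  by_cases hτ : X.IsOSimp τ
  · -- τ is an ordered simplex; apply the local spectral lemma
    have hposY : ∀ t ∈ Y.faces, 0 < mY t := linkWt_pos hmp hτ.2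
    have hconnY : Y.SkelConnected := by
      apply hconn.2 s hτ.2
      rw [hsdef, Finset.card_image_of_injective _ hτ.1, Finset.card_univ, Fintype.card_fin]
      exact hkn
    set ind : (Fin 1 → V) → ℝ := fun w => if Y.IsOSimp w then (1 : ℝ) else 0 with hinddef
    set g : (Fin 1 → V) → ℝ := f - c • ind with hgdef
    have hfind : Y.innerF mY 1 f ind = X.wt m τ * c := by
      rw [hY, hmY, hsdef, loc_inner_one hτ]
      rw [show (∑ v : V, X.wt m (Fin.cons v τ) * (f (fun _ => v) * ind (fun _ => v))) =
        ∑ v : V, X.wt m (Fin.cons v τ) * φ (Fin.cons v τ) from ?_]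
      · exact cfact hmp φ
      · apply Finset.sum_congr rfl
        intro v _
        by_cases hv : X.IsOSimp (Fin.cons v τ)
        · rw [show ind (fun _ => v) = 1 from by
            rw [hinddef]
            exact if_pos ((link_isOSimp_one hτ (fun _ => v)).mpr hv)]
          rw [show f (fun _ => v) = φ (Fin.cons v τ) from rfl]
          ring
        · rw [wt_eq_zero hv]
          ring
    have hindind : Y.innerF mY 1 ind ind = X.wt m τ := by
      rw [hY, hmY, hsdef, loc_inner_one hτ]
      rw [show (∑ v : V, X.wt m (Fin.cons v τ) * (ind (fun _ => v) * ind (fun _ => v))) =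
        ∑ v : V, X.wt m (Fin.cons v τ) from ?_]
      · exact sum_wt_cons hm (le_of_lt hkn) τ
      · apply Finset.sum_congr rfl
        intro v _
        by_cases hv : X.IsOSimp (Fin.cons v τ)
        · rw [show ind (fun _ => v) = 1 from by
            rw [hinddef]
            exact if_pos ((link_isOSimp_one hτ (fun _ => v)).mpr hv)]
          ring
        · rw [wt_eq_zero hv]
          ring
    have hgsupp : ∀ w, ¬Y.IsOSimp w → g w = 0 := by
      intro w hw
      rw [hgdef]
      simp only [Pi.sub_apply, Pi.smul_apply, smul_eq_mul]
      rw [show f w = 0 from loc_supported hφs τ w hw, show ind w = 0 from if_neg hw]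
      ring
    have hgorth : Y.innerF mY 1 g ind = 0 := by
      rw [hgdef, innerF_sub_left, innerF_smul_left, hfind, hindind]
      ring
    have hgg : Y.innerF mY 1 g g = Y.innerF mY 1 f f - X.wt m τ * (c * c) := by
      rw [hgdef, innerF_sub_left, innerF_smul_left, innerF_sub_right, innerF_sub_right,
        innerF_smul_right, innerF_smul_right, hfind, hindind, innerF_comm ind f, hfind]
      ring
    have hdgdf : Y.innerF mY 2 (dOp g) (dOp g) = Y.innerF mY 2 (dOp f) (dOp f) := by
      have hpoint : ∀ w, Y.IsOSimp w → dOp g w = dOp f w := by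
        intro w hw
        rw [hgdef, dOp_sub, dOp_smul]
        simp only [Pi.sub_apply, Pi.smul_apply, smul_eq_mul]
        have hindd : dOp ind w = 0 := by
          rw [dOp_two]
          rw [show ind (w ∘ (0 : Fin 2).succAbove) = 1 from
            if_pos (isOSimp_comp_succAbove Y hw 0)]
          rw [show ind (w ∘ (1 : Fin 2).succAbove) = 1 from
            if_pos (isOSimp_comp_succAbove Y hw 1)]
          ring
        rw [hindd]
        ring
      calc Y.innerF mY 2 (dOp g) (dOp g) = Y.innerF mY 2 (dOp f) (dOp g) :=
            innerF_congr_left _ hpoint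
        _ = Y.innerF mY 2 (dOp g) (dOp f) := innerF_comm _ _
        _ = Y.innerF mY 2 (dOp f) (dOp f) := innerF_congr_left _ hpoint
    have hloc := local_spectral Y mY hposY hconnY lam kap hlam0 hlk (hspec τ hτ) g hgsupp
    have hggn : 0 ≤ Y.innerF mY 1 g g := innerF_self_nonneg hposY g
    refine ⟨by rw [← hgg]; exact hggn, ?_, ?_⟩
    · rw [← hgg, ← hdgdf]
      exact hloc.2 hgorth
    · rw [← hgg, ← hdgdf]
      exact hloc.1
  · -- τ is not an ordered simplex; everything vanishes
    have hfz : ∀ w : Fin 1 → V, f w = 0 := fun w =>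
      hφs _ (fun hc' => hτ (X.isOSimp_of_cons hc'))
    have hff : Y.innerF mY 1 f f = 0 := by
      rw [innerF_one]
      apply Finset.sum_eq_zero
      intro w _
      rw [hfz w]
      ring
    have hdf : Y.innerF mY 2 (dOp f) (dOp f) = 0 := by
      rw [innerF_two]
      apply Finset.sum_eq_zero
      intro w _
      rw [dOp_two, hfz, hfz]
      ring
    rw [hff, hdf, wt_eq_zero hτ]
    norm_num

lemma innerF_add_right (φ ψ χ : (Fin j → V) → ℝ) :
    X.innerF m j χ (φ + ψ) = X.innerF m j χ φ + X.innerF m j χ ψ := by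
  rw [innerF_comm, innerF_add_left, innerF_comm φ χ, innerF_comm ψ χ]

/-- The master global inequality. -/
lemma garland_core (hm : X.IsBalanced n m) (hmp : ∀ s ∈ X.faces, 0 < m s)
    (hconn : X.AllLinksConnected n) {k : ℕ} (hkn1 : k + 1 ≤ n) (hkn : k < n)
    {lam kap : ℝ} (hlam0 : 0 ≤ lam) (hlk : lam ≤ kap)
    (hspec : ∀ τ : Fin k → V, X.IsOSimp τ →
      (X.link (Finset.image τ Finset.univ)).specLapPlus
          (linkWt m (Finset.image τ Finset.univ)) 1 \ {0} ⊆ Set.Icc lam kap)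
    {φ : (Fin (k + 1) → V) → ℝ} (hφa : Antisym (k + 1) φ)
    (hφs : ∀ σ, ¬X.IsOSimp σ → φ σ = 0) :
    (0 ≤ ((k : ℝ) + 1) * X.innerF m (k + 1) φ φ -
      X.innerF m k (X.deltaOp m φ) (X.deltaOp m φ)) ∧
    (lam * (((k : ℝ) + 1) * X.innerF m (k + 1) φ φ -
        X.innerF m k (X.deltaOp m φ) (X.deltaOp m φ)) ≤
      X.innerF m (k + 2) (dOp φ) (dOp φ) + (k : ℝ) * X.innerF m (k + 1) φ φ) ∧
    (X.innerF m (k + 2) (dOp φ) (dOp φ) + (k : ℝ) * X.innerF m (k + 1) φ φ ≤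
      kap * (((k : ℝ) + 1) * X.innerF m (k + 1) φ φ -
        X.innerF m k (X.deltaOp m φ) (X.deltaOp m φ))) := by
  classical
  set N := X.innerF m (k + 1) φ φ with hN
  set D := X.innerF m (k + 2) (dOp φ) (dOp φ) with hD
  set Del := X.innerF m k (X.deltaOp m φ) (X.deltaOp m φ) with hDel
  have hΔsum : ∑ τ : Fin k → V, X.wt m τ * (X.deltaOp m φ τ * X.deltaOp m φ τ) =
      (Nat.factorial k : ℝ) * Del := (factorial_mul_innerF _ _).symm
  have hG1 := global_G1 (m := m) hφs
  have hG3 := global_G3 hm hmp hkn1 hφa hφs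
  have hsub : ∑ τ : Fin k → V, ((X.link (Finset.image τ Finset.univ)).innerF
      (linkWt m (Finset.image τ Finset.univ)) 1
      (fun w => φ (Fin.cons (w 0) τ)) (fun w => φ (Fin.cons (w 0) τ)) -
      X.wt m τ * (X.deltaOp m φ τ * X.deltaOp m φ τ)) =
      (Nat.factorial (k + 1) : ℝ) * N - (Nat.factorial k : ℝ) * Del := by
    rw [Finset.sum_sub_distrib, hG1, hΔsum]
  have hper := fun τ : Fin k → V =>
    per_tau_bound hm hmp hconn hkn hlam0 hlk hspec hφs τ
  have h0 : 0 ≤ (Nat.factorial (k + 1) : ℝ) * N - (Nat.factorial k : ℝ) * Del := by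
    rw [← hsub]
    exact Finset.sum_nonneg (fun τ _ => (hper τ).1)
  have hlow : lam * ((Nat.factorial (k + 1) : ℝ) * N - (Nat.factorial k : ℝ) * Del) ≤
      (Nat.factorial k : ℝ) * ((k : ℝ) * N + D) := by
    rw [← hsub, ← hG3, Finset.mul_sum]
    exact Finset.sum_le_sum (fun τ _ => (hper τ).2.1)
  have hup : (Nat.factorial k : ℝ) * ((k : ℝ) * N + D) ≤
      kap * ((Nat.factorial (k + 1) : ℝ) * N - (Nat.factorial k : ℝ) * Del) := by
    rw [← hsub, ← hG3, Finset.mul_sum]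
    exact Finset.sum_le_sum (fun τ _ => (hper τ).2.2)
  have hfact1 : (Nat.factorial (k + 1) : ℝ) = ((k : ℝ) + 1) * (Nat.factorial k : ℝ) := by
    rw [Nat.factorial_succ]
    push_cast
    ring
  have hfpos : (0 : ℝ) < (Nat.factorial k : ℝ) := by
    exact_mod_cast Nat.factorial_pos k
  rw [hfact1] at h0 hlow hup
  refine ⟨?_, ?_, ?_⟩
  · have : (Nat.factorial k : ℝ) * (((k : ℝ) + 1) * N - Del) =
        ((k : ℝ) + 1) * (Nat.factorial k : ℝ) * N - (Nat.factorial k : ℝ) * Del := by ring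
    nlinarith [h0, hfpos]
  · have h1 : (Nat.factorial k : ℝ) * (lam * (((k : ℝ) + 1) * N - Del)) ≤
        (Nat.factorial k : ℝ) * (D + (k : ℝ) * N) := by
      calc (Nat.factorial k : ℝ) * (lam * (((k : ℝ) + 1) * N - Del)) =
          lam * (((k : ℝ) + 1) * (Nat.factorial k : ℝ) * N -
            (Nat.factorial k : ℝ) * Del) := by ring
        _ ≤ (Nat.factorial k : ℝ) * ((k : ℝ) * N + D) := hlow
        _ = (Nat.factorial k : ℝ) * (D + (k : ℝ) * N) := by ring
    exact le_of_mul_le_mul_left h1 hfpos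
  · have h1 : (Nat.factorial k : ℝ) * (D + (k : ℝ) * N) ≤
        (Nat.factorial k : ℝ) * (kap * (((k : ℝ) + 1) * N - Del)) := by
      calc (Nat.factorial k : ℝ) * (D + (k : ℝ) * N) =
          (Nat.factorial k : ℝ) * ((k : ℝ) * N + D) := by ring
        _ ≤ kap * (((k : ℝ) + 1) * (Nat.factorial k : ℝ) * N -
            (Nat.factorial k : ℝ) * Del) := hup
        _ = (Nat.factorial k : ℝ) * (kap * (((k : ℝ) + 1) * N - Del)) := by ring
    exact le_of_mul_le_mul_left h1 hfpos

/-- The Rayleigh-quotient bound for the shifted operator. -/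
lemma rayleigh (hm : X.IsBalanced n m) (hmp : ∀ s ∈ X.faces, 0 < m s)
    (hconn : X.AllLinksConnected n) {k : ℕ} (hkn1 : k + 1 ≤ n) (hkn : k < n)
    {lam kap : ℝ} (hlam0 : 0 ≤ lam) (hlk : lam ≤ kap)
    (hspec : ∀ τ : Fin k → V, X.IsOSimp τ →
      (X.link (Finset.image τ Finset.univ)).specLapPlus
          (linkWt m (Finset.image τ Finset.univ)) 1 \ {0} ⊆ Set.Icc lam kap)
    {φ : (Fin (k + 1) → V) → ℝ} (hφa : Antisym (k + 1) φ)
    (hφs : ∀ σ, ¬X.IsOSimp σ → φ σ = 0) :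
    |X.innerF m (k + 2) (dOp φ) (dOp φ) +
      ((lam + kap) / 2) * X.innerF m k (X.deltaOp m φ) (X.deltaOp m φ) -
      (((k : ℝ) + 1) * ((lam + kap) / 2) - (k : ℝ)) * X.innerF m (k + 1) φ φ| ≤
    (((k : ℝ) + 1) * (kap - lam) / 2) * X.innerF m (k + 1) φ φ := by
  obtain ⟨hE0, hlow, hup⟩ := garland_core hm hmp hconn hkn1 hkn hlam0 hlk hspec hφa hφs
  set N := X.innerF m (k + 1) φ φ with hN
  set D := X.innerF m (k + 2) (dOp φ) (dOp φ) with hD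
  set Del := X.innerF m k (X.deltaOp m φ) (X.deltaOp m φ) with hDel
  have hDel0 : 0 ≤ Del := innerF_self_nonneg hmp _
  have hN0 : 0 ≤ N := innerF_self_nonneg hmp _
  rw [abs_le]
  constructor
  · nlinarith [hlow, hE0, hDel0, hN0]
  · nlinarith [hup, hE0, hDel0, hN0]

/-- `δ` only sees values on ordered simplices. -/
lemma deltaOp_congr {φ φ' : (Fin (j + 1) → V) → ℝ}
    (h : ∀ σ, X.IsOSimp σ → φ σ = φ' σ) : X.deltaOp m φ = X.deltaOp m φ' := by
  funext τ
  unfold SComplex.deltaOp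
  apply Finset.sum_congr rfl
  intro v _
  by_cases hv : X.IsOSimp (Fin.cons v τ)
  · rw [h _ hv]
  · rw [wt_eq_zero hv, zero_div, zero_mul, zero_mul]

lemma dOp_congr_osimp {φ φ' : (Fin j → V) → ℝ}
    (h : ∀ σ, X.IsOSimp σ → φ σ = φ' σ) :
    ∀ ρ, X.IsOSimp ρ → dOp φ ρ = dOp φ' ρ := by
  intro ρ hρ
  unfold dOp
  apply Finset.sum_congr rfl
  intro i _
  rw [h _ (X.isOSimp_comp_succAbove hρ i)]

lemma innerF_quad (p q : (Fin j → V) → ℝ) (t : ℝ) :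
    X.innerF m j (p + t • q) (p + t • q) = X.innerF m j p p +
      2 * t * X.innerF m j p q + t ^ 2 * X.innerF m j q q := by
  rw [innerF_add_left, innerF_add_right, innerF_add_right, innerF_smul_left,
    innerF_smul_right, innerF_smul_left, innerF_smul_right, innerF_comm q p]
  ring

lemma Antisym.comp_dOp' {φ : (Fin j → V) → ℝ} (hφ : Antisym j φ) :
    Antisym (j + 1) (dOp φ) := by
  cases j with
  | zero => exact antisym_fin_one _
  | succ j' => exact hφ.comp_dOp

end Aux

end SComplex

open SComplex
/-- Corollary 3.8: operator norm bound for
`Δ⁺_k + ((λ+κ)/2) Δ⁻_k - (k+1)((λ+κ)/2 - k/(k+1)) I`, given spectral gaps in the links of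
`(k-1)`-simplices. The operator norm bound is expressed by the inequality
`‖Tφ‖² ≤ c² ‖φ‖²` for every `k`-form `φ`. -/
theorem garland_operator_norm_bound
    (X : SComplex V) (n : ℕ) (m : Finset V → ℝ)
    (hn : 1 < n) (hpure : X.Pure n) (hm : X.IsBalanced n m)
    (hconn : X.AllLinksConnected n)
    (k : ℕ) (hk : k ≤ n - 1)
    (lam kap : ℝ) (hlam : (k : ℝ) / ((k : ℝ) + 1) < lam) (hlk : lam ≤ kap)
    (hspec : ∀ τ : Fin k → V, X.IsOSimp τ →
      (X.link (Finset.image τ Finset.univ)).specLapPlus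
          (linkWt m (Finset.image τ Finset.univ)) 1 \ {0} ⊆ Set.Icc lam kap) :
    ∀ φ : (Fin (k + 1) → V) → ℝ, X.IsForm (k + 1) φ →
      X.innerF m (k + 1)
        (X.lapPlus m (k + 1) φ + ((lam + kap) / 2) • X.lapMinus m k φ -
          (((k : ℝ) + 1) * ((lam + kap) / 2 - (k : ℝ) / ((k : ℝ) + 1))) • φ)
        (X.lapPlus m (k + 1) φ + ((lam + kap) / 2) • X.lapMinus m k φ -
          (((k : ℝ) + 1) * ((lam + kap) / 2 - (k : ℝ) / ((k : ℝ) + 1))) • φ) ≤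
      (((k : ℝ) + 1) * (kap - lam) / 2) ^ 2 * X.innerF m (k + 1) φ φ := by
  intro φ hφ
  classical
  have hφa : Antisym (k + 1) φ := hφ.1
  have hφs : ∀ σ, ¬X.IsOSimp σ → φ σ = 0 := hφ.2
  have hkn : k < n := by omega
  have hkn1 : k + 1 ≤ n := by omega
  have hmp : ∀ s ∈ X.faces, 0 < m s := hm.1
  have hlam0 : 0 ≤ lam := by
    have h1 : (0 : ℝ) ≤ (k : ℝ) / ((k : ℝ) + 1) := by positivity
    linarith
  have hk1 : ((k : ℝ) + 1) ≠ 0 := by positivity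
  have hcoef : (((k : ℝ) + 1) * ((lam + kap) / 2 - (k : ℝ) / ((k : ℝ) + 1))) =
      (((k : ℝ) + 1) * ((lam + kap) / 2) - (k : ℝ)) := by
    field_simp
  rw [hcoef]
  set μ : ℝ := (lam + kap) / 2 with hμ
  set a : ℝ := ((k : ℝ) + 1) * μ - (k : ℝ) with ha
  set c : ℝ := ((k : ℝ) + 1) * (kap - lam) / 2 with hc
  have hc0 : 0 ≤ c := by
    rw [hc]
    apply div_nonneg _ (by norm_num)
    apply mul_nonneg (by positivity)
    linarith
  set y : (Fin (k + 1) → V) → ℝ :=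
    X.lapPlus m (k + 1) φ + μ • X.lapMinus m k φ - a • φ with hy
  show X.innerF m (k + 1) y y ≤ c ^ 2 * X.innerF m (k + 1) φ φ
  -- antisymmetry of y
  have hlp : Antisym (k + 1) (X.lapPlus m (k + 1) φ) :=
    (hφa.comp_dOp).comp_deltaOp X m
  have hlm : Antisym (k + 1) (X.lapMinus m k φ) :=
    ((hφa.comp_deltaOp X m).comp_dOp' : Antisym (k + 1) (dOp (X.deltaOp m φ)))
  have hya : Antisym (k + 1) y := by
    rw [hy]
    exact (hlp.add (hlm.smul μ)).sub (hφa.smul a)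
  -- truncation of y
  set yt : (Fin (k + 1) → V) → ℝ := fun σ => if X.IsOSimp σ then y σ else 0 with hyt
  have hyeq : ∀ σ, X.IsOSimp σ → y σ = yt σ := by
    intro σ h
    rw [hyt]
    simp only [if_pos h]
  have hyta : Antisym (k + 1) yt := by
    intro σ π
    rw [hyt]
    simp only
    by_cases hσ : X.IsOSimp σ
    · rw [if_pos hσ, if_pos ((isOSimp_comp_perm X σ π).mpr hσ), hya σ π]
    · rw [if_neg hσ, if_neg (fun hc' => hσ ((isOSimp_comp_perm X σ π).mp hc')), mul_zero]
  have hyts : ∀ σ, ¬X.IsOSimp σ → yt σ = 0 := by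
    intro σ h
    rw [hyt]
    simp only [if_neg h]
  -- ⟨y, z⟩ expansion for antisymmetric z
  have hyz : ∀ z : (Fin (k + 1) → V) → ℝ, Antisym (k + 1) z →
      X.innerF m (k + 1) y z = X.innerF m (k + 2) (dOp φ) (dOp z) +
        μ * X.innerF m k (X.deltaOp m φ) (X.deltaOp m z) -
        a * X.innerF m (k + 1) φ z := by
    intro z hz
    rw [hy, innerF_sub_left, innerF_add_left, innerF_smul_left, innerF_smul_left]
    have h1 : X.innerF m (k + 1) (X.lapPlus m (k + 1) φ) z =
        X.innerF m (k + 2) (dOp φ) (dOp z) :=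
      adjoint_delta_d hmp (dOp φ) (hφa.comp_dOp) z
    have h2 : X.innerF m (k + 1) (X.lapMinus m k φ) z =
        X.innerF m k (X.deltaOp m φ) (X.deltaOp m z) := by
      calc X.innerF m (k + 1) (X.lapMinus m k φ) z
          = X.innerF m (k + 1) z (dOp (X.deltaOp m φ)) := innerF_comm _ _
        _ = X.innerF m k (X.deltaOp m z) (X.deltaOp m φ) :=
            (adjoint_delta_d hmp z hz (X.deltaOp m φ)).symm
        _ = X.innerF m k (X.deltaOp m φ) (X.deltaOp m z) := innerF_comm _ _
    rw [h1, h2]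
  -- the scalar quantities
  set Nf := X.innerF m (k + 1) φ φ with hNf
  set M := X.innerF m (k + 1) y y with hM
  set Dxx := X.innerF m (k + 2) (dOp φ) (dOp φ) with hDxx
  set Dxy := X.innerF m (k + 2) (dOp φ) (dOp yt) with hDxy
  set Dyy := X.innerF m (k + 2) (dOp yt) (dOp yt) with hDyy
  set Exx := X.innerF m k (X.deltaOp m φ) (X.deltaOp m φ) with hExx
  set Exy := X.innerF m k (X.deltaOp m φ) (X.deltaOp m yt) with hExy
  set Eyy := X.innerF m k (X.deltaOp m yt) (X.deltaOp m yt) with hEyy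
  set Nxy := X.innerF m (k + 1) φ yt with hNxy
  -- conversion to the truncation
  have hdyy : X.innerF m (k + 2) (dOp φ) (dOp y) = Dxy := by
    rw [hDxy]
    rw [innerF_comm _ (dOp y), innerF_comm _ (dOp yt)]
    exact innerF_congr_left _ (dOp_congr_osimp hyeq)
  have hdelty : X.deltaOp m y = X.deltaOp m yt := deltaOp_congr hyeq
  have hphiy : X.innerF m (k + 1) φ y = Nxy := by
    rw [hNxy, innerF_comm φ y, innerF_comm φ yt]
    exact innerF_congr_left _ hyeq
  have hMeq : M = Dxy + μ * Exy - a * Nxy := by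
    rw [hM, hyz y hya, hdyy, hdelty, hphiy]
  have hMt : X.innerF m (k + 1) yt yt = M := by
    rw [hM]
    calc X.innerF m (k + 1) yt yt = X.innerF m (k + 1) y yt :=
          (innerF_congr_left _ hyeq).symm
      _ = X.innerF m (k + 1) yt y := innerF_comm _ _
      _ = X.innerF m (k + 1) y y := (innerF_congr_left _ hyeq).symm
  -- quadratic expansions
  have hexpD : ∀ t : ℝ, X.innerF m (k + 2) (dOp (φ + t • yt)) (dOp (φ + t • yt)) =
      Dxx + 2 * t * Dxy + t ^ 2 * Dyy := by
    intro t
    rw [dOp_add, dOp_smul]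
    exact innerF_quad (dOp φ) (dOp yt) t
  have hexpE : ∀ t : ℝ, X.innerF m k (X.deltaOp m (φ + t • yt)) (X.deltaOp m (φ + t • yt)) =
      Exx + 2 * t * Exy + t ^ 2 * Eyy := by
    intro t
    rw [deltaOp_add, deltaOp_smul]
    exact innerF_quad (X.deltaOp m φ) (X.deltaOp m yt) t
  have hexpN : ∀ t : ℝ, X.innerF m (k + 1) (φ + t • yt) (φ + t • yt) =
      Nf + 2 * t * Nxy + t ^ 2 * M := by
    intro t
    rw [innerF_quad φ yt t, hMt]
  -- rayleigh applied to φ + t • yt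
  have hray : ∀ t : ℝ,
      |(Dxx + 2 * t * Dxy + t ^ 2 * Dyy) + μ * (Exx + 2 * t * Exy + t ^ 2 * Eyy) -
        a * (Nf + 2 * t * Nxy + t ^ 2 * M)| ≤
      c * (Nf + 2 * t * Nxy + t ^ 2 * M) := by
    intro t
    have hzta : Antisym (k + 1) (φ + t • yt) := hφa.add (hyta.smul t)
    have hzts : ∀ σ, ¬X.IsOSimp σ → (φ + t • yt) σ = 0 := by
      intro σ h
      simp only [Pi.add_apply, Pi.smul_apply, smul_eq_mul]
      rw [hφs σ h, hyts σ h]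
      ring
    have h := rayleigh hm hmp hconn hkn1 hkn hlam0 hlk hspec hzta hzts
    rw [hexpD t, hexpE t, hexpN t, ← hμ, ← ha, ← hc] at h
    exact h
  -- polarization
  have key : ∀ t : ℝ, 2 * t * M ≤ c * (Nf + t ^ 2 * M) := by
    intro t
    have h1 := (abs_le.mp (hray t)).2
    have h2 := (abs_le.mp (hray (-t))).1
    have e1 : (Dxx + 2 * (-t) * Dxy + (-t) ^ 2 * Dyy) +
        μ * (Exx + 2 * (-t) * Exy + (-t) ^ 2 * Eyy) -
        a * (Nf + 2 * (-t) * Nxy + (-t) ^ 2 * M) =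
        (Dxx + μ * Exx - a * Nf) - 2 * t * (Dxy + μ * Exy - a * Nxy) +
        t ^ 2 * (Dyy + μ * Eyy - a * M) := by ring
    have e2 : c * (Nf + 2 * (-t) * Nxy + (-t) ^ 2 * M) =
        c * Nf - 2 * t * (c * Nxy) + t ^ 2 * (c * M) := by ring
    have e3 : (Dxx + 2 * t * Dxy + t ^ 2 * Dyy) +
        μ * (Exx + 2 * t * Exy + t ^ 2 * Eyy) -
        a * (Nf + 2 * t * Nxy + t ^ 2 * M) =
        (Dxx + μ * Exx - a * Nf) + 2 * t * (Dxy + μ * Exy - a * Nxy) +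
        t ^ 2 * (Dyy + μ * Eyy - a * M) := by ring
    have e4 : c * (Nf + 2 * t * Nxy + t ^ 2 * M) =
        c * Nf + 2 * t * (c * Nxy) + t ^ 2 * (c * M) := by ring
    rw [e3, e4] at h1
    rw [e1, e2] at h2
    have hMsub : Dxy + μ * Exy - a * Nxy = M := hMeq.symm
    rw [hMsub] at h1 h2
    have goal_eq : c * (Nf + t ^ 2 * M) = c * Nf + t ^ 2 * (c * M) := by ring
    rw [goal_eq]
    linarith
  -- conclude
  by_cases hcz : c = 0
  · have h1 := key 1
    rw [hcz] at h1 ⊢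
    simp only [zero_mul, one_pow] at h1 ⊢
    have h2 : M ≤ 0 := by linarith
    calc M ≤ 0 := h2
      _ = 0 ^ 2 * Nf := by ring
  · have hcpos : 0 < c := lt_of_le_of_ne hc0 (Ne.symm hcz)
    have h1 := key (1 / c)
    have h2 := mul_le_mul_of_nonneg_left h1 hc0
    have e1 : c * (2 * (1 / c) * M) = 2 * M := by field_simp
    have e2 : c * (c * (Nf + (1 / c) ^ 2 * M)) = c ^ 2 * Nf + M := by
      field_simp
    rw [e1, e2] at h2
    linarith
end

section
/- Let X be a finite pure n-dimensional simplicial complex whose 1-skeleton is connected, and such that the 1-skeletons of all links of X of dimension > 0 are connected. Then X is gallery connected: for every two vertices u, v ∈ X^{(0)} there is a sequence of n-dimensional simplices σ_0, …, σ_l ∈ X^{(n)} such that u ∈ σ_0, v ∈ σ_l, and σ_i ∩ σ_{i+1} ∈ X^{(n−1)} for every 0 ≤ i ≤ l−1. -/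
open Finset

variable {V : Type} [Fintype V] [DecidableEq V]

open SComplex

/-- A gallery from `σ` to `σ'` of top simplices. -/
def Gal (X : SComplex V) (n : ℕ) (σ σ' : Finset V) : Prop :=
  ∃ (l : ℕ) (g : ℕ → Finset V), g 0 = σ ∧ g l = σ' ∧
    (∀ i ≤ l, g i ∈ X.faces ∧ (g i).card = n + 1) ∧
    ∀ i < l, g i ∩ g (i + 1) ∈ X.faces ∧ (g i ∩ g (i + 1)).card = n

lemma gal_refl {X : SComplex V} {n : ℕ} {σ : Finset V}
    (h1 : σ ∈ X.faces) (h2 : σ.card = n + 1) : Gal X n σ σ :=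
  ⟨0, fun _ => σ, rfl, rfl, fun _ _ => ⟨h1, h2⟩, fun i hi => absurd hi (Nat.not_lt_zero i)⟩

lemma gal_step {X : SComplex V} {n : ℕ} {σ σ' : Finset V}
    (h1 : σ ∈ X.faces) (h1c : σ.card = n + 1) (h2 : σ' ∈ X.faces) (h2c : σ'.card = n + 1)
    (hc : (σ ∩ σ').card = n) : Gal X n σ σ' := by
  refine ⟨1, fun i => if i = 0 then σ else σ', by simp, by simp, ?_, ?_⟩
  · intro i hi
    interval_cases i
    · simpa using ⟨h1, h1c⟩
    · simpa using ⟨h2, h2c⟩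
  · intro i hi
    have hi0 : i = 0 := by omega
    subst hi0
    simp only [if_pos rfl, if_neg one_ne_zero]
    exact ⟨X.down_closed σ h1 _ Finset.inter_subset_left, hc⟩

lemma gal_trans {X : SComplex V} {n : ℕ} {a b c : Finset V}
    (h1 : Gal X n a b) (h2 : Gal X n b c) : Gal X n a c := by
  obtain ⟨l1, g1, h10, h1l, h1top, h1int⟩ := h1
  obtain ⟨l2, g2, h20, h2l, h2top, h2int⟩ := h2
  refine ⟨l1 + l2, fun i => if i < l1 then g1 i else g2 (i - l1), ?_, ?_, ?_, ?_⟩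
  · by_cases h : 0 < l1
    · simp [h, h10]
    · have hl1 : l1 = 0 := by omega
      subst hl1
      simp only [if_neg h, Nat.sub_zero, h20, ← h1l, h10]
  · have : ¬ l1 + l2 < l1 := by omega
    simp only [this, if_false]
    rw [Nat.add_sub_cancel_left, h2l]
  · intro i hi
    by_cases h : i < l1
    · simp only [if_pos h]; exact h1top i (le_of_lt h)
    · simp only [if_neg h]; exact h2top (i - l1) (by omega)
  · intro i hi
    by_cases hi1 : i + 1 < l1
    · have h0 : i < l1 := by omega
      simp only [if_pos h0, if_pos hi1]
      exact h1int i h0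
    · by_cases hi0 : i < l1
      · have hl : i + 1 = l1 := by omega
        simp only [if_pos hi0, if_neg hi1]
        rw [show i + 1 - l1 = 0 from by omega, h20, ← h1l, ← hl]
        exact h1int i hi0
      · simp only [if_neg hi0, if_neg hi1]
        rw [show i + 1 - l1 = (i - l1) + 1 from by omega]
        exact h2int (i - l1) (by omega)

lemma link_mem {X : SComplex V} {w : V} {t : Finset V} (ht : t ∈ (X.link {w}).faces)
    (hne : t ≠ ∅) : t ∈ X.faces ∧ w ∉ t ∧ insert w t ∈ X.faces := by
  rcases Finset.mem_insert.mp ht with h | h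
  · exact absurd h hne
  · rw [Finset.mem_filter] at h
    refine ⟨h.1, Finset.disjoint_singleton_left.mp h.2.1, ?_⟩
    rw [Finset.insert_eq]; exact h.2.2

lemma link_mem' {X : SComplex V} {w : V} {t : Finset V} (h1 : t ∈ X.faces)
    (h2 : w ∉ t) (h3 : insert w t ∈ X.faces) : t ∈ (X.link {w}).faces := by
  refine Finset.mem_insert.mpr (Or.inr (Finset.mem_filter.mpr
    ⟨h1, Finset.disjoint_singleton_left.mpr h2, ?_⟩))
  rw [← Finset.insert_eq]; exact h3

/-- `insert w t` for `t` in the link of `w`, given `{w} ∈ X.faces`. -/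
lemma link_mem_insert {X : SComplex V} {w : V} {t : Finset V}
    (ht : t ∈ (X.link {w}).faces) (hw : ({w} : Finset V) ∈ X.faces) :
    insert w t ∈ X.faces ∧ w ∉ t := by
  by_cases hne : t = ∅
  · subst hne; simpa using hw
  · obtain ⟨_, h2, h3⟩ := link_mem ht hne
    exact ⟨h3, h2⟩

lemma link_pure {X : SComplex V} {n : ℕ} {w : V} (hpure : X.Pure (n + 1))
    (hw : ({w} : Finset V) ∈ X.faces) : (X.link {w}).Pure n := by
  constructor
  · intro t ht
    obtain ⟨h3, h2⟩ := link_mem_insert ht hw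
    have := hpure.1 _ h3
    rw [Finset.card_insert_of_notMem h2] at this
    omega
  · intro t ht
    obtain ⟨h3, h2⟩ := link_mem_insert ht hw
    obtain ⟨T, hT, hsub, hTc⟩ := hpure.2 _ h3
    have hwT : w ∈ T := hsub (Finset.mem_insert_self _ _)
    refine ⟨T.erase w, ?_, ?_, ?_⟩
    · refine link_mem' (X.down_closed T hT _ (Finset.erase_subset _ _))
        (Finset.notMem_erase _ _) ?_
      rw [Finset.insert_erase hwT]; exact hT
    · rw [Finset.subset_erase]
      exact ⟨(Finset.subset_insert _ _).trans hsub, h2⟩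
    · rw [Finset.card_erase_of_mem hwT, hTc]; omega

lemma skel_eq {X1 X2 : SComplex V} (h : X1.faces = X2.faces) :
    X1.skeleton = X2.skeleton := by
  ext u v
  show (u ≠ v ∧ ({u, v} : Finset V) ∈ X1.faces) ↔ (u ≠ v ∧ ({u, v} : Finset V) ∈ X2.faces)
  constructor
  · exact fun hadj => ⟨hadj.1, by rw [← h]; exact hadj.2⟩
  · exact fun hadj => ⟨hadj.1, by rw [h]; exact hadj.2⟩

lemma skelconn_of_eq {X1 X2 : SComplex V} (h : X1.faces = X2.faces)
    (hc : X1.SkelConnected) : X2.SkelConnected := by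
  intro u v hu hv
  rw [← skel_eq h]
  exact hc u v (h ▸ hu) (h ▸ hv)

lemma linkg_mem {X : SComplex V} {s t : Finset V} (ht : t ∈ (X.link s).faces)
    (hne : t ≠ ∅) : t ∈ X.faces ∧ Disjoint s t ∧ s ∪ t ∈ X.faces := by
  rcases Finset.mem_insert.mp ht with h | h
  · exact absurd h hne
  · rw [Finset.mem_filter] at h
    exact ⟨h.1, h.2.1, h.2.2⟩

lemma linkg_mem' {X : SComplex V} {s t : Finset V} (h1 : t ∈ X.faces)
    (h2 : Disjoint s t) (h3 : s ∪ t ∈ X.faces) : t ∈ (X.link s).faces :=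
  Finset.mem_insert.mpr (Or.inr (Finset.mem_filter.mpr ⟨h1, h2, h3⟩))

lemma link_link_faces (X : SComplex V) (w : V) (s : Finset V) (hws : w ∉ s) :
    ((X.link {w}).link s).faces = (X.link (insert w s)).faces := by
  ext t
  by_cases hne : t = ∅
  · subst hne
    exact iff_of_true (Finset.mem_insert_self _ _) (Finset.mem_insert_self _ _)
  constructor
  · intro ht
    obtain ⟨htY, hdst, hstY⟩ := linkg_mem ht hne
    obtain ⟨htX, hwt, hwtX⟩ := linkg_mem htY hne
    have hstne : s ∪ t ≠ ∅ := by
      intro h; exact hne (Finset.union_eq_empty.mp h).2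
    obtain ⟨hstX, hwst, hwstX⟩ := linkg_mem hstY hstne
    refine linkg_mem' htX ?_ ?_
    · rw [Finset.insert_eq, Finset.disjoint_union_left]
      exact ⟨hwt, hdst⟩
    · rw [show insert w s ∪ t = {w} ∪ (s ∪ t) from by
        rw [Finset.insert_eq, Finset.union_assoc]]
      exact hwstX
  · intro ht
    obtain ⟨htX, hd, hu⟩ := linkg_mem ht hne
    rw [Finset.insert_eq, Finset.disjoint_union_left, Finset.disjoint_singleton_left] at hd
    have huX : {w} ∪ (s ∪ t) ∈ X.faces := by
      rw [← Finset.union_assoc, ← Finset.insert_eq]; exact hu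
    have htY : t ∈ (X.link {w}).faces := by
      refine linkg_mem' htX (Finset.disjoint_singleton_left.mpr hd.1) ?_
      exact X.down_closed _ huX _
        (Finset.union_subset_union (Finset.Subset.refl _) Finset.subset_union_right)
    have hstY : s ∪ t ∈ (X.link {w}).faces := by
      refine linkg_mem' (X.down_closed _ huX _ Finset.subset_union_right) ?_ huX
      rw [Finset.disjoint_singleton_left, Finset.mem_union]
      push_neg
      exact ⟨hws, hd.1⟩
    exact linkg_mem' htY hd.2 hstY

lemma link_allconn {X : SComplex V} {n : ℕ} {w : V} (hn : 0 < n)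
    (hconn : X.AllLinksConnected (n + 1)) (hw : ({w} : Finset V) ∈ X.faces) :
    (X.link {w}).AllLinksConnected n := by
  constructor
  · exact hconn.2 {w} hw (by rw [Finset.card_singleton]; omega)
  · intro s hs hsn
    obtain ⟨hws, hwns⟩ := link_mem_insert hs hw
    have hcard : (insert w s).card < n + 1 := by
      rw [Finset.card_insert_of_notMem hwns]; omega
    exact skelconn_of_eq (link_link_faces X w s hwns).symm
      (hconn.2 (insert w s) hws hcard)

lemma gal_lift {X : SComplex V} {n : ℕ} {w : V} {τ τ' : Finset V}
    (hw : ({w} : Finset V) ∈ X.faces)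
    (h : Gal (X.link {w}) n τ τ') :
    Gal X (n + 1) (insert w τ) (insert w τ') := by
  obtain ⟨l, g, h0, hl, htop, hint⟩ := h
  have key : ∀ i ≤ l, insert w (g i) ∈ X.faces ∧ w ∉ g i := fun i hi =>
    link_mem_insert (htop i hi).1 hw
  refine ⟨l, fun i => insert w (g i), by simp only [h0], by simp only [hl], ?_, ?_⟩
  · intro i hi
    refine ⟨(key i hi).1, ?_⟩
    rw [Finset.card_insert_of_notMem (key i hi).2, (htop i hi).2]
  · intro i hi
    have heq : insert w (g i) ∩ insert w (g (i + 1)) = insert w (g i ∩ g (i + 1)) := by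
      ext x
      simp only [Finset.mem_inter, Finset.mem_insert]
      tauto
    rw [heq]
    constructor
    · exact X.down_closed _ (key i (le_of_lt hi)).1 _
        (Finset.insert_subset_insert _ Finset.inter_subset_left)
    · rw [Finset.card_insert_of_notMem
        (fun hmem => (key i (le_of_lt hi)).2 (Finset.mem_inter.mp hmem).1),
        (hint i hi).2]

/-- Main induction: any two top simplices are connected by a gallery. -/
lemma gal_main : ∀ (n : ℕ) (X : SComplex V), X.Pure n → X.AllLinksConnected n →
    ∀ σ σ' : Finset V, σ ∈ X.faces → σ.card = n + 1 → σ' ∈ X.faces → σ'.card = n + 1 →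
    Gal X n σ σ' := by
  intro n
  induction n with
  | zero =>
    intro X hpure hconn σ σ' hσ hσc hσ'f hσ'c
    obtain ⟨u, rfl⟩ := Finset.card_eq_one.mp hσc
    obtain ⟨v, rfl⟩ := Finset.card_eq_one.mp hσ'c
    have noadj : ∀ a b : V, ¬ X.skeleton.Adj a b := by
      rintro a b (hadj : a ≠ b ∧ ({a, b} : Finset V) ∈ X.faces)
      have h2 := hpure.1 _ hadj.2
      rw [Finset.card_pair hadj.1] at h2
      omega
    have huv : u = v := by
      obtain ⟨p⟩ := hconn.1 u v hσ hσ'f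
      cases p with
      | nil => rfl
      | cons h _ => exact absurd h (noadj _ _)
    subst huv
    exact gal_refl hσ hσc
  | succ n ih =>
    intro X hpure hconn σ σ' hσ hσc hσ'f hσ'c
    -- Step B: top simplices sharing a vertex are gallery connected
    have B : ∀ τ τ' : Finset V, τ ∈ X.faces → τ.card = n + 2 → τ' ∈ X.faces →
        τ'.card = n + 2 → ∀ w, w ∈ τ → w ∈ τ' → Gal X (n + 1) τ τ' := by
      intro τ τ' hτ hτc hτ' hτ'c w hwτ hwτ'
      have hw : ({w} : Finset V) ∈ X.faces :=
        X.down_closed τ hτ _ (Finset.singleton_subset_iff.mpr hwτ)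
      rcases Nat.eq_zero_or_pos n with hn | hn
      · -- dimension 1 : direct
        subst hn
        by_cases heq : τ = τ'
        · subst heq; exact gal_refl hτ hτc
        · have h1 : 1 ≤ (τ ∩ τ').card :=
            Finset.card_pos.mpr ⟨w, Finset.mem_inter.mpr ⟨hwτ, hwτ'⟩⟩
          have h2 : (τ ∩ τ').card ≠ 2 := by
            intro h2
            have he : τ ∩ τ' = τ := Finset.eq_of_subset_of_card_le
              Finset.inter_subset_left (by omega)
            have hsub : τ ⊆ τ' := by rw [← he]; exact Finset.inter_subset_right
            exact heq (Finset.eq_of_subset_of_card_le hsub (by omega))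
          have h3 : (τ ∩ τ').card ≤ 2 := by
            have : (τ ∩ τ').card ≤ τ.card :=
              Finset.card_le_card Finset.inter_subset_left
            omega
          exact gal_step hτ hτc hτ' hτ'c (by omega)
      · -- use the link of w
        have hYpure := link_pure hpure hw
        have hYconn := link_allconn hn hconn hw
        have hmem : ∀ ρ : Finset V, ρ ∈ X.faces → ρ.card = n + 2 → w ∈ ρ →
            ρ.erase w ∈ (X.link {w}).faces ∧ (ρ.erase w).card = n + 1 := by
          intro ρ hρ hρc hwρ
          constructor
          · refine link_mem' (X.down_closed ρ hρ _ (Finset.erase_subset _ _))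
              (Finset.notMem_erase _ _) ?_
            rw [Finset.insert_erase hwρ]; exact hρ
          · rw [Finset.card_erase_of_mem hwρ, hρc]; omega
        obtain ⟨hm1, hm2⟩ := hmem τ hτ hτc hwτ
        obtain ⟨hm1', hm2'⟩ := hmem τ' hτ' hτ'c hwτ'
        have hg := ih (X.link {w}) hYpure hYconn _ _ hm1 hm2 hm1' hm2'
        have := gal_lift hw hg
        rwa [Finset.insert_erase hwτ, Finset.insert_erase hwτ'] at this
    -- Step C: walk induction
    have C : ∀ (u v : V) (_ : X.skeleton.Walk u v) (τ τ' : Finset V), τ ∈ X.faces →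
        τ.card = n + 2 → τ' ∈ X.faces → τ'.card = n + 2 → u ∈ τ → v ∈ τ' →
        Gal X (n + 1) τ τ' := by
      intro u v p
      induction p with
      | nil =>
        intro τ τ' hτ hτc hτ' hτ'c hu hv
        exact B τ τ' hτ hτc hτ' hτ'c _ hu hv
      | @cons a b c hab p ih2 =>
        intro τ τ' hτ hτc hτ' hτ'c hu hv
        obtain ⟨ρ, hρ, hsub, hρc⟩ := hpure.2 _ (show a ≠ b ∧ ({a, b} : Finset V) ∈ X.faces from hab).2
        have haρ : a ∈ ρ := hsub (by simp)
        have hbρ : b ∈ ρ := hsub (by simp)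
        exact gal_trans (B τ ρ hτ hτc hρ hρc a hu haρ)
          (ih2 ρ τ' hρ hρc hτ' hτ'c hbρ hv)
    obtain ⟨u, hu⟩ := Finset.card_pos.mp (by omega : 0 < σ.card)
    obtain ⟨v, hv⟩ := Finset.card_pos.mp (by omega : 0 < σ'.card)
    have hus : ({u} : Finset V) ∈ X.faces :=
      X.down_closed σ hσ _ (Finset.singleton_subset_iff.mpr hu)
    have hvs : ({v} : Finset V) ∈ X.faces :=
      X.down_closed σ' hσ'f _ (Finset.singleton_subset_iff.mpr hv)
    obtain ⟨p⟩ := hconn.1 u v hus hvs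
    exact C u v p σ σ' hσ hσc hσ'f hσ'c hu hv

/-- Proposition 3.11: a pure `n`-dimensional complex with connected
1-skeleton and connected links (in dimension `> 0`) is gallery connected. -/
theorem gallery_connected
    (X : SComplex V) (n : ℕ) (hpure : X.Pure n)
    (hconn : X.AllLinksConnected n) :
    ∀ u v : V, ({u} : Finset V) ∈ X.faces → ({v} : Finset V) ∈ X.faces →
      ∃ (l : ℕ) (g : ℕ → Finset V),
        (∀ i ≤ l, g i ∈ X.faces ∧ (g i).card = n + 1) ∧
        u ∈ g 0 ∧ v ∈ g l ∧
        ∀ i < l, g i ∩ g (i + 1) ∈ X.faces ∧ (g i ∩ g (i + 1)).card = n := by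
  intro u v hu hv
  obtain ⟨σ, hσ, hsubu, hσc⟩ := hpure.2 _ hu
  obtain ⟨σ', hσ', hsubv, hσ'c⟩ := hpure.2 _ hv
  obtain ⟨l, g, h0, hl, htop, hint⟩ :=
    gal_main n X hpure hconn σ σ' hσ hσc hσ' hσ'c
  exact ⟨l, g, htop, h0 ▸ hsubu (Finset.mem_singleton_self u),
    hl ▸ hsubv (Finset.mem_singleton_self v), hint⟩
end
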